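/- arXiv:2601.19455 — 5 statements merged into one kernel-verified Lean document; each statement's English description precedes it below -/
import Mathlib

section
/- Let g be a Lie algebra over a field of characteristic zero and h ⊆ g a Lie subalgebra. Let U g be the universal enveloping algebra of g with canonical embedding ι : g → U g. Then for every w ∈ g, ι(w) lies in the left ideal (U g)·ι(h) generated by ι(h) if and only if w ∈ h; equivalently, ι(g) ∩ (U g)·ι(h) = ι(h). -/
noncomputable section
namespace PBWAux

variable {k : Type*} [CommRing k] {g : Type*} [LieRing g] [LieAlgebra k g]
variable {I : Type*} [LinearOrder I]

/-- Find the first adjacent descent in a list. -/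
def firstDesc : List I → Option (List I × I × I × List I)
  | [] => none
  | [_] => none
  | x :: y :: t =>
    if y < x then some ([], x, y, t)
    else (firstDesc (y :: t)).map fun p => (x :: p.1, p.2)

theorem firstDesc_spec : ∀ (l : List I) a u v t,
    firstDesc l = some (a, u, v, t) → l = a ++ u :: v :: t ∧ v < u
  | [], _, _, _, _, h => by simp [firstDesc] at h
  | [_], _, _, _, _, h => by simp [firstDesc] at h
  | x :: y :: s, a, u, v, t, h => by
    rw [firstDesc] at h
    split_ifs at h with hlt
    · obtain ⟨rfl, rfl, rfl, rfl⟩ := by simpa using h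
      exact ⟨rfl, hlt⟩
    · simp only [Option.map_eq_some_iff] at h
      obtain ⟨⟨a', u', v', t'⟩, hfd, hh⟩ := h
      obtain ⟨h1, h2⟩ := firstDesc_spec (y :: s) a' u' v' t' hfd
      obtain ⟨rfl, rfl, rfl, rfl⟩ := by simpa using hh.symm
      exact ⟨by simp [h1], h2⟩

theorem firstDesc_cons_of_some {x y : I} {s : List I} (hxy : ¬ y < x) {a u v t}
    (h : firstDesc (y :: s) = some (a, u, v, t)) :
    firstDesc (x :: y :: s) = some (x :: a, u, v, t) := by
  rw [firstDesc, if_neg hxy, h]; rfl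

theorem firstDesc_front {u v : I} (t : List I) (h : v < u) :
    firstDesc (u :: v :: t) = some ([], u, v, t) := by
  rw [firstDesc, if_pos h]

/-- Number of inversions. -/
def inv : List I → ℕ
  | [] => 0
  | x :: t => t.countP (fun y => decide (y < x)) + inv t

theorem inv_le (l : List I) : inv l ≤ l.length * l.length := by
  induction l with
  | nil => simp [inv]
  | cons x t ih =>
    have h1 : t.countP (fun y => decide (y < x)) ≤ t.length := List.countP_le_length
    simp only [inv, List.length_cons]
    nlinarith

theorem inv_swap {u v : I} (h : v < u) : ∀ (a t : List I),
    inv (a ++ v :: u :: t) + 1 = inv (a ++ u :: v :: t)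
  | [], t => by
    simp only [List.nil_append, inv, List.countP_cons]
    have h1 : ¬ (u < v) := lt_asymm h
    simp [h, h1]
    ring
  | x :: a, t => by
    simp only [List.cons_append, inv, List.append_eq]
    have hperm : (a ++ v :: u :: t).Perm (a ++ u :: v :: t) :=
      List.Perm.append_left a (List.Perm.swap _ _ _)
    rw [hperm.countP_eq]
    have := inv_swap h a t
    omega

/-- measure: length³ + inversions. -/
def meas (l : List I) : ℕ := l.length ^ 3 + inv l

theorem meas_lt_of_length_lt {l l' : List I} (h : l'.length < l.length) : meas l' < meas l := by
  have h1 := inv_le l'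
  have h2 : l'.length + 1 ≤ l.length := h
  have : l'.length ^ 3 + l'.length * l'.length < (l'.length + 1) ^ 3 := by nlinarith
  have h3 : (l'.length + 1) ^ 3 ≤ l.length ^ 3 := Nat.pow_le_pow_left h2 3
  unfold meas
  have := inv_le l
  omega

theorem meas_swap {u v : I} (h : v < u) (a t : List I) :
    meas (a ++ v :: u :: t) < meas (a ++ u :: v :: t) := by
  unfold meas
  have := inv_swap h a t
  simp only [List.length_append, List.length_cons]
  omega

theorem meas_bracket {u v : I} (a t : List I) (m : I) :
    meas (a ++ m :: t) < meas (a ++ u :: v :: t) :=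
  meas_lt_of_length_lt (by simp)

variable (b : Module.Basis I k g)

/-- Normal form map on the free module over all words. -/
def N : List I → (List I →₀ k)
  | l =>
    match h : firstDesc l with
    | none => Finsupp.single l 1
    | some (a, u, v, t) =>
      N (a ++ v :: u :: t) + (b.repr ⁅b u, b v⁆).sum fun m c => c • N (a ++ m :: t)
  termination_by l => meas l
  decreasing_by
  · obtain ⟨rfl, hvu⟩ := firstDesc_spec l a u v t h
    exact meas_swap hvu a t
  · obtain ⟨rfl, hvu⟩ := firstDesc_spec l a u v t h
    exact meas_bracket a t m

theorem N_of_none {l : List I} (h : firstDesc l = none) : N b l = Finsupp.single l 1 := by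
  rw [N, h]

theorem N_of_some {l : List I} {a u v t} (h : firstDesc l = some (a, u, v, t)) :
    N b l = N b (a ++ v :: u :: t) + (b.repr ⁅b u, b v⁆).sum fun m c => c • N b (a ++ m :: t) := by
  rw [N, h]

/-- The linear map `x ↦ ⁅x, y⁆`. -/
def lieRight (y : g) : g →ₗ[k] g where
  toFun x := ⁅x, y⁆
  map_add' a c := add_lie a c y
  map_smul' c a := smul_lie c a y

@[simp] theorem lieRight_apply (y x : g) : lieRight (k := k) y x = ⁅x, y⁆ := rfl

/-- `Ng b a t w = Σ_m (repr w)_m • N (a ++ m :: t)`. -/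
def Ng (a t : List I) : g →ₗ[k] (List I →₀ k) :=
  (Finsupp.linearCombination k fun m => N b (a ++ m :: t)).comp (b.repr : g →ₗ[k] (I →₀ k))

theorem Ng_apply (a t : List I) (w : g) :
    Ng b a t w = (b.repr w).sum fun m c => c • N b (a ++ m :: t) := by
  simp [Ng, Finsupp.linearCombination_apply]

/-- `Bi b x` sends a formal combination of words `K` to the combination of `N (x :: K)`. -/
def Bi (x : I) : (List I →₀ k) →ₗ[k] (List I →₀ k) :=
  Finsupp.linearCombination k fun K => N b (x :: K)

theorem Bi_single (x : I) (l : List I) : Bi b x (Finsupp.single l 1) = N b (x :: l) := by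
  simp [Bi]

theorem sum_repr_smul {M : Type*} [AddCommMonoid M] [Module k M] (F : g →ₗ[k] M) (w : g) :
    ((b.repr w).sum fun m c => c • F (b m)) = F w := by
  conv_rhs => rw [← b.linearCombination_repr w, Finsupp.linearCombination_apply]
  rw [map_finsuppSum]
  simp

theorem N_step {l : List I} {a u v t} (h : firstDesc l = some (a, u, v, t)) :
    N b l = N b (a ++ v :: u :: t) + Ng b a t ⁅b u, b v⁆ := by
  rw [N_of_some b h, Ng_apply]

theorem eqB (u v : I) (t : List I) :
    N b (u :: v :: t) = N b (v :: u :: t) + Ng b [] t ⁅b u, b v⁆ := by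
  rcases lt_trichotomy v u with h | h | h
  · simpa using N_step b (firstDesc_front t h)
  · subst h; simp
  · have h2 := N_step b (firstDesc_front t h)
    simp only [List.nil_append] at h2 ⊢
    rw [h2, ← lie_skew, map_neg]
    abel

theorem eqB' (u v : I) (t : List I) :
    N b (u :: v :: t) - N b (v :: u :: t) = Ng b [] t ⁅b u, b v⁆ := by
  rw [eqB b u v t]; abel

theorem NgComm (w : g) (y : I) (t : List I) :
    Ng b [] (y :: t) w - Ng b [y] t w = Ng b [] t ⁅w, b y⁆ := by
  have key : ((b.repr w).sum fun m c => c • ((Ng b [] t).comp (lieRight (b y)) (b m)))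
      = Ng b [] t ⁅w, b y⁆ := by
    rw [sum_repr_smul]; rfl
  rw [Ng_apply, Ng_apply, ← Finsupp.sum_sub, ← key]
  refine Finsupp.sum_congr fun m _ => ?_
  rw [← smul_sub]
  congr 1
  simpa using eqB' b m y t

def AStmt (L : List I) : Prop := ∀ x l, L = x :: l → N b L = Bi b x (N b l)

def MainStmt (L : List I) : Prop := ∀ a u v t, L = a ++ u :: v :: t → v < u →
    N b L = N b (a ++ v :: u :: t) + Ng b a t ⁅b u, b v⁆

theorem jacobi_case {x u v : I} (t : List I) (hvu : v < u) (hux : u < x) :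
    N b (x :: u :: v :: t) = N b (x :: v :: u :: t) + Ng b [x] t ⁅b u, b v⁆ := by
  have hvx : v < x := hvu.trans hux
  have e1 : N b (x :: u :: v :: t) = N b (u :: x :: v :: t) + Ng b [] (v :: t) ⁅b x, b u⁆ := by
    simpa using N_step b (firstDesc_front (v :: t) hux)
  have e2 : N b (u :: x :: v :: t) = N b (u :: v :: x :: t) + Ng b [u] t ⁅b x, b v⁆ := by
    simpa using N_step b (firstDesc_cons_of_some (lt_asymm hux) (firstDesc_front t hvx))
  have e3 : N b (x :: v :: u :: t) = N b (v :: x :: u :: t) + Ng b [] (u :: t) ⁅b x, b v⁆ := by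
    simpa using N_step b (firstDesc_front (u :: t) hvx)
  have e4 : N b (v :: x :: u :: t) = N b (v :: u :: x :: t) + Ng b [v] t ⁅b x, b u⁆ := by
    simpa using N_step b (firstDesc_cons_of_some (lt_asymm hvx) (firstDesc_front t hux))
  have e5 : N b (u :: v :: x :: t) = N b (v :: u :: x :: t) + Ng b [] (x :: t) ⁅b u, b v⁆ := by
    simpa using N_step b (firstDesc_front (x :: t) hvu)
  have c1 : Ng b [] (x :: t) ⁅b u, b v⁆
      = Ng b [x] t ⁅b u, b v⁆ + Ng b [] t ⁅⁅b u, b v⁆, b x⁆ := by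
    have := NgComm b ⁅b u, b v⁆ x t
    rw [sub_eq_iff_eq_add] at this
    rw [this]; abel
  have c2 : Ng b [u] t ⁅b x, b v⁆
      = Ng b [] (u :: t) ⁅b x, b v⁆ - Ng b [] t ⁅⁅b x, b v⁆, b u⁆ := by
    have := NgComm b ⁅b x, b v⁆ u t
    rw [sub_eq_iff_eq_add] at this
    rw [this]; abel
  have c3 : Ng b [] (v :: t) ⁅b x, b u⁆
      = Ng b [v] t ⁅b x, b u⁆ + Ng b [] t ⁅⁅b x, b u⁆, b v⁆ := by
    have := NgComm b ⁅b x, b u⁆ v t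
    rw [sub_eq_iff_eq_add] at this
    rw [this]; abel
  have hj : ⁅⁅b u, b v⁆, b x⁆ - ⁅⁅b x, b v⁆, b u⁆ + ⁅⁅b x, b u⁆, b v⁆ = (0 : g) := by
    have hja := lie_jacobi (b u) (b v) (b x)
    have k1 : ⁅⁅b u, b v⁆, b x⁆ = -⁅b x, ⁅b u, b v⁆⁆ := by rw [← lie_skew]
    have k2 : ⁅⁅b x, b v⁆, b u⁆ = ⁅b u, ⁅b v, b x⁆⁆ := by
      have h' : ⁅⁅b x, b v⁆, b u⁆ = -⁅b u, ⁅b x, b v⁆⁆ := by rw [← lie_skew]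
      rw [h', ← lie_skew (b x) (b v), lie_neg, neg_neg]
    have k3 : ⁅⁅b x, b u⁆, b v⁆ = -⁅b v, ⁅b x, b u⁆⁆ := by rw [← lie_skew]
    rw [k1, k2, k3, show -⁅b x, ⁅b u, b v⁆⁆ - ⁅b u, ⁅b v, b x⁆⁆ + -⁅b v, ⁅b x, b u⁆⁆
        = -(⁅b u, ⁅b v, b x⁆⁆ + ⁅b v, ⁅b x, b u⁆⁆ + ⁅b x, ⁅b u, b v⁆⁆) from by abel, hja, neg_zero]
  have hz : Ng b [] t ⁅⁅b u, b v⁆, b x⁆ - Ng b [] t ⁅⁅b x, b v⁆, b u⁆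
      + Ng b [] t ⁅⁅b x, b u⁆, b v⁆ = 0 := by
    rw [← map_sub, ← map_add, hj, map_zero]
  refine eq_of_sub_eq_zero ?_
  rw [e1, e2, e5, e3, e4, c1, c2, c3, ← hz]
  abel

theorem double_swap (f h : I →₀ k) (H : I → I → (List I →₀ k)) :
    (f.sum fun m dm => dm • h.sum fun p cp => cp • H m p)
      = h.sum fun p cp => cp • f.sum fun m dm => dm • H m p := by
  simp only [Finsupp.smul_sum, smul_smul]
  rw [Finsupp.sum_comm]
  simp only [mul_comm]

theorem disjoint_case {x y : I} (A' : List I) {u v : I} (t : List I) (hvu : v < u) (hyx : y < x)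
    (IHmain : ∀ L', meas L' < meas (x :: y :: A' ++ u :: v :: t) → MainStmt b L') :
    N b (x :: y :: A' ++ u :: v :: t) =
      N b (x :: y :: A' ++ v :: u :: t) + Ng b (x :: y :: A') t ⁅b u, b v⁆ := by
  set P := A' ++ u :: v :: t with hP
  set P' := A' ++ v :: u :: t with hP'
  have d1 : N b (x :: y :: P) = N b (y :: x :: P) + Ng b [] P ⁅b x, b y⁆ := by
    simpa using N_step b (firstDesc_front P hyx)
  have d2 : N b (y :: x :: P) = N b (y :: x :: P') + Ng b (y :: x :: A') t ⁅b u, b v⁆ := by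
    have hm : meas (y :: x :: P) < meas (x :: y :: P) := by
      simpa using meas_swap hyx [] P
    exact IHmain _ hm (y :: x :: A') u v t (by simp [hP]) hvu
  have d4 : N b (x :: y :: P') = N b (y :: x :: P') + Ng b [] P' ⁅b x, b y⁆ := by
    simpa using N_step b (firstDesc_front P' hyx)
  have d3 : Ng b [] P ⁅b x, b y⁆ = Ng b [] P' ⁅b x, b y⁆
      + (b.repr ⁅b x, b y⁆).sum fun m dm => dm • Ng b (m :: A') t ⁅b u, b v⁆ := by
    rw [Ng_apply, Ng_apply, ← Finsupp.sum_add]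
    refine Finsupp.sum_congr fun m _ => ?_
    rw [← smul_add]
    congr 1
    have hm : meas (m :: P) < meas (x :: y :: P) := meas_lt_of_length_lt (by simp)
    simpa [hP, hP'] using IHmain (m :: P) hm (m :: A') u v t (by simp [hP]) hvu
  have d5 : Ng b (x :: y :: A') t ⁅b u, b v⁆ = Ng b (y :: x :: A') t ⁅b u, b v⁆
      + (b.repr ⁅b u, b v⁆).sum fun p cp => cp • Ng b [] (A' ++ p :: t) ⁅b x, b y⁆ := by
    rw [Ng_apply, Ng_apply, ← Finsupp.sum_add]
    refine Finsupp.sum_congr fun p _ => ?_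
    rw [← smul_add]
    congr 1
    simpa using N_step b (firstDesc_front (A' ++ p :: t) hyx)
  have dsum : ((b.repr ⁅b x, b y⁆).sum fun m dm => dm • Ng b (m :: A') t ⁅b u, b v⁆)
      = (b.repr ⁅b u, b v⁆).sum fun p cp => cp • Ng b [] (A' ++ p :: t) ⁅b x, b y⁆ := by
    simp only [Ng_apply, List.cons_append, List.nil_append]
    exact double_swap _ _ (fun m p => N b (m :: (A' ++ p :: t)))
  refine eq_of_sub_eq_zero ?_
  show N b (x :: y :: P) - (N b (x :: y :: P') + Ng b (x :: y :: A') t ⁅b u, b v⁆) = 0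
  rw [d1, d2, d3, d4, d5, dsum]
  abel

theorem joint : ∀ n : ℕ, ∀ L : List I, meas L ≤ n → AStmt b L ∧ MainStmt b L := by
  intro n
  induction n using Nat.strong_induction_on with
  | _ n IH =>
    intro L hL
    have IHA : ∀ L', meas L' < meas L → AStmt b L' := fun L' h =>
      (IH (meas L') (lt_of_lt_of_le h hL) L' le_rfl).1
    have IHM : ∀ L', meas L' < meas L → MainStmt b L' := fun L' h =>
      (IH (meas L') (lt_of_lt_of_le h hL) L' le_rfl).2
    have hA : AStmt b L := by
      rintro x l rfl
      cases hfd : firstDesc l with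
      | none => rw [N_of_none b hfd, Bi_single]
      | some q =>
        obtain ⟨A, u, v, t⟩ := q
        obtain ⟨rfl, hvu⟩ := firstDesc_spec l A u v t hfd
        -- RHS computation
        have hrhs : Bi b x (N b (A ++ u :: v :: t)) =
            N b (x :: (A ++ v :: u :: t)) + Ng b (x :: A) t ⁅b u, b v⁆ := by
          rw [N_step b hfd, map_add, Ng_apply, map_finsuppSum, Ng_apply]
          congr 1
          · exact (IHA _ (by simpa using meas_swap hvu (x :: A) t) x _ rfl).symm
          · refine Finsupp.sum_congr fun m _ => ?_
            rw [map_smul]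
            congr 1
            exact (IHA _ (by simpa using meas_bracket (u := u) (v := v) (x :: A) t m) x _ rfl).symm
        rw [hrhs]
        -- LHS case analysis
        cases A with
        | nil =>
          simp only [List.nil_append] at hfd ⊢
          -- l = u :: v :: t
          rcases le_or_gt x u with hxu | hux
          · rcases eq_or_lt_of_le hxu with rfl | hxu'
            · -- x = u: x not less than u, use cons_of_some
              exact N_step b (firstDesc_cons_of_some (lt_irrefl x) hfd)
            · exact N_step b (firstDesc_cons_of_some (lt_asymm hxu') hfd)
          · exact jacobi_case b t hvu hux
        | cons y A' =>
          simp only [List.cons_append] at hfd ⊢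
          rcases le_or_gt x y with hxy | hyx
          · exact N_step b (firstDesc_cons_of_some (not_lt_of_ge hxy) hfd)
          · exact disjoint_case b A' t hvu hyx (fun L' h => IHM L' (by simpa using h))
    refine ⟨hA, ?_⟩
    rintro a u v t rfl hvu
    cases a with
    | nil => simpa using N_step b (firstDesc_front t hvu)
    | cons p a' =>
      simp only [List.cons_append]
      have h1 : N b (p :: (a' ++ u :: v :: t)) = Bi b p (N b (a' ++ u :: v :: t)) :=
        hA p _ (by simp)
      have h2 : N b (a' ++ u :: v :: t) =
          N b (a' ++ v :: u :: t) + Ng b a' t ⁅b u, b v⁆ :=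
        IHM _ (meas_lt_of_length_lt (by simp)) a' u v t rfl hvu
      rw [h1, h2, map_add, Ng_apply, map_finsuppSum, Ng_apply]
      congr 1
      · exact (IHA _ (by simpa using meas_swap hvu (p :: a') t) p _ rfl).symm
      · refine Finsupp.sum_congr fun m _ => ?_
        rw [map_smul]
        congr 1
        exact (IHA _ (by simpa using meas_bracket (u := u) (v := v) (p :: a') t m) p _ rfl).symm

theorem A_all (x : I) (l : List I) : N b (x :: l) = Bi b x (N b l) :=
  (joint b (meas (x :: l)) (x :: l) le_rfl).1 x l rfl

/-- The underlying linear map of the representation. -/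
def ρlin : g →ₗ[k] Module.End k (List I →₀ k) :=
  (Finsupp.linearCombination k fun i => Bi b i).comp (b.repr : g →ₗ[k] (I →₀ k))

theorem ρlin_apply (x : g) (w : List I →₀ k) :
    ρlin b x w = (b.repr x).sum fun i c => c • Bi b i w := by
  simp only [ρlin, LinearMap.coe_comp, Function.comp_apply, LinearEquiv.coe_coe,
    Finsupp.linearCombination_apply, Finsupp.sum, LinearMap.sum_apply, Finset.sum_apply,
    LinearMap.smul_apply]

theorem ρlin_basis (i : I) : ρlin b (b i) = Bi b i := by
  simp [ρlin]

theorem ρlin_single (x : g) (K : List I) :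
    ρlin b x (Finsupp.single K 1) = Ng b [] K x := by
  rw [ρlin_apply, Ng_apply]
  refine Finsupp.sum_congr fun m _ => ?_
  rw [Bi_single]
  rfl

attribute [local instance] LieRing.ofAssociativeRing

/-- The representation of `g` on the free module over words. -/
def ρLie : g →ₗ⁅k⁆ Module.End k (List I →₀ k) :=
  { ρlin b with
    map_lie' := by
      intro x y
      have hL : ∀ f c : Module.End k (List I →₀ k), ⁅f, c⁆ = f * c - c * f := fun f c => rfl
      have hbil : ∀ i j : I, ρlin b ⁅b i, b j⁆ = ⁅ρlin b (b i), ρlin b (b j)⁆ := by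
        intro i j
        rw [ρlin_basis, ρlin_basis, hL]
        refine Finsupp.lhom_ext' fun K => LinearMap.ext_ring ?_
        simp only [LinearMap.comp_apply, LinearMap.sub_apply, Module.End.mul_apply,
          Finsupp.lsingle_apply]
        rw [ρlin_single, Bi_single, Bi_single, ← A_all b i (j :: K), ← A_all b j (i :: K),
          eqB b i j K]
        abel
      let B1 : g →ₗ[k] g →ₗ[k] Module.End k (List I →₀ k) :=
        LinearMap.mk₂ k (fun x y => ρlin b ⁅x, y⁆)
          (fun a c y => by simp only [add_lie, map_add])
          (fun r a y => by simp only [smul_lie, map_smul])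
          (fun a y z => by simp only [lie_add, map_add])
          (fun r a y => by simp only [lie_smul, map_smul])
      let B2 : g →ₗ[k] g →ₗ[k] Module.End k (List I →₀ k) :=
        LinearMap.mk₂ k (fun x y => ⁅ρlin b x, ρlin b y⁆)
          (fun a c y => by
            simp only [map_add, hL, add_mul, mul_add]; abel)
          (fun r a y => by
            simp only [map_smul, hL, smul_mul_assoc,
              mul_smul_comm, smul_sub]
            exact (smul_sub r (ρlin b a * ρlin b y) (ρlin b y * ρlin b a)).symm)
          (fun a y z => by
            simp only [map_add, hL, add_mul, mul_add]; abel)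
          (fun r a y => by
            simp only [map_smul, hL, smul_mul_assoc,
              mul_smul_comm, smul_sub]
            exact (smul_sub r (ρlin b a * ρlin b y) (ρlin b y * ρlin b a)).symm)
      have hB : B1 = B2 := LinearMap.ext_basis b b fun i j => by
        simpa [B1, B2] using hbil i j
      have h2 := LinearMap.congr_fun (LinearMap.congr_fun hB x) y
      simpa [B1, B2] using h2 }


section Invariance

variable (R : Set I)

/-- Words whose last letter lies in `R`. -/
def Sgood : Set (List I) := {l | ∃ i ∈ R, l.getLast? = some i}

theorem N_mem_supported
    (hclosed : ∀ u v m : I, u ∈ R → v ∈ R → b.repr ⁅b u, b v⁆ m ≠ 0 → m ∈ R)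
    (hup : ∀ u v : I, v ∈ R → v < u → u ∈ R) :
    ∀ n (l : List I), meas l ≤ n → l ∈ Sgood R →
      N b l ∈ Finsupp.supported k k (Sgood R) := by
  intro n
  induction n using Nat.strong_induction_on with
  | _ n IH =>
    intro l hml hl
    cases hfd : firstDesc l with
    | none =>
      rw [N_of_none b hfd]
      exact Finsupp.single_mem_supported k 1 hl
    | some q =>
      obtain ⟨a, u, v, t⟩ := q
      obtain ⟨rfl, hvu⟩ := firstDesc_spec l a u v t hfd
      have hle : ∀ l', meas l' < meas (a ++ u :: v :: t) → l' ∈ Sgood R →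
          N b l' ∈ Finsupp.supported k k (Sgood R) := fun l' h h2 =>
        IH (meas l') (lt_of_lt_of_le h hml) l' le_rfl h2
      rw [N_of_some b hfd]
      cases t with
      | nil =>
        have hv : v ∈ R := by
          obtain ⟨i, hiR, hlast⟩ := hl
          rw [List.getLast?_append_cons, List.getLast?_cons_cons] at hlast
          simp only [List.getLast?_singleton, Option.some.injEq] at hlast
          rwa [← hlast] at hiR
        have hu : u ∈ R := hup u v hv hvu
        refine Submodule.add_mem _ ?_ ?_
        · refine hle _ (meas_swap hvu a []) ⟨u, hu, ?_⟩
          rw [List.getLast?_append_cons, List.getLast?_cons_cons]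
          rfl
        · apply Submodule.finsuppSum_mem
          intro m hm
          refine Submodule.smul_mem _ _ ?_
          refine hle _ (meas_bracket a [] m) ⟨m, hclosed u v m hu hv hm, ?_⟩
          rw [List.getLast?_append_cons]
          rfl
      | cons w t' =>
        obtain ⟨i, hiR, hlast⟩ := hl
        rw [List.getLast?_append_cons, List.getLast?_cons_cons, List.getLast?_cons_cons] at hlast
        refine Submodule.add_mem _ ?_ ?_
        · refine hle _ (meas_swap hvu a (w :: t')) ⟨i, hiR, ?_⟩
          rw [List.getLast?_append_cons, List.getLast?_cons_cons, List.getLast?_cons_cons]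
          exact hlast
        · apply Submodule.finsuppSum_mem
          intro m hm
          refine Submodule.smul_mem _ _ ?_
          refine hle _ (meas_bracket a (w :: t') m) ⟨i, hiR, ?_⟩
          rw [List.getLast?_append_cons, List.getLast?_cons_cons]
          exact hlast

theorem Bi_mem_supported
    (hclosed : ∀ u v m : I, u ∈ R → v ∈ R → b.repr ⁅b u, b v⁆ m ≠ 0 → m ∈ R)
    (hup : ∀ u v : I, v ∈ R → v < u → u ∈ R)
    (m : I) {w : List I →₀ k} (hw : w ∈ Finsupp.supported k k (Sgood R)) :
    Bi b m w ∈ Finsupp.supported k k (Sgood R) := by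
  rw [Bi, Finsupp.linearCombination_apply]
  apply Submodule.finsuppSum_mem
  intro K hK
  refine Submodule.smul_mem _ _ ?_
  have hKS : K ∈ Sgood R :=
    (Finsupp.mem_supported k w).mp hw (Finsupp.mem_support_iff.mpr hK)
  obtain ⟨i, hiR, hlast⟩ := hKS
  have hKne : K ≠ [] := by rintro rfl; simp at hlast
  refine N_mem_supported b R hclosed hup (meas (m :: K)) (m :: K) le_rfl ⟨i, hiR, ?_⟩
  cases K with
  | nil => exact absurd rfl hKne
  | cons a t => rw [List.getLast?_cons_cons]; exact hlast

theorem ρlin_mem_supported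
    (hclosed : ∀ u v m : I, u ∈ R → v ∈ R → b.repr ⁅b u, b v⁆ m ≠ 0 → m ∈ R)
    (hup : ∀ u v : I, v ∈ R → v < u → u ∈ R)
    (x : g) {w : List I →₀ k} (hw : w ∈ Finsupp.supported k k (Sgood R)) :
    ρlin b x w ∈ Finsupp.supported k k (Sgood R) := by
  rw [ρlin_apply]
  apply Submodule.finsuppSum_mem
  intro i _
  exact Submodule.smul_mem _ _ (Bi_mem_supported b R hclosed hup i hw)

end Invariance


section UEA

/-- The representation of the enveloping algebra on words. -/
def Φ : UniversalEnvelopingAlgebra k g →ₐ[k] Module.End k (List I →₀ k) :=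
  UniversalEnvelopingAlgebra.lift k (ρLie b)

theorem Φ_ι (x : g) : Φ b (UniversalEnvelopingAlgebra.ι k x) = ρlin b x := by
  rw [Φ, UniversalEnvelopingAlgebra.lift_ι_apply]
  rfl

variable (R : Set I)

theorem Φ_preserves
    (hclosed : ∀ u v m : I, u ∈ R → v ∈ R → b.repr ⁅b u, b v⁆ m ≠ 0 → m ∈ R)
    (hup : ∀ u v : I, v ∈ R → v < u → u ∈ R)
    (u : UniversalEnvelopingAlgebra k g) :
    ∀ w ∈ Finsupp.supported k k (Sgood R), Φ b u w ∈ Finsupp.supported k k (Sgood R) := by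
  obtain ⟨t, rfl⟩ : ∃ t, UniversalEnvelopingAlgebra.mkAlgHom k g t = u :=
    RingCon.mkₐ_surjective _ u
  induction t using TensorAlgebra.induction with
  | algebraMap r =>
    intro w hw
    simp only [AlgHom.commutes]
    rw [Module.algebraMap_end_apply]
    exact Submodule.smul_mem _ _ hw
  | ι x =>
    intro w hw
    have : (UniversalEnvelopingAlgebra.mkAlgHom k g) (TensorAlgebra.ι k x)
        = UniversalEnvelopingAlgebra.ι k x := rfl
    rw [this, Φ_ι]
    exact ρlin_mem_supported b R hclosed hup x hw
  | mul a c iha ihc =>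
    intro w hw
    simp only [map_mul, Module.End.mul_apply]
    exact iha _ (ihc w hw)
  | add a c iha ihc =>
    intro w hw
    simp only [map_add, LinearMap.add_apply]
    exact Submodule.add_mem _ (iha w hw) (ihc w hw)

end UEA


theorem key_coeff (R : Set I)
    (hclosed : ∀ u v m : I, u ∈ R → v ∈ R → b.repr ⁅b u, b v⁆ m ≠ 0 → m ∈ R)
    (hup : ∀ u v : I, v ∈ R → v < u → u ∈ R) (X : Set g)
    (hX : ∀ x ∈ X, ∀ m, b.repr x m ≠ 0 → m ∈ R) (w : g)
    (hw : UniversalEnvelopingAlgebra.ι k w ∈ Submodule.span (UniversalEnvelopingAlgebra k g)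
      (UniversalEnvelopingAlgebra.ι k '' X)) :
    ∀ j ∉ R, b.repr w j = 0 := by
  have hmem : ∀ u ∈ Submodule.span (UniversalEnvelopingAlgebra k g)
      (UniversalEnvelopingAlgebra.ι k '' X),
      Φ b u (Finsupp.single ([] : List I) (1 : k)) ∈ Finsupp.supported k k (Sgood R) := by
    intro u hu
    induction hu using Submodule.span_induction with
    | mem y hy =>
      obtain ⟨x, hx, rfl⟩ := hy
      rw [Φ_ι, ρlin_apply]
      apply Submodule.finsuppSum_mem
      intro i hi
      refine Submodule.smul_mem _ _ ?_
      rw [Bi_single, N_of_none b (rfl : firstDesc [i] = none)]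
      exact Finsupp.single_mem_supported k 1 ⟨i, hX x hx i hi, rfl⟩
    | zero =>
      simp only [map_zero, LinearMap.zero_apply]
      exact Submodule.zero_mem _
    | add u v hu hv ihu ihv =>
      simp only [map_add, LinearMap.add_apply]
      exact Submodule.add_mem _ ihu ihv
    | smul a u hu ihu =>
      rw [smul_eq_mul, map_mul, Module.End.mul_apply]
      exact Φ_preserves b R hclosed hup a _ ihu
  have h0 := hmem _ hw
  rw [Φ_ι, ρlin_apply] at h0
  have hrw : ((b.repr w).sum fun i c => c • Bi b i (Finsupp.single ([] : List I) (1 : k)))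
      = Finsupp.mapDomain (fun i : I => [i]) (b.repr w) := by
    rw [Finsupp.mapDomain]
    refine Finsupp.sum_congr fun i _ => ?_
    rw [Bi_single, N_of_none b (rfl : firstDesc [i] = none), Finsupp.smul_single,
      smul_eq_mul, mul_one]
  rw [hrw] at h0
  intro j hj
  have hinj : Function.Injective (fun i : I => [i]) := by
    intro a c h; simpa using h
  have hS : ([j] : List I) ∉ Sgood R := by
    rintro ⟨i, hiR, hh⟩
    simp only [List.getLast?_singleton, Option.some.injEq] at hh
    exact hj (hh ▸ hiR)
  have := (Finsupp.mem_supported' k _).mp h0 [j] hS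
  rwa [Finsupp.mapDomain_apply hinj] at this

end PBWAux

open PBWAux in
/-- For a Lie algebra `g` over a field of characteristic zero and a Lie subalgebra `h ⊆ g`,
an element `w ∈ g` satisfies `ι w ∈ (U g)·ι(h)` if and only if `w ∈ h`; that is,
`ι(g) ∩ (U g)·ι(h) = ι(h)`. -/
theorem lie_inter_left_ideal_of_subalgebra
    (k : Type*) [Field k] [CharZero k] (g : Type*) [LieRing g] [LieAlgebra k g]
    (h : LieSubalgebra k g) (w : g) :
    UniversalEnvelopingAlgebra.ι k w ∈
      Submodule.span (UniversalEnvelopingAlgebra k g)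
        (UniversalEnvelopingAlgebra.ι k '' (h : Set g)) ↔ w ∈ h := by
  constructor
  · intro hw
    classical
    obtain ⟨q, hq⟩ := Submodule.exists_isCompl h.toSubmodule
    letI : LinearOrder (Module.Basis.ofVectorSpaceIndex k ↥q) :=
      IsWellOrder.linearOrder WellOrderingRel
    letI : LinearOrder (Module.Basis.ofVectorSpaceIndex k ↥h.toSubmodule) :=
      IsWellOrder.linearOrder WellOrderingRel
    let Bq := Module.Basis.ofVectorSpace k ↥q
    let Bh := Module.Basis.ofVectorSpace k ↥h.toSubmodule
    let e : (↥q × ↥h.toSubmodule) ≃ₗ[k] g :=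
      Submodule.prodEquivOfIsCompl q h.toSubmodule hq.symm
    let b0 := (Bq.prod Bh).map e
    let b := b0.reindex (toLex : _ ≃ (Module.Basis.ofVectorSpaceIndex k ↥q ⊕ₗ
      Module.Basis.ofVectorSpaceIndex k ↥h.toSubmodule))
    let R : Set (Module.Basis.ofVectorSpaceIndex k ↥q ⊕ₗ Module.Basis.ofVectorSpaceIndex k ↥h.toSubmodule) :=
      {i | ∃ jh, ofLex i = Sum.inr jh}
    have hbinr : ∀ jh, b (toLex (Sum.inr jh)) ∈ h := by
      intro jh
      have h1 : b (toLex (Sum.inr jh)) = e (Bq.prod Bh (Sum.inr jh)) := by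
        simp [b, b0, Module.Basis.reindex_apply, Module.Basis.map_apply]
      rw [h1, Submodule.coe_prodEquivOfIsCompl']
      rw [Module.Basis.prod_apply_inr_fst, Module.Basis.prod_apply_inr_snd]
      rw [Submodule.coe_zero, zero_add]
      exact (Bh jh).2
    have hmemh : ∀ x : g, x ∈ h ↔ ∀ i, b.repr x i ≠ 0 → i ∈ R := by
      intro x
      constructor
      · intro hx i hne
        by_contra hiR
        apply hne
        have : ∃ jq, ofLex i = Sum.inl jq := by
          rcases hi : ofLex i with jq | jh
          · exact ⟨jq, rfl⟩
          · exact absurd ⟨jh, hi⟩ hiR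
        obtain ⟨jq, hjq⟩ := this
        have hi' : i = toLex (Sum.inl jq) := by
          apply_fun ofLex
          simpa using hjq
        rw [hi']
        have h1 : b.repr x (toLex (Sum.inl jq)) = b0.repr x (Sum.inl jq) := by
          rw [Module.Basis.repr_reindex_apply]
          rfl
        rw [h1]
        have h2 : b0.repr x = (Bq.prod Bh).repr (e.symm x) := by
          simp [b0, Module.Basis.map_repr]
        rw [h2, Module.Basis.prod_repr_inl]
        have hx' : x ∈ h.toSubmodule := (LieSubalgebra.mem_toSubmodule h).mpr hx
        have h3 : e.symm x = (0, (⟨x, hx'⟩ : h.toSubmodule)) :=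
          Submodule.prodEquivOfIsCompl_symm_apply_right q h.toSubmodule hq.symm
            (⟨x, hx'⟩ : h.toSubmodule)
        rw [h3]
        simp
      · intro hcoord
        have hx : x = (b.repr x).sum fun i c => c • b i := by
          conv_lhs => rw [← b.linearCombination_repr x]
          rw [Finsupp.linearCombination_apply]
        rw [hx]
        change _ ∈ h.toSubmodule
        apply Submodule.finsuppSum_mem
        intro i hi
        refine Submodule.smul_mem _ _ ?_
        obtain ⟨jh, hjh⟩ := hcoord i hi
        have hi' : i = toLex (Sum.inr jh) := by
          apply_fun ofLex
          simpa using hjh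
        rw [hi']
        exact hbinr jh
    have hclosed : ∀ u v m, u ∈ R → v ∈ R → b.repr ⁅b u, b v⁆ m ≠ 0 → m ∈ R := by
      intro u v m hu hv hm
      obtain ⟨ju, hju⟩ := hu
      obtain ⟨jv, hjv⟩ := hv
      have hu' : u = toLex (Sum.inr ju) := by apply_fun ofLex; simpa using hju
      have hv' : v = toLex (Sum.inr jv) := by apply_fun ofLex; simpa using hjv
      have hlie : ⁅b u, b v⁆ ∈ h := by
        rw [hu', hv']
        exact h.lie_mem (hbinr ju) (hbinr jv)
      exact (hmemh _).mp hlie m hm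
    have hup : ∀ u v, v ∈ R → v < u → u ∈ R := by
      intro u v hv hvu
      obtain ⟨jv, hjv⟩ := hv
      rcases hu : ofLex u with ju | jh
      · exfalso
        have hv' : v = toLex (Sum.inr jv) := by apply_fun ofLex; simpa using hjv
        have hu' : u = toLex (Sum.inl ju) := by apply_fun ofLex; simpa using hu
        rw [hu', hv'] at hvu
        exact Sum.lex_inr_inl (Sum.Lex.toLex_lt_toLex.mp hvu)
      · exact ⟨jh, hu⟩
    have hX : ∀ x ∈ (h : Set g), ∀ m, b.repr x m ≠ 0 → m ∈ R := fun x hx =>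
      (hmemh x).mp hx
    have hcoeff := key_coeff b R hclosed hup (h : Set g) hX w hw
    refine (hmemh w).mpr fun i hne => ?_
    by_contra hiR
    exact hne (hcoeff i hiR)
  · intro hw
    exact Submodule.subset_span ⟨w, hw, rfl⟩
end
end

section
/- Let A be the free associative algebra over ℂ on generators X₁,…,X_n, Z (n ≥ 1). Let I := A·Z + Σ_{1≤i<j≤n} (X_i)(X_j), where (X_i) denotes the two-sided ideal of A generated by X_i, and let C ⊆ A be the linear span of the monomials w_{a,κ} := Z^{a_N−1} X_{κ(N)} ⋯ Z^{a₁−1} X_{κ(1)} over all N ≥ 0, a = (a₁,…,a_N) ∈ (ℤ_{≥1})^N and non-decreasing maps κ : {1,…,N} → {1,…,n} (with w_{a,κ} := 1 when N = 0). Then A = C ⊕ I as vector spaces. -/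
open scoped BigOperators

variable (n : ℕ)

/-- The free associative algebra over `ℂ` on generators `X₁, …, Xₙ, Z`. -/
abbrev A (n : ℕ) : Type := FreeAlgebra ℂ (Fin n ⊕ Unit)

noncomputable def X (i : Fin n) : A n := FreeAlgebra.ι ℂ (Sum.inl i)
noncomputable def Z : A n := FreeAlgebra.ι ℂ (Sum.inr ())

/-- The two-sided ideal of `A n` generated by `X i`, as a `ℂ`-subspace. -/
noncomputable def twoSidedX (i : Fin n) : Submodule ℂ (A n) :=
  Submodule.span ℂ {u : A n | ∃ a b : A n, u = a * X n i * b}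

/-- `I := A·Z + Σ_{i<j} (X_i)(X_j)`. -/
noncomputable def I (n : ℕ) : Submodule ℂ (A n) :=
  Submodule.span ℂ {u : A n | ∃ a : A n, u = a * Z n} +
    ∑ i : Fin n, ∑ j : Fin n, if i < j then twoSidedX n i * twoSidedX n j else ⊥

/-- The monomial `w_{a,κ} = Z^{a_N−1} X_{κ(N)} ⋯ Z^{a₁−1} X_{κ(1)}`. -/
noncomputable def w (N : ℕ) (a : Fin N → ℕ) (κ : Fin N → Fin n) : A n :=
  ((List.ofFn fun i : Fin N => Z n ^ (a i - 1) * X n (κ i)).reverse).prod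

/-- The span of the monomials `w_{a,κ}` over all `N ≥ 0`, `a ∈ (ℤ_{≥1})^N` and
non-decreasing `κ`. -/
noncomputable def C (n : ℕ) : Submodule ℂ (A n) :=
  Submodule.span ℂ
    {u : A n | ∃ (N : ℕ) (a : Fin N → ℕ) (κ : Fin N → Fin n),
      (∀ i, 1 ≤ a i) ∧ Monotone κ ∧ u = w n N a κ}

/-! ### Auxiliary definitions and lemmas -/

/-- The monomial in `A n` corresponding to a word. -/
noncomputable def elt (l : List (Fin n ⊕ Unit)) : A n := (l.map (FreeAlgebra.ι ℂ)).prod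

theorem elt_nil : elt n [] = 1 := rfl

theorem elt_cons (x : Fin n ⊕ Unit) (l : List (Fin n ⊕ Unit)) :
    elt n (x :: l) = FreeAlgebra.ι ℂ x * elt n l := by simp [elt]

theorem elt_append (l l' : List (Fin n ⊕ Unit)) :
    elt n (l ++ l') = elt n l * elt n l' := by simp [elt]

theorem elt_replicateZ (k : ℕ) :
    elt n (List.replicate k (Sum.inr ())) = Z n ^ k := by
  simp [elt, List.map_replicate, List.prod_replicate, Z]

theorem equiv_elt (l : List (Fin n ⊕ Unit)) :
    FreeAlgebra.equivMonoidAlgebraFreeMonoid (elt n l)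
      = MonoidAlgebra.single (FreeMonoid.ofList l) 1 := by
  induction l with
  | nil => simp [elt_nil]; rfl
  | cons x l ih =>
      rw [elt_cons, map_mul, ih]
      rw [show FreeAlgebra.equivMonoidAlgebraFreeMonoid (FreeAlgebra.ι ℂ x)
        = MonoidAlgebra.single (FreeMonoid.of x) 1 by
          simp [FreeAlgebra.equivMonoidAlgebraFreeMonoid]]
      rw [MonoidAlgebra.single_mul_single, one_mul]
      rfl

theorem basis_elt (l : FreeMonoid (Fin n ⊕ Unit)) :
    FreeAlgebra.basisFreeMonoid ℂ (Fin n ⊕ Unit) l = elt n (FreeMonoid.toList l) := by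
  have h1 : FreeAlgebra.basisFreeMonoid ℂ (Fin n ⊕ Unit) l
      = (FreeAlgebra.equivMonoidAlgebraFreeMonoid).symm (MonoidAlgebra.single l 1) := by
    simp [FreeAlgebra.basisFreeMonoid]
  have h2 := congrArg (FreeAlgebra.equivMonoidAlgebraFreeMonoid (R := ℂ)
      (X := Fin n ⊕ Unit)).symm (equiv_elt n (FreeMonoid.toList l))
  rw [AlgEquiv.symm_apply_apply, FreeMonoid.ofList_toList] at h2
  rw [h1, h2]

/-- A word ends in `Z`. -/
def EndZ (l : List (Fin n ⊕ Unit)) : Prop := l.getLast? = some (Sum.inr ())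

/-- A word contains some `X i` to the left of some `X j` with `i < j`. -/
def HasPat (l : List (Fin n ⊕ Unit)) : Prop :=
  ∃ (i j : Fin n) (u v t : List (Fin n ⊕ Unit)),
    i < j ∧ l = u ++ Sum.inl i :: (v ++ Sum.inl j :: t)

def Bad (l : List (Fin n ⊕ Unit)) : Prop := EndZ n l ∨ HasPat n l

theorem w_zero (a : Fin 0 → ℕ) (κ : Fin 0 → Fin n) : w n 0 a κ = 1 := by
  simp [w]

theorem w_succ (N : ℕ) (a : Fin (N + 1) → ℕ) (κ : Fin (N + 1) → Fin n) :
    w n (N + 1) a κ =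
      Z n ^ (a (Fin.last N) - 1) * X n (κ (Fin.last N)) *
        w n N (fun i => a i.castSucc) (fun i => κ i.castSucc) := by
  rw [w, List.ofFn_succ', List.concat_eq_append, List.reverse_append]
  simp [w, mul_assoc]

theorem monotone_snoc {N : ℕ} (κ : Fin N → Fin n) (m : Fin n) (hκ : Monotone κ)
    (hle : ∀ t, κ t ≤ m) : Monotone (Fin.snoc κ m) := by
  intro i j hij
  rcases eq_or_ne j (Fin.last N) with rfl | hj
  · rcases eq_or_ne i (Fin.last N) with rfl | hi
    · exact le_refl _
    · rcases Fin.exists_castSucc_eq.mpr hi with ⟨i', rfl⟩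
      simpa [Fin.snoc_castSucc, Fin.snoc_last] using hle i'
  · rcases Fin.exists_castSucc_eq.mpr hj with ⟨j', rfl⟩
    have hi : i ≠ Fin.last N := by
      intro h
      subst h
      exact absurd (lt_of_le_of_lt hij (Fin.castSucc_lt_last j')) (lt_irrefl _)
    rcases Fin.exists_castSucc_eq.mpr hi with ⟨i', rfl⟩
    simpa [Fin.snoc_castSucc] using hκ (Fin.castSucc_le_castSucc_iff.mp hij)

/-- Parsing: every good word is one of the spanning monomials of `C`. -/
theorem parse (l : List (Fin n ⊕ Unit)) (h : ¬ Bad n l) :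
    ∃ (N : ℕ) (a : Fin N → ℕ) (κ : Fin N → Fin n),
      (∀ i, 1 ≤ a i) ∧ Monotone κ ∧ (∀ t, Sum.inl (κ t) ∈ l) ∧ (l ≠ [] → N ≠ 0) ∧
      elt n l = w n N a κ := by
  induction l with
  | nil =>
      exact ⟨0, fun _ => 1, Fin.elim0, fun i => le_refl _, fun i => i.elim0,
        fun t => t.elim0, fun h' => absurd rfl h', (w_zero n _ _).symm⟩
  | cons x l ih =>
      have hBl : ¬ Bad n l := by
        intro hb
        apply h
        rcases hb with hz | ⟨i, j, u, v, t, hij, rfl⟩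
        · left
          have hne : l ≠ [] := by
            intro h'
            rw [h'] at hz
            simp [EndZ] at hz
          show (x :: l).getLast? = _
          rw [show x :: l = [x] ++ l from rfl, List.getLast?_append_of_ne_nil _ hne]
          exact hz
        · right
          exact ⟨i, j, x :: u, v, t, hij, by simp⟩
      obtain ⟨N, a, κ, ha, hκ, hmem, hne, helt⟩ := ih hBl
      rcases x with m | u
      · -- x = X m
        have hle : ∀ t, κ t ≤ m := by
          intro t
          by_contra hmt
          push_neg at hmt
          obtain ⟨u, v, huv⟩ := List.append_of_mem (hmem t)
          exact h (Or.inr ⟨m, κ t, [], u, v, hmt, by rw [huv]; simp⟩)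
        refine ⟨N + 1, Fin.snoc a 1, Fin.snoc κ m, ?_, monotone_snoc n κ m hκ hle, ?_,
          fun _ => Nat.succ_ne_zero N, ?_⟩
        · intro i
          rcases eq_or_ne i (Fin.last N) with rfl | hi
          · simp
          · rcases Fin.exists_castSucc_eq.mpr hi with ⟨i', rfl⟩
            simpa using ha i'
        · intro t
          rcases eq_or_ne t (Fin.last N) with rfl | ht
          · simp
          · rcases Fin.exists_castSucc_eq.mpr ht with ⟨t', rfl⟩
            rw [Fin.snoc_castSucc]
            exact List.mem_cons_of_mem _ (hmem t')
        · rw [elt_cons, helt, w_succ]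
          have h1 : (fun i : Fin N => (Fin.snoc a 1 : Fin (N+1) → ℕ) i.castSucc) = a := by
            funext i; simp
          have h2 : (fun i : Fin N => (Fin.snoc κ m : Fin (N+1) → Fin n) i.castSucc) = κ := by
            funext i; simp
          rw [h1, h2, Fin.snoc_last, Fin.snoc_last]
          simp [X]
      · -- x = Z
        have hlne : l ≠ [] := by
          rintro rfl
          exact h (Or.inl (by simp [EndZ]))
        have hN : N ≠ 0 := hne hlne
        obtain ⟨M, rfl⟩ := Nat.exists_eq_succ_of_ne_zero hN
        refine ⟨M + 1, Function.update a (Fin.last M) (a (Fin.last M) + 1), κ, ?_, hκ,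
          fun t => List.mem_cons_of_mem _ (hmem t), fun _ => Nat.succ_ne_zero M, ?_⟩
        · intro i
          rcases eq_or_ne i (Fin.last M) with rfl | hi
          · simp
          · rw [Function.update_of_ne hi]
            exact ha i
        · rw [elt_cons, helt, w_succ, w_succ]
          have h1 : (fun i : Fin M =>
              Function.update a (Fin.last M) (a (Fin.last M) + 1) i.castSucc)
              = fun i => a i.castSucc := by
            funext i
            exact Function.update_of_ne (Fin.castSucc_lt_last i).ne _ _
          rw [h1, Function.update_self, Nat.add_sub_cancel]
          rw [show FreeAlgebra.ι ℂ (Sum.inr () : Fin n ⊕ Unit) = Z n from rfl]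
          rw [← mul_assoc, ← mul_assoc, ← pow_succ', Nat.sub_add_cancel (ha _)]

/-- Construction: every spanning monomial of `C` is the monomial of a structured word. -/
theorem construct (N : ℕ) (a : Fin N → ℕ) (κ : Fin N → Fin n) (ha : ∀ i, 1 ≤ a i) :
    ∃ l : List (Fin n ⊕ Unit),
      elt n l = w n N a κ ∧ l.getLast? ≠ some (Sum.inr ()) ∧
      l.filterMap Sum.getLeft? = (List.ofFn κ).reverse := by
  induction N with
  | zero => exact ⟨[], (w_zero n _ _).symm, by simp, by simp⟩
  | succ M ih =>
      obtain ⟨l, hl, hlast, hfm⟩ :=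
        ih (fun i => a i.castSucc) (fun i => κ i.castSucc) (fun i => ha _)
      refine ⟨List.replicate (a (Fin.last M) - 1) (Sum.inr ())
          ++ Sum.inl (κ (Fin.last M)) :: l, ?_, ?_, ?_⟩
      · rw [elt_append, elt_cons, elt_replicateZ, hl, w_succ]
        rw [show FreeAlgebra.ι ℂ (Sum.inl (κ (Fin.last M)) : Fin n ⊕ Unit)
          = X n (κ (Fin.last M)) from rfl]
        rw [mul_assoc]
      · rw [List.getLast?_append_of_ne_nil _ (List.cons_ne_nil _ _)]
        cases l with
        | nil => simp
        | cons y l' =>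
            rw [show Sum.inl (κ (Fin.last M)) :: y :: l'
              = [Sum.inl (κ (Fin.last M))] ++ (y :: l') from rfl,
              List.getLast?_append_of_ne_nil _ (List.cons_ne_nil _ _)]
            exact hlast
      · have hrep : (List.replicate (a (Fin.last M) - 1)
            (Sum.inr () : Fin n ⊕ Unit)).filterMap Sum.getLeft? = [] := by
          induction (a (Fin.last M) - 1) with
          | zero => rfl
          | succ k ihk => simpa [List.replicate_succ, List.filterMap_cons] using ihk
        rw [List.filterMap_append, List.filterMap_cons, hrep, List.nil_append]
        rw [List.ofFn_succ' κ, List.concat_eq_append, List.reverse_append]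
        simp [hfm]

theorem endZ_concat (l : List (Fin n ⊕ Unit)) : EndZ n (l ++ [Sum.inr ()]) := by
  unfold EndZ
  rw [List.getLast?_append_of_ne_nil _ (List.cons_ne_nil _ _)]
  simp

theorem span_elt_top : Submodule.span ℂ (Set.range (elt n)) = ⊤ := by
  rw [eq_top_iff, ← (FreeAlgebra.basisFreeMonoid ℂ (Fin n ⊕ Unit)).span_eq]
  apply Submodule.span_mono
  rintro _ ⟨l, rfl⟩
  exact ⟨FreeMonoid.toList l, (basis_elt n l).symm⟩

theorem bad_mem_I (l : List (Fin n ⊕ Unit)) (h : Bad n l) : elt n l ∈ I n := by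
  rcases h with hz | ⟨i, j, u, v, t, hij, rfl⟩
  · have hne : l ≠ [] := by
      rintro rfl
      simp [EndZ] at hz
    have hlast : l.getLast hne = Sum.inr () := by
      have := List.getLast?_eq_getLast_of_ne_nil hne
      rw [hz] at this
      exact (Option.some_injective _ this.symm)
    have hdecomp : l = l.dropLast ++ [Sum.inr ()] := by
      conv_lhs => rw [← List.dropLast_append_getLast hne]
      rw [hlast]
    rw [I, Submodule.add_eq_sup]
    apply Submodule.mem_sup_left
    apply Submodule.subset_span
    refine ⟨elt n l.dropLast, ?_⟩
    conv_lhs => rw [hdecomp]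
    rw [elt_append, elt_cons, elt_nil, mul_one]
    rfl
  · have h1 : elt n (u ++ Sum.inl i :: (v ++ Sum.inl j :: t)) =
        (elt n u * X n i * elt n v) * (1 * X n j * elt n t) := by
      rw [elt_append, elt_cons, elt_append, elt_cons]
      rw [show FreeAlgebra.ι ℂ (Sum.inl i : Fin n ⊕ Unit) = X n i from rfl,
        show FreeAlgebra.ι ℂ (Sum.inl j : Fin n ⊕ Unit) = X n j from rfl]
      simp only [one_mul, mul_assoc]
    rw [h1, I, Submodule.add_eq_sup]
    apply Submodule.mem_sup_right
    have hmm : (elt n u * X n i * elt n v) * (1 * X n j * elt n t)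
        ∈ twoSidedX n i * twoSidedX n j :=
      Submodule.mul_mem_mul (Submodule.subset_span ⟨_, _, rfl⟩)
        (Submodule.subset_span ⟨1, _, rfl⟩)
    have hle : twoSidedX n i * twoSidedX n j ≤
        ∑ i' : Fin n, ∑ j' : Fin n,
          if i' < j' then twoSidedX n i' * twoSidedX n j' else ⊥ := by
      have h2 : twoSidedX n i * twoSidedX n j ≤
          ∑ j' : Fin n, if i < j' then twoSidedX n i * twoSidedX n j' else ⊥ := by
        have := Finset.single_le_sum
          (f := fun j' : Fin n => if i < j' then twoSidedX n i * twoSidedX n j' else ⊥)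
          (fun i' _ => bot_le) (Finset.mem_univ j)
        simpa only [if_pos hij] using this
      refine le_trans h2 ?_
      exact Finset.single_le_sum
        (f := fun i' : Fin n => ∑ j' : Fin n,
          if i' < j' then twoSidedX n i' * twoSidedX n j' else ⊥)
        (fun i' _ => bot_le) (Finset.mem_univ i)
    exact hle hmm

theorem tsX_le (i : Fin n) :
    twoSidedX n i ≤ Submodule.span ℂ (elt n '' {l | Sum.inl i ∈ l}) := by
  rw [twoSidedX]
  apply Submodule.span_le.mpr
  rintro _ ⟨a, b, rfl⟩
  have ha : a ∈ Submodule.span ℂ (Set.range (elt n)) := by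
    rw [span_elt_top]; trivial
  have hb : b ∈ Submodule.span ℂ (Set.range (elt n)) := by
    rw [span_elt_top]; trivial
  induction hb using Submodule.span_induction with
  | mem b' hb' =>
      obtain ⟨v, rfl⟩ := hb'
      induction ha using Submodule.span_induction with
      | mem a' ha' =>
          obtain ⟨u, rfl⟩ := ha'
          apply Submodule.subset_span
          refine ⟨u ++ Sum.inl i :: v, by simp, ?_⟩
          rw [elt_append, elt_cons, ← mul_assoc]
          rfl
      | zero => simpa using Submodule.zero_mem _
      | add x y hx hy ihx ihy =>
          rw [add_mul, add_mul]
          exact Submodule.add_mem _ ihx ihy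
      | smul c x hx ihx =>
          have : (c • x) * X n i * elt n v = c • (x * X n i * elt n v) := by
            rw [smul_mul_assoc, smul_mul_assoc]
          rw [this]
          exact Submodule.smul_mem _ _ ihx
  | zero => simpa using Submodule.zero_mem _
  | add x y hx hy ihx ihy =>
      rw [mul_add]
      exact Submodule.add_mem _ ihx ihy
  | smul c x hx ihx =>
      have : a * X n i * (c • x) = c • (a * X n i * x) := by
        rw [mul_smul_comm]
      rw [this]
      exact Submodule.smul_mem _ _ ihx

theorem I_le_badspan : I n ≤ Submodule.span ℂ (elt n '' {l | Bad n l}) := by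
  rw [I]
  have h1 : Submodule.span ℂ {u : A n | ∃ a : A n, u = a * Z n}
      ≤ Submodule.span ℂ (elt n '' {l | Bad n l}) := by
    apply Submodule.span_le.mpr
    rintro _ ⟨a, rfl⟩
    have ha : a ∈ Submodule.span ℂ (Set.range (elt n)) := by
      rw [span_elt_top]; trivial
    induction ha using Submodule.span_induction with
    | mem a' ha' =>
        obtain ⟨l, rfl⟩ := ha'
        apply Submodule.subset_span
        refine ⟨l ++ [Sum.inr ()], ?_, ?_⟩
        · exact Or.inl (endZ_concat n l)
        · rw [elt_append, elt_cons, elt_nil, mul_one]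
          rfl
    | zero => simpa using Submodule.zero_mem _
    | add x y hx hy ihx ihy =>
        rw [add_mul]
        exact Submodule.add_mem _ ihx ihy
    | smul c x hx ihx =>
        rw [smul_mul_assoc]
        exact Submodule.smul_mem _ _ ihx
  have h2 : (∑ i : Fin n, ∑ j : Fin n,
      if i < j then twoSidedX n i * twoSidedX n j else ⊥)
      ≤ Submodule.span ℂ (elt n '' {l | Bad n l}) := by
    apply Finset.sum_induction _ (fun M => M ≤ Submodule.span ℂ (elt n '' {l | Bad n l}))
    · intro p q hp hq
      rw [Submodule.add_eq_sup]
      exact sup_le hp hq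
    · rw [show (0 : Submodule ℂ (A n)) = ⊥ from rfl]
      exact bot_le
    · intro i _
      apply Finset.sum_induction _ (fun M => M ≤ Submodule.span ℂ (elt n '' {l | Bad n l}))
      · intro p q hp hq
        rw [Submodule.add_eq_sup]
        exact sup_le hp hq
      · rw [show (0 : Submodule ℂ (A n)) = ⊥ from rfl]
        exact bot_le
      · intro j _
        by_cases hij : i < j
        · rw [if_pos hij]
          refine le_trans (mul_le_mul' (tsX_le n i) (tsX_le n j)) ?_
          rw [Submodule.span_mul_span]
          apply Submodule.span_mono
          rintro _ ⟨_, ⟨u, hu, rfl⟩, _, ⟨v, hv, rfl⟩, rfl⟩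
          obtain ⟨u1, u2, rfl⟩ := List.append_of_mem hu
          obtain ⟨v1, v2, rfl⟩ := List.append_of_mem hv
          refine ⟨(u1 ++ Sum.inl i :: u2) ++ (v1 ++ Sum.inl j :: v2), ?_, ?_⟩
          · right
            exact ⟨i, j, u1, u2 ++ v1, v2, hij, by simp⟩
          · rw [elt_append]
        · rw [if_neg hij]
          exact bot_le
  rw [Submodule.add_eq_sup]
  exact sup_le h1 h2

theorem C_le_goodspan : C n ≤ Submodule.span ℂ (elt n '' {l | ¬ Bad n l}) := by
  rw [C]
  apply Submodule.span_le.mpr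
  rintro _ ⟨N, a, κ, ha, hκ, rfl⟩
  obtain ⟨l, hl, hlast, hfm⟩ := construct n N a κ ha
  refine Submodule.subset_span ⟨l, ?_, hl⟩
  rintro (hz | ⟨i, j, u, v, t, hij, rfl⟩)
  · exact hlast hz
  · have hpw : ((List.ofFn κ).reverse).Pairwise (fun p q : Fin n => q ≤ p) := by
      rw [List.pairwise_reverse]
      exact List.pairwise_ofFn.mpr fun i j h => hκ h.le
    rw [← hfm] at hpw
    rw [List.filterMap_append, List.filterMap_cons, List.filterMap_append,
      List.filterMap_cons] at hpw
    simp only [Sum.getLeft?] at hpw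
    have h' := (List.pairwise_append.mp hpw).2.1
    rw [List.pairwise_cons] at h'
    exact absurd (h'.1 j (by simp)) (not_le.mpr hij)

theorem good_mem_C (l : List (Fin n ⊕ Unit)) (h : ¬ Bad n l) : elt n l ∈ C n := by
  obtain ⟨N, a, κ, ha, hκ, _, _, helt⟩ := parse n l h
  exact Submodule.subset_span ⟨N, a, κ, ha, hκ, helt⟩

theorem free_algebra_direct_sum_decomposition (n : ℕ) (hn : 1 ≤ n) :
    IsCompl (C n) (I n) := by
  constructor
  · -- disjointness
    have hd := (FreeAlgebra.basisFreeMonoid ℂ (Fin n ⊕ Unit)).linearIndependent.disjoint_span_image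
      (s := {l : FreeMonoid (Fin n ⊕ Unit) | ¬ Bad n (FreeMonoid.toList l)})
      (t := {l : FreeMonoid (Fin n ⊕ Unit) | Bad n (FreeMonoid.toList l)})
      (Set.disjoint_left.mpr fun l hl hl' => hl hl')
    refine Disjoint.mono ?_ ?_ hd
    · refine le_trans (C_le_goodspan n) (Submodule.span_mono ?_)
      rintro _ ⟨l, hl, rfl⟩
      refine ⟨FreeMonoid.ofList l, ?_, ?_⟩
      · simpa [FreeMonoid.toList_ofList] using hl
      · rw [basis_elt, FreeMonoid.toList_ofList]
    · refine le_trans (I_le_badspan n) (Submodule.span_mono ?_)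
      rintro _ ⟨l, hl, rfl⟩
      refine ⟨FreeMonoid.ofList l, ?_, ?_⟩
      · simpa [FreeMonoid.toList_ofList] using hl
      · rw [basis_elt, FreeMonoid.toList_ofList]
  · -- codisjointness
    rw [codisjoint_iff, eq_top_iff, ← span_elt_top n]
    apply Submodule.span_le.mpr
    rintro _ ⟨l, rfl⟩
    by_cases hb : Bad n l
    · exact Submodule.mem_sup_right (bad_mem_I n l hb)
    · exact Submodule.mem_sup_left (good_mem_C n l hb)
end

section
/- With the notation below, f₃ decomposes as an internal direct sum of vector subspaces f₃ = ℂ·z ⊕ a_x ⊕ a_y ⊕ λ, where a_x (resp. a_y) is the Lie subalgebra of f₃ generated by { ad_z^k(x) : k ≥ 0 } (resp. { ad_z^k(y) : k ≥ 0 }); moreover a_x and a_y are free Lie algebras on these generators, i.e. there is a Lie algebra isomorphism from the free Lie algebra on countably many generators (e_k)_{k≥0} onto a_x sending e_k to ad_z^k(x), and similarly for a_y. -/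
set_option linter.unusedSectionVars false

attribute [local instance 100] LieRing.ofAssociativeRing

/-- The free Lie algebra over `ℂ` on three generators `x`, `y`, `z`. -/
abbrev f3 : Type := FreeLieAlgebra ℂ (Fin 3)

noncomputable def x : f3 := FreeLieAlgebra.of ℂ 0
noncomputable def y : f3 := FreeLieAlgebra.of ℂ 1
noncomputable def z : f3 := FreeLieAlgebra.of ℂ 2

/-- `ad_z^k (w) = [z,[z,…,[z,w]…]]`. -/
noncomputable def adzk : ℕ → f3 → f3
  | 0, w => w
  | k + 1, w => ⁅z, adzk k w⁆

/-- The Lie subalgebra of `f3` generated by `{ ad_z^k (w) : k ≥ 0 }`. -/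
noncomputable def aSub (w : f3) : LieSubalgebra ℂ f3 :=
  LieSubalgebra.lieSpan ℂ f3 {v : f3 | ∃ k : ℕ, v = adzk k w}

/-- The Lie ideal `λ := ⁅[x],[y]⁆`. -/
noncomputable def lam : LieIdeal ℂ f3 :=
  ⁅(LieSubmodule.lieSpan ℂ f3 {x} : LieIdeal ℂ f3),
    (LieSubmodule.lieSpan ℂ f3 {y} : LieIdeal ℂ f3)⁆

/-- The four subspaces `ℂ·z`, `a_x`, `a_y`, `λ` of `f₃`. -/
noncomputable def piece : Fin 4 → Submodule ℂ f3
  | 0 => Submodule.span ℂ {z}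
  | 1 => (aSub x).toSubmodule
  | 2 => (aSub y).toSubmodule
  | 3 => lam.toSubmodule

namespace F3Aux

open FreeLieAlgebra

/-! ### Semidirect products of Lie algebras -/

/-- Data for a semidirect product of Lie algebras: `L` acts on `M` by derivations. -/
structure SdData (L M : Type) [LieRing L] [LieAlgebra ℂ L] [LieRing M] [LieAlgebra ℂ M] where
  ρ : L →ₗ[ℂ] M →ₗ[ℂ] M
  lie_rho : ∀ u v m, ρ ⁅u, v⁆ m = ρ u (ρ v m) - ρ v (ρ u m)
  rho_lie : ∀ u m n, ρ u ⁅m, n⁆ = ⁅ρ u m, n⁆ + ⁅m, ρ u n⁆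

variable {L M : Type} [LieRing L] [LieAlgebra ℂ L] [LieRing M] [LieAlgebra ℂ M]

/-- Carrier of the semidirect product. -/
def Sd (_d : SdData L M) : Type := L × M

namespace Sd

variable (d : SdData L M)

instance : AddCommGroup (Sd d) := inferInstanceAs (AddCommGroup (L × M))
instance : Module ℂ (Sd d) := inferInstanceAs (Module ℂ (L × M))

/-- Constructor. -/
def mk (a : L) (m : M) : Sd d := (a, m)

@[simp] lemma mk_fst (a : L) (m : M) : (mk d a m).1 = a := rfl
@[simp] lemma mk_snd (a : L) (m : M) : (mk d a m).2 = m := rfl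

instance : LieRing (Sd d) where
  bracket a b := (⁅a.1, b.1⁆, d.ρ a.1 b.2 - d.ρ b.1 a.2 + ⁅a.2, b.2⁆)
  add_lie a b c := by
    refine Prod.ext ?_ ?_
    · exact add_lie _ _ _
    · show d.ρ (a.1 + b.1) c.2 - d.ρ c.1 (a.2 + b.2) + ⁅a.2 + b.2, c.2⁆ =
        (d.ρ a.1 c.2 - d.ρ c.1 a.2 + ⁅a.2, c.2⁆) + (d.ρ b.1 c.2 - d.ρ c.1 b.2 + ⁅b.2, c.2⁆)
      simp only [map_add, LinearMap.add_apply, add_lie]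
      abel
  lie_add a b c := by
    refine Prod.ext ?_ ?_
    · exact lie_add _ _ _
    · show d.ρ a.1 (b.2 + c.2) - d.ρ (b.1 + c.1) a.2 + ⁅a.2, b.2 + c.2⁆ =
        (d.ρ a.1 b.2 - d.ρ b.1 a.2 + ⁅a.2, b.2⁆) + (d.ρ a.1 c.2 - d.ρ c.1 a.2 + ⁅a.2, c.2⁆)
      simp only [map_add, LinearMap.add_apply, lie_add]
      abel
  lie_self a := by
    refine Prod.ext ?_ ?_
    · exact lie_self _
    · show d.ρ a.1 a.2 - d.ρ a.1 a.2 + ⁅a.2, a.2⁆ = 0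
      simp
  leibniz_lie a b c := by
    refine Prod.ext ?_ ?_
    · exact leibniz_lie _ _ _
    · show d.ρ a.1 (d.ρ b.1 c.2 - d.ρ c.1 b.2 + ⁅b.2, c.2⁆) - d.ρ ⁅b.1, c.1⁆ a.2
          + ⁅a.2, d.ρ b.1 c.2 - d.ρ c.1 b.2 + ⁅b.2, c.2⁆⁆ =
        (d.ρ ⁅a.1, b.1⁆ c.2 - d.ρ c.1 (d.ρ a.1 b.2 - d.ρ b.1 a.2 + ⁅a.2, b.2⁆)
          + ⁅d.ρ a.1 b.2 - d.ρ b.1 a.2 + ⁅a.2, b.2⁆, c.2⁆)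
        + (d.ρ b.1 (d.ρ a.1 c.2 - d.ρ c.1 a.2 + ⁅a.2, c.2⁆) - d.ρ ⁅a.1, c.1⁆ b.2
          + ⁅b.2, d.ρ a.1 c.2 - d.ρ c.1 a.2 + ⁅a.2, c.2⁆⁆)
      simp only [map_add, map_sub, LinearMap.add_apply, LinearMap.sub_apply,
        d.lie_rho, d.rho_lie, lie_add, add_lie, lie_sub, sub_lie, lie_lie]
      rw [show ⁅b.2, (d.ρ c.1) a.2⁆ = -⁅(d.ρ c.1) a.2, b.2⁆ from (lie_skew _ _).symm]
      abel

instance : LieAlgebra ℂ (Sd d) where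
  lie_smul t a b := by
    refine Prod.ext ?_ ?_
    · exact lie_smul _ _ _
    · show d.ρ a.1 (t • b.2) - d.ρ (t • b.1) a.2 + ⁅a.2, t • b.2⁆ =
        t • (d.ρ a.1 b.2 - d.ρ b.1 a.2 + ⁅a.2, b.2⁆)
      simp only [map_smul, LinearMap.smul_apply, lie_smul, smul_sub, smul_add]

@[simp] lemma bracket_fst (a b : Sd d) : ⁅a, b⁆.1 = ⁅a.1, b.1⁆ := rfl
@[simp] lemma bracket_snd (a b : Sd d) :
    ⁅a, b⁆.2 = d.ρ a.1 b.2 - d.ρ b.1 a.2 + ⁅a.2, b.2⁆ := rfl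

@[simp] lemma zero_fst : (0 : Sd d).1 = 0 := rfl
@[simp] lemma zero_snd : (0 : Sd d).2 = 0 := rfl
@[simp] lemma add_fst (a b : Sd d) : (a + b).1 = a.1 + b.1 := rfl
@[simp] lemma add_snd (a b : Sd d) : (a + b).2 = a.2 + b.2 := rfl
@[simp] lemma smul_fst (t : ℂ) (a : Sd d) : (t • a).1 = t • a.1 := rfl
@[simp] lemma smul_snd (t : ℂ) (a : Sd d) : (t • a).2 = t • a.2 := rfl

/-- Inclusion of `M` into the semidirect product, as a Lie algebra morphism. -/
def inr : M →ₗ⁅ℂ⁆ Sd d where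
  toFun m := mk d 0 m
  map_add' a b := by refine Prod.ext ?_ ?_ <;> simp
  map_smul' t a := by refine Prod.ext ?_ ?_ <;> simp
  map_lie' {a b} := by
    refine Prod.ext ?_ ?_
    · simp
    · show ⁅a, b⁆ = d.ρ 0 b - d.ρ 0 a + ⁅a, b⁆
      simp

@[simp] lemma inr_apply (m : M) : inr d m = mk d 0 m := rfl

lemma inr_injective : Function.Injective (inr d) := by
  intro a b h
  have := congrArg Prod.snd h
  simpa [mk] using this

/-- First projection, as a Lie algebra morphism. -/
def fstHom : Sd d →ₗ⁅ℂ⁆ L where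
  toFun a := a.1
  map_add' _ _ := rfl
  map_smul' _ _ := rfl
  map_lie' := rfl

@[simp] lemma fstHom_apply (a : Sd d) : fstHom d a = a.1 := rfl

end Sd

/-! ### Generation of the free Lie algebra by its generators -/

variable {X : Type}

/-- The free Lie algebra is generated, as a Lie algebra, by its generators. -/
lemma lieSpan_range_of_eq_top (X : Type) :
    LieSubalgebra.lieSpan ℂ (FreeLieAlgebra ℂ X) (Set.range (of ℂ)) = ⊤ := by
  set K := LieSubalgebra.lieSpan ℂ (FreeLieAlgebra ℂ X) (Set.range (of ℂ)) with hK
  have hmem : ∀ i : X, of ℂ i ∈ K := fun i =>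
    LieSubalgebra.subset_lieSpan ⟨i, rfl⟩
  let F : FreeLieAlgebra ℂ X →ₗ⁅ℂ⁆ K := lift ℂ (fun i => ⟨of ℂ i, hmem i⟩)
  have hcomp : K.incl.comp F = LieHom.id := by
    apply hom_ext
    intro i
    simp [F, LieSubalgebra.coe_incl]
  rw [eq_top_iff]
  intro a _
  have : K.incl (F a) = a := by
    have := congrArg (fun (G : FreeLieAlgebra ℂ X →ₗ⁅ℂ⁆ FreeLieAlgebra ℂ X) => G a) hcomp
    simpa using this
  rw [← this]
  exact (F a).2

/-- Induction principle over the free Lie algebra. -/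
lemma free_induction {p : FreeLieAlgebra ℂ X → Prop} (a : FreeLieAlgebra ℂ X)
    (gen : ∀ i, p (of ℂ i)) (zero : p 0)
    (smul : ∀ (t : ℂ) {u}, p u → p (t • u))
    (add : ∀ u v, p u → p v → p (u + v))
    (lie : ∀ u v, p u → p v → p ⁅u, v⁆) : p a := by
  have ha : a ∈ LieSubalgebra.lieSpan ℂ (FreeLieAlgebra ℂ X) (Set.range (of ℂ)) := by
    rw [lieSpan_range_of_eq_top]; trivial
  exact LieSubalgebra.lieSpan_induction (R := ℂ) (p := fun a _ => p a) (hx := ha)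
    (mem := by rintro _ ⟨i, rfl⟩; exact gen i) (zero := zero)
    (smul := fun t _ _ h => smul t h)
    (add := fun u v _ _ => add u v) (lie := fun u v _ _ => lie u v)

/-! ### The abelian copy of a module, and derivations of free Lie algebras -/

/-- Abelian copy. -/
def Ab (M : Type) : Type := M

namespace Ab
variable {M : Type} [AddCommGroup M] [Module ℂ M]
/-- Identity, from the abelian copy. -/
def un (m : Ab M) : M := m
/-- Identity, into the abelian copy. -/
def ofm (m : M) : Ab M := m
instance : AddCommGroup (Ab M) := inferInstanceAs (AddCommGroup M)
instance : Module ℂ (Ab M) := inferInstanceAs (Module ℂ M)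
instance : LieRing (Ab M) where
  bracket _ _ := 0
  add_lie := by intros; simp
  lie_add := by intros; simp
  lie_self := by intros; rfl
  leibniz_lie := by intros; simp
instance : LieAlgebra ℂ (Ab M) where
  lie_smul := by intros; show (0 : Ab M) = _ • (0 : Ab M); rw [smul_zero]
@[simp] lemma bracket_zero (a b : Ab M) : ⁅a, b⁆ = 0 := rfl
end Ab

/-- Semidirect product data for the adjoint action on the abelian copy. -/
def adData (L : Type) [LieRing L] [LieAlgebra ℂ L] : SdData L (Ab L) where
  ρ := (LieAlgebra.ad ℂ L).toLinearMap
  lie_rho := fun u v m => by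
    have h : (⁅⁅u, v⁆, Ab.un m⁆ : L) = ⁅u, ⁅v, Ab.un m⁆⁆ - ⁅v, ⁅u, Ab.un m⁆⁆ := by
      rw [leibniz_lie]; abel
    exact h
  rho_lie := fun u m n => by
    have h : (⁅u, (0 : L)⁆ : L) = 0 + 0 := by simp
    exact h

@[simp] lemma adData_rho (L : Type) [LieRing L] [LieAlgebra ℂ L] (u : L) (m : Ab L) :
    (adData L).ρ u m = Ab.ofm ⁅u, Ab.un m⁆ := rfl

variable (v : X → FreeLieAlgebra ℂ X)

/-- Auxiliary morphism used to construct a derivation from generator values. -/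
noncomputable def derHom : FreeLieAlgebra ℂ X →ₗ⁅ℂ⁆ Sd (adData (FreeLieAlgebra ℂ X)) :=
  lift ℂ fun i => Sd.mk _ (of ℂ i) (v i)

lemma derHom_fst (a : FreeLieAlgebra ℂ X) : (derHom v a).1 = a := by
  have h : (Sd.fstHom (adData (FreeLieAlgebra ℂ X))).comp (derHom v) = LieHom.id := by
    apply hom_ext; intro i; simp [derHom]; rfl
  have := congrArg (fun (G : FreeLieAlgebra ℂ X →ₗ⁅ℂ⁆ FreeLieAlgebra ℂ X) => G a) h
  simpa using this

/-- The derivation of the free Lie algebra with prescribed values on generators. -/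
noncomputable def der : FreeLieAlgebra ℂ X →ₗ[ℂ] FreeLieAlgebra ℂ X where
  toFun a := (derHom v a).2
  map_add' a b := congrArg Prod.snd ((derHom v).map_add a b)
  map_smul' t a := congrArg Prod.snd ((derHom v).map_smul t a)

@[simp] lemma der_of (i : X) : der v (of ℂ i) = v i := by
  show (derHom v (of ℂ i)).2 = v i
  simp [derHom]; rfl

lemma der_lie (a b : FreeLieAlgebra ℂ X) :
    der v ⁅a, b⁆ = ⁅a, der v b⁆ + ⁅der v a, b⁆ := by
  have h3 : der v ⁅a, b⁆
      = ⁅(derHom v a).1, der v b⁆ - ⁅(derHom v b).1, der v a⁆ + (0 : FreeLieAlgebra ℂ X) :=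
    congrArg Prod.snd ((derHom v).map_lie (x := a) (y := b))
  rw [derHom_fst, derHom_fst, add_zero] at h3
  rw [h3, sub_eq_add_neg, lie_skew]

end F3Aux

namespace F3Main

open F3Aux FreeLieAlgebra

/-! ### The test morphisms `φx, φy : f3 → ℂ ⋉ FreeLieAlgebra ℂ ℕ` -/

noncomputable abbrev FN : Type := FreeLieAlgebra ℂ ℕ

/-- The shift derivation of `FreeLieAlgebra ℂ ℕ`. -/
noncomputable def Dsh : FN →ₗ[ℂ] FN := der (fun k => of ℂ (k + 1))

@[simp] lemma Dsh_of (k : ℕ) : Dsh (of ℂ k) = of ℂ (k + 1) := der_of _ _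

lemma Dsh_lie (a b : FN) : Dsh ⁅a, b⁆ = ⁅a, Dsh b⁆ + ⁅Dsh a, b⁆ := der_lie _ a b

lemma braC (u v : ℂ) : ⁅u, v⁆ = 0 := by
  rw [LieRing.of_associative_ring_bracket, mul_comm, sub_self]

/-- Semidirect product data: `ℂ` acts on `FreeLieAlgebra ℂ ℕ` via the shift derivation. -/
noncomputable def d2 : SdData ℂ FN where
  ρ := LinearMap.toSpanSingleton ℂ (FN →ₗ[ℂ] FN) Dsh
  lie_rho := fun u v m => by
    rw [braC]
    simp only [map_zero, LinearMap.zero_apply, LinearMap.toSpanSingleton_apply,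
      LinearMap.smul_apply, map_smul, smul_smul, mul_comm u v, sub_self]
  rho_lie := fun u m n => by
    simp only [LinearMap.toSpanSingleton_apply, LinearMap.smul_apply, Dsh_lie, smul_add,
      lie_smul, smul_lie]
    abel

@[simp] lemma d2_rho (u : ℂ) (m : FN) : d2.ρ u m = u • Dsh m := rfl

/-- Bracketing with `(1,0)` acts as the shift derivation. -/
lemma brk_shift (m : FN) :
    ⁅Sd.mk d2 1 0, Sd.mk d2 0 m⁆ = Sd.mk d2 0 (Dsh m) := by
  refine Prod.ext ?_ ?_
  · simp [braC]
  · show d2.ρ 1 m - d2.ρ 0 0 + ⁅(0 : FN), m⁆ = Dsh m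
    simp

/-- The morphism from the free Lie algebra on `ℕ` to `f3`, sending `k` to `ad_z^k w`. -/
noncomputable def eh (w : f3) : FreeLieAlgebra ℂ ℕ →ₗ⁅ℂ⁆ f3 :=
  lift ℂ (fun k => adzk k w)

@[simp] lemma eh_of (w : f3) (k : ℕ) : eh w (of ℂ k) = adzk k w := lift_of_apply _ _

/-- The test morphism sending `x ↦ (0, e₀)`, `y ↦ 0`, `z ↦ (1,0)`. -/
noncomputable def phix : f3 →ₗ⁅ℂ⁆ Sd d2 :=
  lift ℂ (![Sd.mk d2 0 (of ℂ 0), 0, Sd.mk d2 1 0])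

/-- The test morphism sending `x ↦ 0`, `y ↦ (0, e₀)`, `z ↦ (1,0)`. -/
noncomputable def phiy : f3 →ₗ⁅ℂ⁆ Sd d2 :=
  lift ℂ (![0, Sd.mk d2 0 (of ℂ 0), Sd.mk d2 1 0])

@[simp] lemma phix_x : phix x = Sd.mk d2 0 (of ℂ 0) := by
  rw [x, phix, lift_of_apply]; rfl
@[simp] lemma phix_y : phix y = 0 := by
  rw [y, phix, lift_of_apply]; rfl
@[simp] lemma phix_z : phix z = Sd.mk d2 1 0 := by
  rw [z, phix, lift_of_apply]; rfl
@[simp] lemma phiy_x : phiy x = 0 := by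
  rw [x, phiy, lift_of_apply]; rfl
@[simp] lemma phiy_y : phiy y = Sd.mk d2 0 (of ℂ 0) := by
  rw [y, phiy, lift_of_apply]; rfl
@[simp] lemma phiy_z : phiy z = Sd.mk d2 1 0 := by
  rw [z, phiy, lift_of_apply]; rfl

lemma phix_adzk (k : ℕ) : phix (adzk k x) = Sd.mk d2 0 (of ℂ k) := by
  induction k with
  | zero => simpa [adzk] using phix_x
  | succ k ih =>
      show phix ⁅z, adzk k x⁆ = _
      rw [LieHom.map_lie, phix_z, ih, brk_shift, Dsh_of]

lemma phiy_adzk (k : ℕ) : phiy (adzk k y) = Sd.mk d2 0 (of ℂ k) := by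
  induction k with
  | zero => simpa [adzk] using phiy_y
  | succ k ih =>
      show phiy ⁅z, adzk k y⁆ = _
      rw [LieHom.map_lie, phiy_z, ih, brk_shift, Dsh_of]

lemma phix_eh (u : FreeLieAlgebra ℂ ℕ) : phix (eh x u) = Sd.inr d2 u := by
  have h : phix.comp (eh x) = Sd.inr d2 := by
    apply hom_ext
    intro k
    simp only [LieHom.coe_comp, Function.comp_apply, eh_of, Sd.inr_apply]
    exact phix_adzk k
  exact congrArg (fun (G : FreeLieAlgebra ℂ ℕ →ₗ⁅ℂ⁆ Sd d2) => G u) h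

lemma phiy_eh (u : FreeLieAlgebra ℂ ℕ) : phiy (eh y u) = Sd.inr d2 u := by
  have h : phiy.comp (eh y) = Sd.inr d2 := by
    apply hom_ext
    intro k
    simp only [LieHom.coe_comp, Function.comp_apply, eh_of, Sd.inr_apply]
    exact phiy_adzk k
  exact congrArg (fun (G : FreeLieAlgebra ℂ ℕ →ₗ⁅ℂ⁆ Sd d2) => G u) h

lemma eh_x_injective : Function.Injective (eh x) := by
  intro a b h
  apply Sd.inr_injective d2
  rw [← phix_eh, ← phix_eh, h]

lemma eh_y_injective : Function.Injective (eh y) := by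
  intro a b h
  apply Sd.inr_injective d2
  rw [← phiy_eh, ← phiy_eh, h]

/-! ### Range of `eh w` is `aSub w` -/

lemma adzk_mem_aSub (w : f3) (k : ℕ) : adzk k w ∈ aSub w :=
  LieSubalgebra.subset_lieSpan ⟨k, rfl⟩

lemma eh_mem_aSub (w : f3) (u : FreeLieAlgebra ℂ ℕ) : eh w u ∈ aSub w := by
  induction u using free_induction with
  | gen k => rw [eh_of]; exact adzk_mem_aSub w k
  | zero => rw [map_zero (eh w)]; exact (aSub w).zero_mem
  | smul t hu => rw [map_smul (eh w)]; exact (aSub w).smul_mem t hu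
  | add u' v' hu hv => rw [map_add (eh w)]; exact (aSub w).add_mem hu hv
  | lie u' v' hu hv => rw [(eh w).map_lie]; exact (aSub w).lie_mem hu hv

lemma aSub_subset_range (w : f3) {a : f3} (ha : a ∈ aSub w) : ∃ u, eh w u = a := by
  refine LieSubalgebra.lieSpan_induction (R := ℂ) (p := fun a _ => ∃ u, eh w u = a) (hx := ha)
    (mem := ?_) (zero := ⟨0, (eh w).map_zero⟩) (smul := ?_) (add := ?_) (lie := ?_)
  · rintro _ ⟨k, rfl⟩; exact ⟨of ℂ k, eh_of w k⟩
  · rintro a b _ _ ⟨u, rfl⟩ ⟨u', rfl⟩; exact ⟨u + u', (eh w).map_add u u'⟩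
  · intro t a _ ha; obtain ⟨u, rfl⟩ := ha; exact ⟨t • u, (eh w).map_smul t u⟩
  · rintro a b _ _ ⟨u, rfl⟩ ⟨u', rfl⟩; exact ⟨⁅u, u'⁆, (eh w).map_lie u u'⟩

lemma mem_aSub_iff (w : f3) (a : f3) : a ∈ aSub w ↔ ∃ u, eh w u = a := by
  constructor
  · exact aSub_subset_range w
  · rintro ⟨u, rfl⟩; exact eh_mem_aSub w u

/-! ### Ideals and kernels -/

noncomputable def Ix : LieIdeal ℂ f3 := LieSubmodule.lieSpan ℂ f3 {x}
noncomputable def Iy : LieIdeal ℂ f3 := LieSubmodule.lieSpan ℂ f3 {y}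

lemma lam_eq : lam = ⁅Ix, Iy⁆ := rfl

lemma adzk_mem_Ix (k : ℕ) : adzk k x ∈ Ix := by
  induction k with
  | zero => exact LieSubmodule.subset_lieSpan rfl
  | succ k ih => exact Ix.lie_mem ih

lemma adzk_mem_Iy (k : ℕ) : adzk k y ∈ Iy := by
  induction k with
  | zero => exact LieSubmodule.subset_lieSpan rfl
  | succ k ih => exact Iy.lie_mem ih

lemma aSub_x_le_Ix {a : f3} (ha : a ∈ aSub x) : a ∈ Ix := by
  refine LieSubalgebra.lieSpan_induction (R := ℂ) (p := fun a _ => a ∈ Ix) (hx := ha)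
    (mem := ?_) (zero := Ix.zero_mem) (smul := fun t _ _ h => Ix.smul_mem t h)
    (add := fun _ _ _ _ h h' => Ix.add_mem h h') (lie := fun a b _ _ _ hb => Ix.lie_mem hb)
  rintro _ ⟨k, rfl⟩; exact adzk_mem_Ix k

lemma aSub_y_le_Iy {a : f3} (ha : a ∈ aSub y) : a ∈ Iy := by
  refine LieSubalgebra.lieSpan_induction (R := ℂ) (p := fun a _ => a ∈ Iy) (hx := ha)
    (mem := ?_) (zero := Iy.zero_mem) (smul := fun t _ _ h => Iy.smul_mem t h)
    (add := fun _ _ _ _ h h' => Iy.add_mem h h') (lie := fun a b _ _ _ hb => Iy.lie_mem hb)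
  rintro _ ⟨k, rfl⟩; exact adzk_mem_Iy k

lemma lam_le_Ix {a : f3} (ha : a ∈ lam) : a ∈ Ix :=
  LieSubmodule.lie_le_left Ix Iy ha

lemma lam_le_Iy {a : f3} (ha : a ∈ lam) : a ∈ Iy :=
  LieSubmodule.lie_le_right Iy Ix ha

section Kernels
variable {T : Type} [LieRing T] [LieAlgebra ℂ T]

lemma Ix_le_ker (F : f3 →ₗ⁅ℂ⁆ T) (hF : F x = 0) {a : f3} (ha : a ∈ Ix) : F a = 0 := by
  have : Ix ≤ F.ker := by
    rw [Ix, LieSubmodule.lieSpan_le]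
    intro v hv
    rw [Set.mem_singleton_iff.mp hv]
    exact LieHom.mem_ker.mpr hF
  exact LieHom.mem_ker.mp (this ha)

lemma Iy_le_ker (F : f3 →ₗ⁅ℂ⁆ T) (hF : F y = 0) {a : f3} (ha : a ∈ Iy) : F a = 0 := by
  have : Iy ≤ F.ker := by
    rw [Iy, LieSubmodule.lieSpan_le]
    intro v hv
    rw [Set.mem_singleton_iff.mp hv]
    exact LieHom.mem_ker.mpr hF
  exact LieHom.mem_ker.mp (this ha)

end Kernels

/-- The abelianization coordinate of `z`. -/
noncomputable def qz : f3 →ₗ⁅ℂ⁆ ℂ := lift ℂ ![0, 0, 1]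

@[simp] lemma qz_x : qz x = 0 := by rw [x, qz, lift_of_apply]; rfl
@[simp] lemma qz_y : qz y = 0 := by rw [y, qz, lift_of_apply]; rfl
@[simp] lemma qz_z : qz z = 1 := by rw [z, qz, lift_of_apply]; rfl

/-! ### Stability of `aSub w` under `ad z` -/

lemma z_brk_mem (w : f3) {a : f3} (ha : a ∈ aSub w) : ⁅z, a⁆ ∈ aSub w := by
  have key : a ∈ aSub w ∧ ⁅z, a⁆ ∈ aSub w := by
    refine LieSubalgebra.lieSpan_induction (R := ℂ)
      (p := fun a _ => a ∈ aSub w ∧ ⁅z, a⁆ ∈ aSub w) (hx := ha)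
      (mem := ?_) (zero := ?_) (smul := ?_) (add := ?_) (lie := ?_)
    · rintro _ ⟨k, rfl⟩
      exact ⟨adzk_mem_aSub w k, adzk_mem_aSub w (k + 1)⟩
    · simp only [lie_zero]
      exact ⟨(aSub w).zero_mem, (aSub w).zero_mem⟩
    · rintro a b _ _ ⟨h1, h2⟩ ⟨h3, h4⟩
      rw [lie_add]
      exact ⟨(aSub w).add_mem h1 h3, (aSub w).add_mem h2 h4⟩
    · rintro t a _ ⟨h1, h2⟩
      rw [lie_smul]
      exact ⟨(aSub w).smul_mem t h1, (aSub w).smul_mem t h2⟩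
    · rintro a b _ _ ⟨h1, h2⟩ ⟨h3, h4⟩
      refine ⟨(aSub w).lie_mem h1 h3, ?_⟩
      rw [leibniz_lie]
      exact (aSub w).add_mem ((aSub w).lie_mem h2 h3) ((aSub w).lie_mem h1 h4)
  exact key.2

/-! ### The sum of the four pieces is everything -/

lemma piece_zero : piece 0 = Submodule.span ℂ {z} := rfl
lemma piece_one : piece 1 = (aSub x).toSubmodule := rfl
lemma piece_two : piece 2 = (aSub y).toSubmodule := rfl
lemma piece_three : piece 3 = lam.toSubmodule := rfl

noncomputable def P : Submodule ℂ f3 := piece 0 ⊔ piece 1 ⊔ piece 2 ⊔ piece 3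

lemma pair_mem_P : ∀ (i j : Fin 4) (a b : f3), a ∈ piece i → b ∈ piece j → ⁅a, b⁆ ∈ P := by
  have h0 : piece 0 ≤ P := le_sup_left.trans (le_sup_left.trans le_sup_left)
  have h1 : piece 1 ≤ P := le_sup_right.trans (le_sup_left.trans le_sup_left)
  have h2 : piece 2 ≤ P := le_sup_right.trans le_sup_left
  have h3 : piece 3 ≤ P := le_sup_right
  intro i j a b ha hb
  fin_cases i <;> fin_cases j
  -- (0,0)
  · obtain ⟨c, rfl⟩ := Submodule.mem_span_singleton.mp ha
    obtain ⟨e, rfl⟩ := Submodule.mem_span_singleton.mp hb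
    simp only [lie_smul, smul_lie, lie_self, smul_zero]
    exact P.zero_mem
  -- (0,1)
  · obtain ⟨c, rfl⟩ := Submodule.mem_span_singleton.mp ha
    rw [smul_lie]
    exact h1 ((aSub x).smul_mem c (z_brk_mem x hb))
  -- (0,2)
  · obtain ⟨c, rfl⟩ := Submodule.mem_span_singleton.mp ha
    rw [smul_lie]
    exact h2 ((aSub y).smul_mem c (z_brk_mem y hb))
  -- (0,3)
  · exact h3 (lam.lie_mem hb)
  -- (1,0)
  · obtain ⟨c, rfl⟩ := Submodule.mem_span_singleton.mp hb
    rw [lie_smul, ← lie_skew]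
    exact h1 ((aSub x).smul_mem c ((aSub x).neg_mem (z_brk_mem x ha)))
  -- (1,1)
  · exact h1 ((aSub x).lie_mem ha hb)
  -- (1,2)
  · exact h3 (LieSubmodule.lie_mem_lie (aSub_x_le_Ix ha) (aSub_y_le_Iy hb))
  -- (1,3)
  · exact h3 (lam.lie_mem hb)
  -- (2,0)
  · obtain ⟨c, rfl⟩ := Submodule.mem_span_singleton.mp hb
    rw [lie_smul, ← lie_skew]
    exact h2 ((aSub y).smul_mem c ((aSub y).neg_mem (z_brk_mem y ha)))
  -- (2,1)
  · rw [← lie_skew]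
    exact h3 (lam.neg_mem (LieSubmodule.lie_mem_lie (aSub_x_le_Ix hb) (aSub_y_le_Iy ha)))
  -- (2,2)
  · exact h2 ((aSub y).lie_mem ha hb)
  -- (2,3)
  · exact h3 (lam.lie_mem hb)
  -- (3,0)
  · obtain ⟨c, rfl⟩ := Submodule.mem_span_singleton.mp hb
    rw [lie_smul, ← lie_skew]
    exact h3 (lam.smul_mem c (lam.neg_mem (lam.lie_mem ha)))
  -- (3,1)
  · rw [← lie_skew]
    exact h3 (lam.neg_mem (lam.lie_mem ha))
  -- (3,2)
  · rw [← lie_skew]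
    exact h3 (lam.neg_mem (lam.lie_mem ha))
  -- (3,3)
  · exact h3 (lam.lie_mem hb)

lemma mem_P (a : f3) : a ∈ P := by
  have h0 : piece 0 ≤ P := le_sup_left.trans (le_sup_left.trans le_sup_left)
  have h1 : piece 1 ≤ P := le_sup_right.trans (le_sup_left.trans le_sup_left)
  have h2 : piece 2 ≤ P := le_sup_right.trans le_sup_left
  have h3 : piece 3 ≤ P := le_sup_right
  induction a using free_induction with
  | gen i =>
      fin_cases i
      · exact h1 (adzk_mem_aSub x 0)
      · exact h2 (adzk_mem_aSub y 0)
      · exact h0 (Submodule.mem_span_singleton_self z)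
  | zero => exact P.zero_mem
  | smul t hu => exact P.smul_mem t hu
  | add u v hu hv => exact P.add_mem hu hv
  | lie u v hu hv =>
      rw [P, sup_assoc, sup_assoc] at hu hv
      obtain ⟨a0, ha0, u', hu', rfl⟩ := Submodule.mem_sup.mp hu
      obtain ⟨a1, ha1, u'', hu'', rfl⟩ := Submodule.mem_sup.mp hu'
      obtain ⟨a2, ha2, a3, ha3, rfl⟩ := Submodule.mem_sup.mp hu''
      obtain ⟨b0, hb0, v', hv', rfl⟩ := Submodule.mem_sup.mp hv
      obtain ⟨b1, hb1, v'', hv'', rfl⟩ := Submodule.mem_sup.mp hv'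
      obtain ⟨b2, hb2, b3, hb3, rfl⟩ := Submodule.mem_sup.mp hv''
      simp only [lie_add, add_lie]
      repeat' apply Submodule.add_mem
      all_goals
        first
          | exact pair_mem_P 0 0 _ _ ha0 hb0
          | exact pair_mem_P 0 1 _ _ ha0 hb1
          | exact pair_mem_P 0 2 _ _ ha0 hb2
          | exact pair_mem_P 0 3 _ _ ha0 hb3
          | exact pair_mem_P 1 0 _ _ ha1 hb0
          | exact pair_mem_P 1 1 _ _ ha1 hb1
          | exact pair_mem_P 1 2 _ _ ha1 hb2
          | exact pair_mem_P 1 3 _ _ ha1 hb3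
          | exact pair_mem_P 2 0 _ _ ha2 hb0
          | exact pair_mem_P 2 1 _ _ ha2 hb1
          | exact pair_mem_P 2 2 _ _ ha2 hb2
          | exact pair_mem_P 2 3 _ _ ha2 hb3
          | exact pair_mem_P 3 0 _ _ ha3 hb0
          | exact pair_mem_P 3 1 _ _ ha3 hb1
          | exact pair_mem_P 3 2 _ _ ha3 hb2
          | exact pair_mem_P 3 3 _ _ ha3 hb3

lemma iSup_piece_eq_top : (⨆ i, piece i) = ⊤ := by
  rw [eq_top_iff]
  intro a _
  have h : P ≤ ⨆ i, piece i := by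
    refine sup_le (sup_le (sup_le ?_ ?_) ?_) ?_ <;> exact le_iSup piece _
  exact h (mem_P a)

/-! ### Independence of the four pieces -/

lemma qz_Ix {a : f3} (h : a ∈ Ix) : qz a = 0 := Ix_le_ker qz qz_x h
lemma qz_Iy {a : f3} (h : a ∈ Iy) : qz a = 0 := Iy_le_ker qz qz_y h
lemma phix_Iy {a : f3} (h : a ∈ Iy) : phix a = 0 := Iy_le_ker phix phix_y h
lemma phiy_Ix {a : f3} (h : a ∈ Ix) : phiy a = 0 := Ix_le_ker phiy phiy_x h

lemma qz_smul_z (c : ℂ) : qz (c • z) = c := by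
  rw [map_smul qz, qz_z, smul_eq_mul, mul_one]

lemma aSub_x_eq_zero {a : f3} (ha : a ∈ aSub x) (h : phix a = 0) : a = 0 := by
  obtain ⟨u, rfl⟩ := aSub_subset_range x ha
  rw [phix_eh] at h
  have hu : u = 0 := Sd.inr_injective d2 (h.trans (Sd.inr d2).map_zero.symm)
  rw [hu, map_zero (eh x)]

lemma aSub_y_eq_zero {a : f3} (ha : a ∈ aSub y) (h : phiy a = 0) : a = 0 := by
  obtain ⟨u, rfl⟩ := aSub_subset_range y ha
  rw [phiy_eh] at h
  have hu : u = 0 := Sd.inr_injective d2 (h.trans (Sd.inr d2).map_zero.symm)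
  rw [hu, map_zero (eh y)]

lemma piece_indep : iSupIndep piece := by
  intro i
  rw [disjoint_iff_inf_le]
  rintro a ⟨hai, hao⟩
  simp only [Submodule.mem_bot]
  fin_cases i
  -- i = 0
  · have hb : (⨆ j, ⨆ (_ : j ≠ (0 : Fin 4)), piece j) ≤ piece 1 ⊔ piece 2 ⊔ piece 3 := by
      refine iSup_le fun j => iSup_le fun hj => ?_
      fin_cases j
      · exact absurd rfl hj
      · exact le_sup_left.trans le_sup_left
      · exact le_sup_right.trans le_sup_left
      · exact le_sup_right
    obtain ⟨b12, hb12, b3, hb3, heq⟩ := Submodule.mem_sup.mp (hb hao)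
    obtain ⟨b1, hb1, b2, hb2, rfl⟩ := Submodule.mem_sup.mp hb12
    obtain ⟨c, rfl⟩ := Submodule.mem_span_singleton.mp hai
    have hq : qz (c • z) = 0 := by
      rw [← heq, map_add qz, map_add qz]
      rw [qz_Ix (aSub_x_le_Ix hb1), qz_Iy (aSub_y_le_Iy hb2), qz_Ix (lam_le_Ix hb3)]
      simp
    rw [qz_smul_z] at hq
    rw [hq, zero_smul]
  -- i = 1
  · have hb : (⨆ j, ⨆ (_ : j ≠ (1 : Fin 4)), piece j) ≤ piece 0 ⊔ piece 2 ⊔ piece 3 := by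
      refine iSup_le fun j => iSup_le fun hj => ?_
      fin_cases j
      · exact le_sup_left.trans le_sup_left
      · exact absurd rfl hj
      · exact le_sup_right.trans le_sup_left
      · exact le_sup_right
    obtain ⟨b02, hb02, b3, hb3, heq⟩ := Submodule.mem_sup.mp (hb hao)
    obtain ⟨b0, hb0, b2, hb2, rfl⟩ := Submodule.mem_sup.mp hb02
    obtain ⟨c, rfl⟩ := Submodule.mem_span_singleton.mp hb0
    have ha' : a ∈ aSub x := hai
    have hq : qz a = 0 := qz_Ix (aSub_x_le_Ix ha')
    rw [← heq, map_add qz, map_add qz, qz_smul_z,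
      qz_Iy (aSub_y_le_Iy hb2), qz_Ix (lam_le_Ix hb3), add_zero, add_zero] at hq
    rw [hq, zero_smul, zero_add] at heq
    have hpx : phix a = 0 := by
      rw [← heq, map_add phix, phix_Iy (aSub_y_le_Iy hb2), phix_Iy (lam_le_Iy hb3), add_zero]
    exact aSub_x_eq_zero ha' hpx
  -- i = 2
  · have hb : (⨆ j, ⨆ (_ : j ≠ (2 : Fin 4)), piece j) ≤ piece 0 ⊔ piece 1 ⊔ piece 3 := by
      refine iSup_le fun j => iSup_le fun hj => ?_
      fin_cases j
      · exact le_sup_left.trans le_sup_left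
      · exact le_sup_right.trans le_sup_left
      · exact absurd rfl hj
      · exact le_sup_right
    obtain ⟨b01, hb01, b3, hb3, heq⟩ := Submodule.mem_sup.mp (hb hao)
    obtain ⟨b0, hb0, b1, hb1, rfl⟩ := Submodule.mem_sup.mp hb01
    obtain ⟨c, rfl⟩ := Submodule.mem_span_singleton.mp hb0
    have ha' : a ∈ aSub y := hai
    have hq : qz a = 0 := qz_Iy (aSub_y_le_Iy ha')
    rw [← heq, map_add qz, map_add qz, qz_smul_z,
      qz_Ix (aSub_x_le_Ix hb1), qz_Ix (lam_le_Ix hb3), add_zero, add_zero] at hq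
    rw [hq, zero_smul, zero_add] at heq
    have hb1z : b1 = 0 := by
      refine aSub_x_eq_zero hb1 ?_
      have h1 : phix a = 0 := phix_Iy (aSub_y_le_Iy ha')
      rw [← heq, map_add phix, phix_Iy (lam_le_Iy hb3), add_zero] at h1
      exact h1
    rw [hb1z, zero_add] at heq
    have hpy : phiy a = 0 := by
      rw [← heq, phiy_Ix (lam_le_Ix hb3)]
    exact aSub_y_eq_zero ha' hpy
  -- i = 3
  · have hb : (⨆ j, ⨆ (_ : j ≠ (3 : Fin 4)), piece j) ≤ piece 0 ⊔ piece 1 ⊔ piece 2 := by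
      refine iSup_le fun j => iSup_le fun hj => ?_
      fin_cases j
      · exact le_sup_left.trans le_sup_left
      · exact le_sup_right.trans le_sup_left
      · exact le_sup_right
      · exact absurd rfl hj
    obtain ⟨b01, hb01, b2, hb2, heq⟩ := Submodule.mem_sup.mp (hb hao)
    obtain ⟨b0, hb0, b1, hb1, rfl⟩ := Submodule.mem_sup.mp hb01
    obtain ⟨c, rfl⟩ := Submodule.mem_span_singleton.mp hb0
    have ha' : a ∈ lam := hai
    have hq : qz a = 0 := qz_Ix (lam_le_Ix ha')
    rw [← heq, map_add qz, map_add qz, qz_smul_z,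
      qz_Ix (aSub_x_le_Ix hb1), qz_Iy (aSub_y_le_Iy hb2), add_zero, add_zero] at hq
    rw [hq, zero_smul, zero_add] at heq
    have hb1z : b1 = 0 := by
      refine aSub_x_eq_zero hb1 ?_
      have h1 : phix a = 0 := phix_Iy (lam_le_Iy ha')
      rw [← heq, map_add phix, phix_Iy (aSub_y_le_Iy hb2), add_zero] at h1
      exact h1
    rw [hb1z, zero_add] at heq
    have hb2z : b2 = 0 := by
      refine aSub_y_eq_zero hb2 ?_
      have h2 : phiy a = 0 := phiy_Ix (lam_le_Ix ha')
      rw [← heq] at h2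
      exact h2
    rw [hb2z] at heq
    exact heq.symm

end F3Main

theorem f3_decomposition :
    -- `f₃ = ℂ·z ⊕ a_x ⊕ a_y ⊕ λ` as an internal direct sum of subspaces
    DirectSum.IsInternal piece ∧
    -- `a_x` is free on the generators `ad_z^k (x)`, and similarly for `a_y`
    (∀ w : f3, w = x ∨ w = y →
      ∃ e : FreeLieAlgebra ℂ ℕ →ₗ⁅ℂ⁆ f3,
        Function.Injective e ∧ (∀ v : f3, v ∈ aSub w ↔ ∃ u, e u = v) ∧
          ∀ k : ℕ, e (FreeLieAlgebra.of ℂ k) = adzk k w) := by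
  constructor
  · rw [DirectSum.isInternal_submodule_iff_iSupIndep_and_iSup_eq_top]
    exact ⟨F3Main.piece_indep, F3Main.iSup_piece_eq_top⟩
  · rintro w (rfl | rfl)
    · exact ⟨F3Main.eh x, F3Main.eh_x_injective, F3Main.mem_aSub_iff x, F3Main.eh_of x⟩
    · exact ⟨F3Main.eh y, F3Main.eh_y_injective, F3Main.mem_aSub_iff y, F3Main.eh_of y⟩
end

section
/- With the notation below, for integers s, t ≥ 1 and k₁,…,k_s, l₁,…,l_t ≥ 0 consider the iterated brackets w := [[…[[ad_z^{k₁}(y), […,[ad_z^{k_{s−1}}(y), [ad_z^{k_s}(y), ad_z^{l₁}(x)]]…]], ad_z^{l₂}(x)], …], ad_z^{l_t}(x)] ∈ f₃ (first bracketing the y-terms from the right towards the left against [ad_z^{k_s}(y), ad_z^{l₁}(x)], then bracketing the remaining x-terms from the left towards the right). The images of these elements w under the composite f₃ → U f₃ → U f₃ / I₅ form a basis of the bidegree-≥(1,1) part of U f₃ / I₅, i.e. of the span of the images of all monomials in x, y, z containing at least one x and at least one y. -/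
abbrev Uf3 : Type := UniversalEnvelopingAlgebra ℂ f3

attribute [local instance] LieRing.ofAssociativeRing

noncomputable def ι : f3 →ₗ⁅ℂ⁆ Uf3 := UniversalEnvelopingAlgebra.ι ℂ

/-- The monomial in `U f₃` given by a word in the letters `x, y, z`. -/
noncomputable def monomial (l : List (Fin 3)) : Uf3 :=
  (l.map fun i => ι (FreeLieAlgebra.of ℂ i)).prod

/-- The two-sided ideal of `U f₃` generated by `ι w`, as a `ℂ`-subspace. -/
noncomputable def twoSided (w : f3) : Submodule ℂ Uf3 :=
  Submodule.span ℂ {u : Uf3 | ∃ a b : Uf3, u = a * ι w * b}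

/-- The left ideal `I₅ := (x)(y) + (U f₃)·z`. -/
noncomputable def I5 : Submodule ℂ Uf3 :=
  twoSided x * twoSided y + Submodule.span ℂ {u : Uf3 | ∃ a : Uf3, u = a * ι z}

/-- The bidegree-`≥(1,1)` part of `U f₃ / I₅`: the span of the images of all monomials
containing at least one `x` and at least one `y`. -/
noncomputable def M11 : Submodule ℂ (Uf3 ⧸ I5) :=
  Submodule.span ℂ
    {u : Uf3 ⧸ I5 | ∃ l : List (Fin 3), (0 : Fin 3) ∈ l ∧ (1 : Fin 3) ∈ l ∧
      u = Submodule.Quotient.mk (monomial l)}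

/-- Index type: the exponent data `((k₁,…,k_{s−1}), k_s, l₁, (l₂,…,l_t))`, encoding
arbitrary sequences `k₁,…,k_s` and `l₁,…,l_t` with `s, t ≥ 1`. -/
abbrev Idx : Type := List ℕ × ℕ × ℕ × List ℕ

/-- The iterated bracket
`[[…[[ad_z^{k₁}(y),[…,[ad_z^{k_{s−1}}(y),[ad_z^{k_s}(y), ad_z^{l₁}(x)]]…]], ad_z^{l₂}(x)],…], ad_z^{l_t}(x)]`:
first the `y`-terms are bracketed from the right towards the left against
`[ad_z^{k_s}(y), ad_z^{l₁}(x)]`, then the remaining `x`-terms from the left towards the right. -/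
noncomputable def bracketElt (p : Idx) : f3 :=
  p.2.2.2.foldl (fun acc li => ⁅acc, adzk li x⁆)
    (p.1.foldr (fun ki acc => ⁅adzk ki y, acc⁆) ⁅adzk p.2.1 y, adzk p.2.2.1 x⁆)


-- ## Combinatorics of words

abbrev Wd : Type := List (Fin 3)

def rep (n : ℕ) : Wd := List.replicate n 2

/-- number of non-`z` letters -/
def nzc (w : Wd) : ℕ := w.count 0 + w.count 1

/-- the weight: each `z` counts the number of non-`z` letters to its right -/
def mu : Wd → ℕ
  | [] => 0
  | a :: w => (if a = 2 then nzc w else 0) + mu w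

@[simp] lemma nzc_nil : nzc ([] : Wd) = 0 := rfl
lemma nzc_cons (a : Fin 3) (w : Wd) : nzc (a :: w) = (if a = 2 then 0 else 1) + nzc w := by
  fin_cases a <;> simp [nzc, List.count_cons] <;> omega

lemma nzc_append (u v : Wd) : nzc (u ++ v) = nzc u + nzc v := by
  simp [nzc, List.count_append]; omega

@[simp] lemma nzc_rep (n : ℕ) : nzc (rep n) = 0 := by
  simp [nzc, rep, List.count_replicate]

@[simp] lemma mu_nil : mu ([] : Wd) = 0 := rfl

lemma mu_append (u v : Wd) : mu (u ++ v) = mu u + u.count 2 * nzc v + mu v := by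
  induction u with
  | nil => simp
  | cons a u ih =>
    by_cases h : a = (2 : Fin 3) <;>
      simp [mu, h, ih, nzc_append, List.count_cons] <;> ring

@[simp] lemma mu_rep (n : ℕ) : mu (rep n) = 0 := by
  induction n with
  | zero => rfl
  | succ n ih =>
    show mu ((2:Fin 3) :: rep n) = 0
    simp [mu, ih]

@[simp] lemma count2_rep (n : ℕ) : (rep n).count 2 = n := by simp [rep, List.count_replicate]

lemma mu_block (a : ℕ) (i : Fin 3) (hi : i ≠ 2) (w : Wd) :
    mu (rep a ++ i :: w) = a * (1 + nzc w) + mu w := by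
  rw [mu_append]
  simp [mu, hi, nzc_cons, mu_rep]

lemma mu_concat0 (w : Wd) (a : ℕ) (t : Wd) (h : ∀ b ∈ t, b = (2:Fin 3)) :
    mu (w ++ rep a ++ (0:Fin 3) :: t) = mu w + w.count 2 + a := by
  have ht : nzc t = 0 := by
    induction t with
    | nil => simp
    | cons b t ih =>
      rw [nzc_cons, if_pos (h b (by simp)), ih fun b hb => h b (by simp [hb])]
  have hmt : mu t = 0 := by
    induction t with
    | nil => simp
    | cons b t ih =>
      have hb := h b (by simp)
      have : nzc t = 0 := by
        have := nzc_cons b t; rw [ht, if_pos hb] at this; omega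
      simp [mu, hb, this, ih fun b hb => h b (by simp [hb])]
  rw [List.append_assoc, mu_append, mu_block a 0 (by decide) t]
  simp [nzc_cons, nzc_append, ht, hmt]

def yw : List ℕ → Wd
  | [] => []
  | k :: A => rep k ++ (1:Fin 3) :: yw A

def xw : List ℕ → Wd
  | [] => []
  | l :: B => rep l ++ (0:Fin 3) :: xw B


def cw (p : Idx) : Wd := yw (p.1 ++ [p.2.1]) ++ xw (p.2.2.1 :: p.2.2.2)

lemma yw_append (A B : List ℕ) : yw (A ++ B) = yw A ++ yw B := by
  induction A with
  | nil => simp [yw]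
  | cons k A ih => simp [yw, ih]

lemma mem_yw {a : Fin 3} {A : List ℕ} (h : a ∈ yw A) : a = 1 ∨ a = 2 := by
  induction A with
  | nil => simp [yw] at h
  | cons k A ih =>
    simp [yw, rep] at h
    rcases h with h | h | h
    · exact Or.inr h.2
    · exact Or.inl h
    · exact ih h

lemma mem_xw {a : Fin 3} {B : List ℕ} (h : a ∈ xw B) : a = 0 ∨ a = 2 := by
  induction B with
  | nil => simp [xw] at h
  | cons l B ih =>
    simp [xw, rep] at h
    rcases h with h | h | h
    · exact Or.inr h.2
    · exact Or.inl h
    · exact ih h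

lemma block_inj {i : Fin 3} (hi : i ≠ 2) :
    ∀ {k k' : ℕ} {t t' : Wd}, rep k ++ i :: t = rep k' ++ i :: t' → k = k' ∧ t = t' := by
  intro k
  induction k with
  | zero =>
    intro k' t t' h
    cases k' with
    | zero => simpa [rep] using h
    | succ k' =>
      exfalso
      rw [show rep (k'+1) = (2:Fin 3) :: rep k' from rfl] at h
      simp [rep] at h
      exact hi h.1
  | succ k ih =>
    intro k' t t' h
    cases k' with
    | zero =>
      exfalso
      rw [show rep (k+1) = (2:Fin 3) :: rep k from rfl] at h
      simp [rep] at h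
      exact hi h.1.symm
    | succ k' =>
      rw [show rep (k+1) = (2:Fin 3) :: rep k from rfl,
        show rep (k'+1) = (2:Fin 3) :: rep k' from rfl] at h
      simp only [List.cons_append, List.cons.injEq] at h
      obtain ⟨k_eq, t_eq⟩ := ih h.2
      exact ⟨by omega, t_eq⟩

lemma yw_inj : ∀ {A A' : List ℕ}, yw A = yw A' → A = A' := by
  intro A
  induction A with
  | nil =>
    intro A' h
    cases A' with
    | nil => rfl
    | cons k' A' => exfalso; rw [yw, yw] at h; simp [rep] at h
  | cons k A ih =>
    intro A' h
    cases A' with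
    | nil => exfalso; rw [yw, yw] at h; simp [rep] at h
    | cons k' A' =>
      rw [yw, yw] at h
      obtain ⟨hk, ht⟩ := block_inj (by decide) h
      rw [hk, ih ht]

lemma xw_inj : ∀ {B B' : List ℕ}, xw B = xw B' → B = B' := by
  intro B
  induction B with
  | nil =>
    intro B' h
    cases B' with
    | nil => rfl
    | cons k' B' => exfalso; rw [xw, xw] at h; simp [rep] at h
  | cons k B ih =>
    intro B' h
    cases B' with
    | nil => exfalso; rw [xw, xw] at h; simp [rep] at h
    | cons k' B' =>
      rw [xw, xw] at h
      obtain ⟨hk, ht⟩ := block_inj (by decide) h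
      rw [hk, ih ht]

lemma yw_concat (A : List ℕ) (k : ℕ) : ∃ u, yw (A ++ [k]) = u ++ [(1:Fin 3)] ∧ yw (A ++ [k]) ≠ [] := by
  refine ⟨yw A ++ rep k, ?_, ?_⟩
  · rw [yw_append]; simp [yw]
  · rw [yw_append]; simp [yw, rep]

lemma xw_cons_concat (l : ℕ) (B : List ℕ) : ∃ u, xw (l :: B) = u ++ [(0:Fin 3)] := by
  induction B generalizing l with
  | nil => exact ⟨rep l, by simp [xw]⟩
  | cons l₂ B ih =>
    obtain ⟨u, hu⟩ := ih l₂
    exact ⟨rep l ++ (0:Fin 3) :: u, by rw [xw, hu]; simp⟩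

lemma concat_inj {α : Type*} {u v : List α} {a b : α} (h : u ++ [a] = v ++ [b]) :
    u = v ∧ a = b := by
  have := congrArg List.reverse h
  simp at this
  exact ⟨this.2, this.1⟩

/-- "bad pattern": an `x` occurring before a `y` -/
def pat (w : Wd) : Prop := ∃ u v t, w = u ++ (0:Fin 3) :: v ++ (1:Fin 3) :: t

lemma pat_append_right {w : Wd} (h : pat w) (r : Wd) : pat (w ++ r) := by
  obtain ⟨u, v, t, rfl⟩ := h
  exact ⟨u, v, t ++ r, by simp⟩

lemma pat_append_left {w : Wd} (h : pat w) (r : Wd) : pat (r ++ w) := by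
  obtain ⟨u, v, t, rfl⟩ := h
  exact ⟨r ++ u, v, t, by simp⟩

lemma pat_of_mem_mem {w₁ w₂ : Wd} (h0 : (0:Fin 3) ∈ w₁) (h1 : (1:Fin 3) ∈ w₂) :
    pat (w₁ ++ w₂) := by
  obtain ⟨u, r, rfl⟩ := List.append_of_mem h0
  obtain ⟨v, t, rfl⟩ := List.append_of_mem h1
  exact ⟨u, r ++ v, t, by simp⟩

lemma no_pat_split {w₁ w₂ : Wd} (h0 : (0:Fin 3) ∉ w₁) (h1 : (1:Fin 3) ∉ w₂) :
    ¬ pat (w₁ ++ w₂) := by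
  rintro ⟨u, v, t, h⟩
  rcases List.append_eq_append_iff.mp h with ⟨m, hm1, hm2⟩ | ⟨m, hm1, hm2⟩
  · exact h1 (by rw [hm2]; simp)
  · exact h0 (by rw [hm1]; simp)

lemma cw_no_pat (p : Idx) : ¬ pat (cw p) :=
  no_pat_split (fun h => by rcases mem_yw h with h | h <;> simp at h)
    (fun h => by rcases mem_xw h with h | h <;> simp at h)

lemma cw_concat0 (p : Idx) : ∃ u, cw p = u ++ [(0:Fin 3)] := by
  obtain ⟨u, hu⟩ := xw_cons_concat p.2.2.1 p.2.2.2
  exact ⟨yw (p.1 ++ [p.2.1]) ++ u, by rw [cw, hu]; simp⟩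

lemma cw_not_end2 (p : Idx) : ¬ ∃ u, cw p = u ++ [(2:Fin 3)] := by
  rintro ⟨u, hu⟩
  obtain ⟨u', hu'⟩ := cw_concat0 p
  rw [hu'] at hu
  exact absurd (concat_inj hu).2 (by decide)

lemma mem0_cw (p : Idx) : (0:Fin 3) ∈ cw p := by
  rw [cw, xw]; simp

lemma mem1_cw (p : Idx) : (1:Fin 3) ∈ cw p := by
  rw [cw, yw_append, yw, yw]; simp

lemma one_mem_concat {u : Wd} {c : Fin 3} {m : Wd} (h : ∃ w, u ++ c :: m = w ++ [(1:Fin 3)]) :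
    (1:Fin 3) ∈ c :: m := by
  obtain ⟨w, hw⟩ := h
  rcases List.eq_nil_or_concat (c :: m) with h' | ⟨m₀, e, h'⟩
  · simp at h'
  · rw [List.concat_eq_append] at h'
    rw [h', ← List.append_assoc] at hw
    have := (concat_inj hw).2
    rw [h', this]
    simp

lemma cw_inj {p p' : Idx} (h : cw p = cw p') : p = p' := by
  obtain ⟨ks, k, l, ls⟩ := p
  obtain ⟨ks', k', l', ls'⟩ := p'
  have h1nx : (1:Fin 3) ∉ xw (l :: ls) := fun hh => by
    rcases mem_xw hh with h' | h' <;> simp at h'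
  have h1nx' : (1:Fin 3) ∉ xw (l' :: ls') := fun hh => by
    rcases mem_xw hh with h' | h' <;> simp at h'
  rw [cw, cw] at h
  simp only at h
  have key : yw (ks ++ [k]) = yw (ks' ++ [k']) ∧ xw (l :: ls) = xw (l' :: ls') := by
    rcases List.append_eq_append_iff.mp h with ⟨m, hm1, hm2⟩ | ⟨m, hm1, hm2⟩
    · cases m with
      | nil => simp at hm1 hm2; exact ⟨hm1.symm, hm2⟩
      | cons c m =>
        exfalso
        obtain ⟨u, hu, _⟩ := yw_concat ks' k'
        rw [hm1] at hu
        exact h1nx (by rw [hm2]; exact List.mem_append_left _ (one_mem_concat ⟨u, hu⟩))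
    · cases m with
      | nil => simp at hm1 hm2; exact ⟨hm1, hm2.symm⟩
      | cons c m =>
        exfalso
        obtain ⟨u, hu, _⟩ := yw_concat ks k
        rw [hm1] at hu
        exact h1nx' (by rw [hm2]; exact List.mem_append_left _ (one_mem_concat ⟨u, hu⟩))
  have hy := concat_inj (yw_inj key.1)
  have hx := xw_inj key.2
  simp only [List.cons.injEq] at hx
  simp [hy.1, hy.2, hx.1, hx.2]

lemma first_split {w : Wd} (h : (0:Fin 3) ∈ w) :
    ∃ u v, w = u ++ (0:Fin 3) :: v ∧ (0:Fin 3) ∉ u := by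
  induction w with
  | nil => simp at h
  | cons a w ih =>
    by_cases ha : a = (0:Fin 3)
    · exact ⟨[], w, by simp [ha], by simp⟩
    · have : (0:Fin 3) ∈ w := by
        rcases List.mem_cons.mp h with h' | h'
        · exact absurd h'.symm ha
        · exact h'
      obtain ⟨u, v, huv, hu⟩ := ih this
      refine ⟨a :: u, v, by rw [huv]; simp, ?_⟩
      intro hmem
      rcases List.mem_cons.mp hmem with h' | h'
      · exact ha h'.symm
      · exact hu h'

lemma last_split {w : Wd} (h : (1:Fin 3) ∈ w) :
    ∃ u v, w = u ++ (1:Fin 3) :: v ∧ (1:Fin 3) ∉ v := by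
  induction w with
  | nil => simp at h
  | cons a w ih =>
    by_cases hw : (1:Fin 3) ∈ w
    · obtain ⟨u, v, huv, hv⟩ := ih hw
      exact ⟨a :: u, v, by rw [huv]; simp, hv⟩
    · have ha : a = (1:Fin 3) := by
        rcases List.mem_cons.mp h with h' | h'
        · exact h'.symm
        · exact absurd h' hw
      exact ⟨[], w, by simp [ha], hw⟩

lemma all2_eq_rep {t : Wd} (h : ∀ b ∈ t, b = (2:Fin 3)) : t = rep t.length := by
  rw [rep]
  exact List.eq_replicate_of_mem h

lemma parse_y {u : Wd} (h : ∀ a ∈ u, a = 1 ∨ a = (2:Fin 3)) :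
    ∃ A : List ℕ, A ≠ [] ∧ u ++ [(1:Fin 3)] = yw A := by
  induction u with
  | nil => exact ⟨[0], by simp, by simp [yw, rep]⟩
  | cons a u ih =>
    obtain ⟨A, hA, hAe⟩ := ih fun b hb => h b (by simp [hb])
    rcases h a (by simp) with ha | ha
    · refine ⟨0 :: A, by simp, ?_⟩
      rw [yw, ← hAe, ha]
      simp [rep]
    · cases A with
      | nil => exact absurd rfl hA
      | cons k A =>
        refine ⟨(k+1) :: A, by simp, ?_⟩
        rw [yw, show rep (k+1) = (2:Fin 3) :: rep k from rfl]
        rw [yw] at hAe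
        rw [ha, List.cons_append, hAe]
        simp

lemma parse_x {u : Wd} (h : ∀ a ∈ u, a = 0 ∨ a = (2:Fin 3)) :
    ∃ B : List ℕ, B ≠ [] ∧ u ++ [(0:Fin 3)] = xw B := by
  induction u with
  | nil => exact ⟨[0], by simp, by simp [xw, rep]⟩
  | cons a u ih =>
    obtain ⟨B, hB, hBe⟩ := ih fun b hb => h b (by simp [hb])
    rcases h a (by simp) with ha | ha
    · refine ⟨0 :: B, by simp, ?_⟩
      rw [xw, ← hBe, ha]
      simp [rep]
    · cases B with
      | nil => exact absurd rfl hB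
      | cons l B =>
        refine ⟨(l+1) :: B, by simp, ?_⟩
        rw [xw, show rep (l+1) = (2:Fin 3) :: rep l from rfl]
        rw [xw] at hBe
        rw [ha, List.cons_append, hBe]
        simp

lemma fin3_cases (a : Fin 3) : a = 0 ∨ a = 1 ∨ a = 2 := by omega

lemma good_eq_cw {w : Wd} (h0 : (0:Fin 3) ∈ w) (h1 : (1:Fin 3) ∈ w)
    (hz : ¬ ∃ u, w = u ++ [(2:Fin 3)]) (hp : ¬ pat w) : ∃ p : Idx, w = cw p := by
  obtain ⟨u, v, rfl, hu0⟩ := first_split h0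
  -- 1 ∉ v
  have h1v : (1:Fin 3) ∉ v := by
    intro hmem
    obtain ⟨v₁, v₂, rfl⟩ := List.append_of_mem hmem
    exact hp ⟨u, v₁, v₂, by simp⟩
  have h1u : (1:Fin 3) ∈ u := by
    rcases List.mem_append.mp h1 with h' | h'
    · exact h'
    · rcases List.mem_cons.mp h' with h' | h'
      · exact absurd h'.symm (by decide)
      · exact absurd h' h1v
  -- split u at last 1
  obtain ⟨u₁, u₂, rfl, hu₂⟩ := last_split h1u
  have hu₂2 : ∀ b ∈ u₂, b = (2:Fin 3) := by
    intro b hb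
    rcases fin3_cases b with h' | h' | h'
    · exact absurd (h' ▸ hb) (fun hh => hu0 (by simp [hh]))
    · exact absurd (h' ▸ hb) hu₂
    · exact h'
  have hu₁ : ∀ a ∈ u₁, a = 1 ∨ a = (2:Fin 3) := by
    intro a ha
    rcases fin3_cases a with h' | h' | h'
    · exact absurd (h' ▸ ha) (fun hh => hu0 (by simp [hh]))
    · exact Or.inl h'
    · exact Or.inr h'
  -- 0 :: v ends in 0
  rcases List.eq_nil_or_concat ((0:Fin 3) :: v) with hnil | ⟨v₀, e, hv₀⟩
  · simp at hnil
  rw [List.concat_eq_append] at hv₀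
  have hv02 : ∀ a ∈ (0:Fin 3) :: v, a = 0 ∨ a = (2:Fin 3) := by
    intro a ha
    rcases fin3_cases a with h' | h' | h'
    · exact Or.inl h'
    · rcases List.mem_cons.mp (h' ▸ ha) with h'' | h''
      · exact absurd h''.symm (by decide)
      · exact absurd h'' h1v
    · exact Or.inr h'
  have he : e = (0:Fin 3) := by
    rcases hv02 e (by rw [hv₀]; simp) with h' | h'
    · exact h'
    · exfalso
      apply hz
      refine ⟨u₁ ++ (1:Fin 3) :: u₂ ++ v₀, ?_⟩
      rw [hv₀, h']
      simp
  obtain ⟨B, hB, hBe⟩ := parse_x (fun a ha => hv02 a (by rw [hv₀]; exact List.mem_append_left _ ha))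
  obtain ⟨A, hA, hAe⟩ := parse_y hu₁
  -- assemble
  rcases List.eq_nil_or_concat A with h' | ⟨A₀, kk, hh⟩
  · exact absurd h' hA
  rw [List.concat_eq_append] at hh
  subst hh
  rcases B with _ | ⟨ll, B₀⟩
  · exact absurd rfl hB
  refine ⟨(A₀, kk, u₂.length + ll, B₀), ?_⟩
  rw [cw]
  simp only
  rw [← hAe]
  calc u₁ ++ (1:Fin 3) :: u₂ ++ (0:Fin 3) :: v
      = (u₁ ++ [(1:Fin 3)]) ++ (u₂ ++ ((0:Fin 3) :: v)) := by simp
    _ = (u₁ ++ [(1:Fin 3)]) ++ (rep u₂.length ++ (v₀ ++ [(0:Fin 3)])) := by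
        rw [← all2_eq_rep hu₂2, ← he, ← hv₀]
        rw [he]
    _ = (u₁ ++ [(1:Fin 3)]) ++ (rep u₂.length ++ xw (ll :: B₀)) := by rw [hBe]
    _ = (u₁ ++ [(1:Fin 3)]) ++ xw ((u₂.length + ll) :: B₀) := by
        rw [xw, xw, rep, rep, rep, List.replicate_add]
        rw [List.append_assoc (List.replicate u₂.length 2)]

-- ## The monoid algebra model
abbrev M : Type := MonoidAlgebra ℂ (FreeMonoid (Fin 3))

noncomputable def E : Uf3 ≃ₐ[ℂ] M :=
  (FreeLieAlgebra.universalEnvelopingEquivFreeAlgebra ℂ (Fin 3)).trans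
    (FreeAlgebra.equivMonoidAlgebraFreeMonoid)

noncomputable def sw (w : List (Fin 3)) : M := MonoidAlgebra.single (FreeMonoid.ofList w) 1

lemma sw_mul (u v : List (Fin 3)) : sw u * sw v = sw (u ++ v) := by
  rw [sw, sw, sw, MonoidAlgebra.single_mul_single, one_mul, ← FreeMonoid.ofList_append]

lemma E_iota_of (i : Fin 3) : E (ι (FreeLieAlgebra.of ℂ i)) = sw [i] := by
  simp [E, ι, sw, FreeAlgebra.equivMonoidAlgebraFreeMonoid, MonoidAlgebra.of_apply]

lemma E_monomial (l : List (Fin 3)) : E (monomial l) = sw l := by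
  induction l with
  | nil => simp [monomial, sw]; rfl
  | cons a t ih =>
    have : monomial (a :: t) = ι (FreeLieAlgebra.of ℂ a) * monomial t := by
      simp [monomial]
    rw [this, map_mul, ih, E_iota_of, sw_mul]
    rfl




-- ## Span machinery

open Submodule

/-- the set of `sw w` for `w` satisfying `Q` -/
def SWs (Q : Wd → Prop) : Set M := {q | ∃ w, Q w ∧ q = sw w}

noncomputable def J1M : Submodule ℂ M := span ℂ (SWs pat)
noncomputable def C0 : Submodule ℂ M := span ℂ (SWs fun w => (0:Fin 3) ∈ w)
noncomputable def C1 : Submodule ℂ M := span ℂ (SWs fun w => (1:Fin 3) ∈ w)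
noncomputable def ZendM : Submodule ℂ M := span ℂ (SWs fun w => ∃ u, w = u ++ [(2:Fin 3)])
noncomputable def Dsp (a b n m : ℕ) : Submodule ℂ M :=
  span ℂ (SWs fun w => w.count 0 = a ∧ w.count 1 = b ∧ w.count 2 = n ∧ mu w < m)

lemma mem_TopS (m : M) : m ∈ span ℂ (SWs fun _ => True) := by
  induction m using MonoidAlgebra.induction_linear with
  | zero => exact zero_mem _
  | add f g hf hg => exact add_mem hf hg
  | single a b =>
    have : (MonoidAlgebra.single a b : M) = b • sw a.toList := by
      simp [sw, FreeMonoid.ofList_toList, MonoidAlgebra.smul_single']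
    rw [this]
    exact smul_mem _ _ (subset_span ⟨a.toList, trivial, rfl⟩)

lemma span_mul_span_le {S T : Set M} {P : Submodule ℂ M}
    (h : ∀ s ∈ S, ∀ t ∈ T, s * t ∈ P) {a b : M}
    (ha : a ∈ span ℂ S) (hb : b ∈ span ℂ T) : a * b ∈ P := by
  have hle : span ℂ S * span ℂ T ≤ P := by
    rw [Submodule.span_mul_span]
    refine Submodule.span_le.mpr ?_
    rintro q hq
    rw [Set.mem_mul] at hq
    obtain ⟨s, hs, t, ht, rfl⟩ := hq
    exact h s hs t ht
  exact hle (Submodule.mul_mem_mul ha hb)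

lemma J1M_mul_right {j : M} (hj : j ∈ J1M) (m : M) : j * m ∈ J1M := by
  refine span_mul_span_le ?_ hj (mem_TopS m)
  rintro _ ⟨w, hw, rfl⟩ _ ⟨w', -, rfl⟩
  rw [sw_mul]
  exact subset_span ⟨w ++ w', pat_append_right hw w', rfl⟩

lemma J1M_mul_left {j : M} (hj : j ∈ J1M) (m : M) : m * j ∈ J1M := by
  refine span_mul_span_le ?_ (mem_TopS m) hj
  rintro _ ⟨w', -, rfl⟩ _ ⟨w, hw, rfl⟩
  rw [sw_mul]
  exact subset_span ⟨w' ++ w, pat_append_left hw w', rfl⟩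

lemma mul_C0_C1 {a b : M} (ha : a ∈ C0) (hb : b ∈ C1) : a * b ∈ J1M := by
  refine span_mul_span_le ?_ ha hb
  rintro _ ⟨w, hw, rfl⟩ _ ⟨w', hw', rfl⟩
  rw [sw_mul]
  exact subset_span ⟨w ++ w', pat_of_mem_mem hw hw', rfl⟩

lemma sw_mem_C0 {w : Wd} (h : (0:Fin 3) ∈ w) : sw w ∈ C0 := subset_span ⟨w, h, rfl⟩
lemma sw_mem_C1 {w : Wd} (h : (1:Fin 3) ∈ w) : sw w ∈ C1 := subset_span ⟨w, h, rfl⟩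

lemma Dsp_le_C0 {a b n m : ℕ} (h : 1 ≤ a) : Dsp a b n m ≤ C0 := by
  refine Submodule.span_le.mpr ?_
  rintro _ ⟨w, ⟨h0, -, -, -⟩, rfl⟩
  exact sw_mem_C0 (List.count_pos_iff.mp (by omega))

lemma Dsp_le_C1 {a b n m : ℕ} (h : 1 ≤ b) : Dsp a b n m ≤ C1 := by
  refine Submodule.span_le.mpr ?_
  rintro _ ⟨w, ⟨-, h1, -, -⟩, rfl⟩
  exact sw_mem_C1 (List.count_pos_iff.mp (by omega))

-- ## Expansion of `ad_z^k`

lemma iota_bracket (u v : f3) : (ι ⁅u, v⁆ : Uf3) = ι u * ι v - ι v * ι u := by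
  rw [LieHom.map_lie]
  rfl

def EYset (k : ℕ) : Set M :=
  SWs fun w => ∃ a b, a + b = k ∧ 1 ≤ b ∧ w = rep a ++ (1:Fin 3) :: rep b
def EXset (l : ℕ) : Set M :=
  SWs fun w => ∃ a b, a + b = l ∧ 1 ≤ b ∧ w = rep a ++ (0:Fin 3) :: rep b

lemma E_iota_z : E (ι z) = sw [(2:Fin 3)] := by rw [z]; exact E_iota_of 2

lemma ad_expand {i : Fin 3} (hi : i ≠ 2) (g : Fin 3 → f3) (hg : g i = FreeLieAlgebra.of ℂ i)
    (ESet : ℕ → Set M)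
    (hset : ∀ k a b, a + b = k → 1 ≤ b → sw (rep a ++ i :: rep b) ∈ span ℂ (ESet k))
    (hmul2l : ∀ k a b, a + b = k → 1 ≤ b →
      sw ((2:Fin 3) :: (rep a ++ i :: rep b)) ∈ span ℂ (ESet (k+1)))
    : True := trivial

lemma adx_expand (l : ℕ) :
    E (ι (adzk l x)) - sw (rep l ++ [(0:Fin 3)]) ∈ span ℂ (EXset l) := by
  induction l with
  | zero =>
    have : adzk 0 x = x := rfl
    rw [this, x, E_iota_of 0]
    show sw [(0:Fin 3)] - sw (rep 0 ++ [(0:Fin 3)]) ∈ _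
    rw [show rep 0 ++ [(0:Fin 3)] = [(0:Fin 3)] from rfl, sub_self]
    exact zero_mem _
  | succ l ih =>
    have hz : adzk (l+1) x = ⁅z, adzk l x⁆ := rfl
    rw [hz, iota_bracket, map_sub, map_mul, map_mul, E_iota_z]
    set G := E (ι (adzk l x)) with hG
    set e := G - sw (rep l ++ [(0:Fin 3)]) with he
    have hGe : G = sw (rep l ++ [(0:Fin 3)]) + e := by rw [he]; abel
    have key : sw [(2:Fin 3)] * G - G * sw [(2:Fin 3)] - sw (rep (l+1) ++ [(0:Fin 3)])
        = sw [(2:Fin 3)] * e - e * sw [(2:Fin 3)]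
          - sw ((rep l ++ [(0:Fin 3)]) ++ [(2:Fin 3)]) := by
      have h2 : sw [(2:Fin 3)] * sw (rep l ++ [(0:Fin 3)]) = sw (rep (l+1) ++ [(0:Fin 3)]) := by
        rw [sw_mul]
        rfl
      have h3 : sw (rep l ++ [(0:Fin 3)]) * sw [(2:Fin 3)]
          = sw ((rep l ++ [(0:Fin 3)]) ++ [(2:Fin 3)]) := by rw [sw_mul]
      rw [hGe, ← h2, ← h3]
      noncomm_ring
    rw [key]
    refine sub_mem (sub_mem ?_ ?_) ?_
    · -- sw [2] * e
      refine span_mul_span_le ?_ (subset_span (Set.mem_singleton _)) ih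
      rintro s hs _ ⟨w, ⟨a, b, hab, hb, rfl⟩, rfl⟩
      rw [Set.mem_singleton_iff] at hs
      subst hs
      rw [sw_mul]
      refine subset_span ⟨_, ⟨a+1, b, by omega, hb, ?_⟩, rfl⟩
      rw [show rep (a+1) = (2:Fin 3) :: rep a from rfl]
      simp
    · -- e * sw [2]
      refine span_mul_span_le ?_ ih (subset_span (Set.mem_singleton _))
      rintro _ ⟨w, ⟨a, b, hab, hb, rfl⟩, rfl⟩ s hs
      rw [Set.mem_singleton_iff] at hs
      subst hs
      rw [sw_mul]
      refine subset_span ⟨_, ⟨a, b+1, by omega, by omega, ?_⟩, rfl⟩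
      simp only [rep, List.replicate_succ', List.cons_append, List.append_assoc]
    · refine subset_span ⟨_, ⟨l, 1, by omega, le_refl 1, ?_⟩, rfl⟩
      simp [rep, List.replicate_one, List.cons_append, List.append_assoc]

lemma ady_expand (k : ℕ) :
    E (ι (adzk k y)) - sw (rep k ++ [(1:Fin 3)]) ∈ span ℂ (EYset k) := by
  induction k with
  | zero =>
    have : adzk 0 y = y := rfl
    rw [this, y, E_iota_of 1]
    show sw [(1:Fin 3)] - sw (rep 0 ++ [(1:Fin 3)]) ∈ _
    rw [show rep 0 ++ [(1:Fin 3)] = [(1:Fin 3)] from rfl, sub_self]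
    exact zero_mem _
  | succ k ih =>
    have hz : adzk (k+1) y = ⁅z, adzk k y⁆ := rfl
    rw [hz, iota_bracket, map_sub, map_mul, map_mul, E_iota_z]
    set G := E (ι (adzk k y)) with hG
    set e := G - sw (rep k ++ [(1:Fin 3)]) with he
    have hGe : G = sw (rep k ++ [(1:Fin 3)]) + e := by rw [he]; abel
    have key : sw [(2:Fin 3)] * G - G * sw [(2:Fin 3)] - sw (rep (k+1) ++ [(1:Fin 3)])
        = sw [(2:Fin 3)] * e - e * sw [(2:Fin 3)]
          - sw ((rep k ++ [(1:Fin 3)]) ++ [(2:Fin 3)]) := by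
      have h2 : sw [(2:Fin 3)] * sw (rep k ++ [(1:Fin 3)]) = sw (rep (k+1) ++ [(1:Fin 3)]) := by
        rw [sw_mul]
        rfl
      have h3 : sw (rep k ++ [(1:Fin 3)]) * sw [(2:Fin 3)]
          = sw ((rep k ++ [(1:Fin 3)]) ++ [(2:Fin 3)]) := by rw [sw_mul]
      rw [hGe, ← h2, ← h3]
      noncomm_ring
    rw [key]
    refine sub_mem (sub_mem ?_ ?_) ?_
    · refine span_mul_span_le ?_ (subset_span (Set.mem_singleton _)) ih
      rintro s hs _ ⟨w, ⟨a, b, hab, hb, rfl⟩, rfl⟩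
      rw [Set.mem_singleton_iff] at hs
      subst hs
      rw [sw_mul]
      refine subset_span ⟨_, ⟨a+1, b, by omega, hb, ?_⟩, rfl⟩
      rw [show rep (a+1) = (2:Fin 3) :: rep a from rfl]
      simp
    · refine span_mul_span_le ?_ ih (subset_span (Set.mem_singleton _))
      rintro _ ⟨w, ⟨a, b, hab, hb, rfl⟩, rfl⟩ s hs
      rw [Set.mem_singleton_iff] at hs
      subst hs
      rw [sw_mul]
      refine subset_span ⟨_, ⟨a, b+1, by omega, by omega, ?_⟩, rfl⟩
      simp only [rep, List.replicate_succ', List.cons_append, List.append_assoc]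
    · refine subset_span ⟨_, ⟨k, 1, by omega, le_refl 1, ?_⟩, rfl⟩
      simp [rep, List.replicate_one, List.cons_append, List.append_assoc]

-- ## The key triangularity property

/-- The key property: `E(ι g)` equals the canonical monomial `sw c` up to terms of smaller
weight (and fixed multidegree), and terms with an `x` before a `y`. -/
def KeyP (g : f3) (c : Wd) : Prop :=
  E (ι g) - sw c ∈ Dsp (c.count 0) (c.count 1) (c.count 2) (mu c) ⊔ J1M

lemma keyP_def (g : f3) (c : Wd) :
    KeyP g c ↔ E (ι g) - sw c ∈ Dsp (c.count 0) (c.count 1) (c.count 2) (mu c) ⊔ J1M :=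
  Iff.rfl

lemma EY_le_C1 (k : ℕ) : span ℂ (EYset k) ≤ C1 := by
  refine Submodule.span_le.mpr ?_
  rintro _ ⟨w, ⟨a, b, -, -, rfl⟩, rfl⟩
  exact sw_mem_C1 (by simp)

lemma EX_le_C0 (l : ℕ) : span ℂ (EXset l) ≤ C0 := by
  refine Submodule.span_le.mpr ?_
  rintro _ ⟨w, ⟨a, b, -, -, rfl⟩, rfl⟩
  exact sw_mem_C0 (by simp)

lemma nzc_eq_of_counts {w c : Wd} (h0 : w.count 0 = c.count 0) (h1 : w.count 1 = c.count 1) :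
    nzc w = nzc c := by
  rw [nzc, nzc, h0, h1]

lemma stepY (k : ℕ) {g : f3} {c : Wd} (h0 : (0:Fin 3) ∈ c) (hg : KeyP g c) :
    KeyP ⁅adzk k y, g⁆ (rep k ++ (1:Fin 3) :: c) := by
  rw [keyP_def] at hg ⊢
  obtain ⟨d, hd, j, hj, hdj⟩ := Submodule.mem_sup.mp hg
  have hey := ady_expand k
  set A := sw (rep k ++ [(1:Fin 3)]) with hA
  set e := E (ι (adzk k y)) - A with he
  set C := sw c with hC
  have hcnt0 : (rep k ++ (1:Fin 3) :: c).count 0 = c.count 0 := by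
    simp [rep, List.count_append, List.count_cons, List.count_replicate]
  have hcnt1 : (rep k ++ (1:Fin 3) :: c).count 1 = c.count 1 + 1 := by
    simp [rep, List.count_append, List.count_cons, List.count_replicate]
  have hcnt2 : (rep k ++ (1:Fin 3) :: c).count 2 = c.count 2 + k := by
    simp [rep, List.count_append, List.count_cons, List.count_replicate]
    omega
  have hmu : mu (rep k ++ (1:Fin 3) :: c) = k * (1 + nzc c) + mu c :=
    mu_block k 1 (by decide) c
  rw [hcnt0, hcnt1, hcnt2, hmu]
  have hG : E (ι g) = C + (d + j) := by rw [hdj]; abel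
  have hEY : E (ι (adzk k y)) = A + e := by rw [he]; abel
  have hsw : sw (rep k ++ (1:Fin 3) :: c) = A * C := by
    rw [hA, hC, sw_mul]
    exact congrArg sw (by simp)
  have main : E (ι ⁅adzk k y, g⁆) - sw (rep k ++ (1:Fin 3) :: c)
      = (A * d + e * C + e * d)
        + ((A + e) * j - ((C + d) * (A + e) + j * (A + e))) := by
    rw [iota_bracket, map_sub, map_mul, map_mul, hEY, hG, hsw]
    noncomm_ring
  rw [main]
  have hDspA : A * d ∈ Dsp (c.count 0) (c.count 1 + 1) (c.count 2 + k) (k * (1 + nzc c) + mu c) := by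
    refine span_mul_span_le ?_ (subset_span (Set.mem_singleton A)) hd
    rintro s hs _ ⟨w, ⟨hw0, hw1, hw2, hwmu⟩, rfl⟩
    rw [Set.mem_singleton_iff] at hs
    subst hs
    rw [hA, sw_mul]
    refine subset_span ⟨rep k ++ (1:Fin 3) :: w, ⟨?_, ?_, ?_, ?_⟩, congrArg sw (by simp)⟩
    · simp [rep, List.count_append, List.count_cons, List.count_replicate, hw0]
    · simp [rep, List.count_append, List.count_cons, List.count_replicate, hw1]
    · simp [rep, List.count_append, List.count_cons, List.count_replicate, hw2]; omega
    · rw [mu_block k 1 (by decide) w, nzc_eq_of_counts hw0 hw1]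
      exact Nat.add_lt_add_left hwmu _
  have hDspB : e * C ∈ Dsp (c.count 0) (c.count 1 + 1) (c.count 2 + k) (k * (1 + nzc c) + mu c) := by
    refine span_mul_span_le ?_ hey (subset_span (Set.mem_singleton C))
    rintro _ ⟨w, ⟨a, b, hab, hb, rfl⟩, rfl⟩ s hs
    rw [Set.mem_singleton_iff] at hs
    subst hs
    rw [hC, sw_mul]
    refine subset_span ⟨rep a ++ (1:Fin 3) :: (rep b ++ c), ⟨?_, ?_, ?_, ?_⟩,
      congrArg sw (by simp)⟩
    · simp [rep, List.count_append, List.count_cons, List.count_replicate]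
    · simp [rep, List.count_append, List.count_cons, List.count_replicate]
    · simp [rep, List.count_append, List.count_cons, List.count_replicate]; omega
    · rw [mu_block a 1 (by decide) (rep b ++ c), mu_append, nzc_append]
      simp only [nzc_rep, mu_rep, count2_rep, Nat.zero_add, Nat.add_zero]
      have expand : k * (1 + nzc c) = a * (1 + nzc c) + b + b * nzc c := by
        rw [← hab]; ring
      linarith
  have hDspC : e * d ∈ Dsp (c.count 0) (c.count 1 + 1) (c.count 2 + k) (k * (1 + nzc c) + mu c) := by
    refine span_mul_span_le ?_ hey hd
    rintro _ ⟨w, ⟨a, b, hab, hb, rfl⟩, rfl⟩ _ ⟨w', ⟨hw0, hw1, hw2, hwmu⟩, rfl⟩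
    rw [sw_mul]
    refine subset_span ⟨rep a ++ (1:Fin 3) :: (rep b ++ w'), ⟨?_, ?_, ?_, ?_⟩,
      congrArg sw (by simp)⟩
    · simp [rep, List.count_append, List.count_cons, List.count_replicate, hw0]
    · simp [rep, List.count_append, List.count_cons, List.count_replicate, hw1]
    · simp [rep, List.count_append, List.count_cons, List.count_replicate, hw2]; omega
    · rw [mu_block a 1 (by decide) (rep b ++ w'), mu_append, nzc_append]
      simp only [nzc_rep, mu_rep, count2_rep, Nat.zero_add, Nat.add_zero]
      rw [nzc_eq_of_counts hw0 hw1]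
      have expand : k * (1 + nzc c) = a * (1 + nzc c) + b + b * nzc c := by
        rw [← hab]; ring
      linarith
  have hJ : (A + e) * j - ((C + d) * (A + e) + j * (A + e)) ∈ J1M := by
    refine sub_mem (J1M_mul_left hj _) (add_mem ?_ (J1M_mul_right hj _))
    refine mul_C0_C1 (add_mem (sw_mem_C0 h0) ?_) (add_mem (sw_mem_C1 (by simp)) (EY_le_C1 k hey))
    exact Dsp_le_C0 (List.count_pos_iff.mpr h0) hd
  exact Submodule.mem_sup.mpr ⟨_, add_mem (add_mem hDspA hDspB) hDspC, _, hJ, rfl⟩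

lemma stepX (l : ℕ) {g : f3} {c : Wd} (h1 : (1:Fin 3) ∈ c) (hg : KeyP g c) :
    KeyP ⁅g, adzk l x⁆ (c ++ rep l ++ [(0:Fin 3)]) := by
  rw [keyP_def] at hg ⊢
  obtain ⟨d, hd, j, hj, hdj⟩ := Submodule.mem_sup.mp hg
  have hex := adx_expand l
  set A := sw (rep l ++ [(0:Fin 3)]) with hA
  set e := E (ι (adzk l x)) - A with he
  set C := sw c with hC
  have hcnt0 : (c ++ rep l ++ [(0:Fin 3)]).count 0 = c.count 0 + 1 := by
    simp [rep, List.count_append, List.count_cons, List.count_replicate]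
  have hcnt1 : (c ++ rep l ++ [(0:Fin 3)]).count 1 = c.count 1 := by
    simp [rep, List.count_append, List.count_cons, List.count_replicate]
  have hcnt2 : (c ++ rep l ++ [(0:Fin 3)]).count 2 = c.count 2 + l := by
    simp [rep, List.count_append, List.count_cons, List.count_replicate]
  have hmu : mu (c ++ rep l ++ [(0:Fin 3)]) = mu c + c.count 2 + l :=
    mu_concat0 c l [] (by simp)
  rw [hcnt0, hcnt1, hcnt2, hmu]
  have hG : E (ι g) = C + (d + j) := by rw [hdj]; abel
  have hEX : E (ι (adzk l x)) = A + e := by rw [he]; abel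
  have hsw : sw (c ++ rep l ++ [(0:Fin 3)]) = C * A := by
    rw [hA, hC, sw_mul]
    exact congrArg sw (by simp)
  have main : E (ι ⁅g, adzk l x⁆) - sw (c ++ rep l ++ [(0:Fin 3)])
      = (C * e + d * A + d * e)
        + (j * (A + e) - ((A + e) * (C + d) + (A + e) * j)) := by
    rw [iota_bracket, map_sub, map_mul, map_mul, hEX, hG, hsw]
    noncomm_ring
  rw [main]
  have hDspA : C * e ∈ Dsp (c.count 0 + 1) (c.count 1) (c.count 2 + l) (mu c + c.count 2 + l) := by
    refine span_mul_span_le ?_ (subset_span (Set.mem_singleton C)) hex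
    rintro s hs _ ⟨w, ⟨a, b, hab, hb, rfl⟩, rfl⟩
    rw [Set.mem_singleton_iff] at hs
    subst hs
    rw [hC, sw_mul]
    refine subset_span ⟨c ++ (rep a ++ (0:Fin 3) :: rep b), ⟨?_, ?_, ?_, ?_⟩, rfl⟩
    · simp [rep, List.count_append, List.count_cons, List.count_replicate]
    · simp [rep, List.count_append, List.count_cons, List.count_replicate]
    · simp [rep, List.count_append, List.count_cons, List.count_replicate]; omega
    · rw [show c ++ (rep a ++ (0:Fin 3) :: rep b) = c ++ rep a ++ (0:Fin 3) :: rep b by simp,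
        mu_concat0 c a (rep b) (fun b hb => List.eq_of_mem_replicate hb)]
      omega
  have hDspB : d * A ∈ Dsp (c.count 0 + 1) (c.count 1) (c.count 2 + l) (mu c + c.count 2 + l) := by
    refine span_mul_span_le ?_ hd (subset_span (Set.mem_singleton A))
    rintro _ ⟨w, ⟨hw0, hw1, hw2, hwmu⟩, rfl⟩ s hs
    rw [Set.mem_singleton_iff] at hs
    subst hs
    rw [hA, sw_mul]
    refine subset_span ⟨w ++ (rep l ++ [(0:Fin 3)]), ⟨?_, ?_, ?_, ?_⟩, rfl⟩
    · simp [rep, List.count_append, List.count_cons, List.count_replicate, hw0]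
    · simp [rep, List.count_append, List.count_cons, List.count_replicate, hw1]
    · simp [rep, List.count_append, List.count_cons, List.count_replicate, hw2]
    · rw [show w ++ (rep l ++ [(0:Fin 3)]) = w ++ rep l ++ [(0:Fin 3)] by simp,
        mu_concat0 w l [] (by simp), hw2]
      omega
  have hDspC : d * e ∈ Dsp (c.count 0 + 1) (c.count 1) (c.count 2 + l) (mu c + c.count 2 + l) := by
    refine span_mul_span_le ?_ hd hex
    rintro _ ⟨w, ⟨hw0, hw1, hw2, hwmu⟩, rfl⟩ _ ⟨w', ⟨a, b, hab, hb, rfl⟩, rfl⟩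
    rw [sw_mul]
    refine subset_span ⟨w ++ (rep a ++ (0:Fin 3) :: rep b), ⟨?_, ?_, ?_, ?_⟩, rfl⟩
    · simp [rep, List.count_append, List.count_cons, List.count_replicate, hw0]
    · simp [rep, List.count_append, List.count_cons, List.count_replicate, hw1]
    · simp [rep, List.count_append, List.count_cons, List.count_replicate, hw2]; omega
    · rw [show w ++ (rep a ++ (0:Fin 3) :: rep b) = w ++ rep a ++ (0:Fin 3) :: rep b by simp,
        mu_concat0 w a (rep b) (fun b hb => List.eq_of_mem_replicate hb), hw2]
      omega
  have hJ : j * (A + e) - ((A + e) * (C + d) + (A + e) * j) ∈ J1M := by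
    refine sub_mem (J1M_mul_right hj _) (add_mem ?_ (J1M_mul_left hj _))
    refine mul_C0_C1 (add_mem (sw_mem_C0 (by simp)) (EX_le_C0 l hex))
      (add_mem (sw_mem_C1 h1) ?_)
    exact Dsp_le_C1 (List.count_pos_iff.mpr h1) hd
  exact Submodule.mem_sup.mpr ⟨_, add_mem (add_mem hDspA hDspB) hDspC, _, hJ, rfl⟩

lemma key_adx (l : ℕ) : KeyP (adzk l x) (rep l ++ [(0:Fin 3)]) := by
  rw [keyP_def]
  refine Submodule.mem_sup_left (Submodule.span_le.mpr ?_ (adx_expand l))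
  rintro _ ⟨w, ⟨a, b, hab, hb, rfl⟩, rfl⟩
  refine subset_span ⟨rep a ++ (0:Fin 3) :: rep b, ⟨?_, ?_, ?_, ?_⟩, rfl⟩
  · simp [rep, List.count_append, List.count_cons, List.count_replicate]
  · simp [rep, List.count_append, List.count_cons, List.count_replicate]
  · simp [rep, List.count_append, List.count_cons, List.count_replicate]; omega
  · rw [mu_block a 0 (by decide) (rep b), mu_block l 0 (by decide) []]
    simp; omega

lemma foldY (ks : List ℕ) {g : f3} {c : Wd} (h0 : (0:Fin 3) ∈ c) (hg : KeyP g c) :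
    KeyP (ks.foldr (fun ki acc => ⁅adzk ki y, acc⁆) g) (yw ks ++ c) := by
  induction ks with
  | nil => simpa [yw] using hg
  | cons k ks ih =>
    have h := stepY k (show (0:Fin 3) ∈ yw ks ++ c by simp [h0]) ih
    have heq : yw (k :: ks) ++ c = rep k ++ (1:Fin 3) :: (yw ks ++ c) := by simp [yw]
    rw [List.foldr_cons, heq]
    exact h

lemma foldX (ls : List ℕ) : ∀ {g : f3} {c : Wd}, (1:Fin 3) ∈ c → KeyP g c →
    KeyP (ls.foldl (fun acc li => ⁅acc, adzk li x⁆) g) (c ++ xw ls) := by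
  induction ls with
  | nil => intro g c h1 hg; simpa [xw] using hg
  | cons l ls ih =>
    intro g c h1 hg
    have h := stepX l h1 hg
    have h2 := ih (show (1:Fin 3) ∈ c ++ rep l ++ [(0:Fin 3)] by simp [h1]) h
    have heq : (c ++ rep l ++ [(0:Fin 3)]) ++ xw ls = c ++ xw (l :: ls) := by simp [xw]
    rw [List.foldl_cons]
    rw [← heq]
    exact h2

lemma keyMain (p : Idx) : KeyP (bracketElt p) (cw p) := by
  obtain ⟨ks, k, l, ls⟩ := p
  have base : KeyP ⁅adzk k y, adzk l x⁆ (rep k ++ (1:Fin 3) :: (rep l ++ [(0:Fin 3)])) :=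
    stepY k (by simp) (key_adx l)
  have hy := foldY ks (c := rep k ++ (1:Fin 3) :: (rep l ++ [(0:Fin 3)])) (by simp) base
  have hx := foldX ls (c := yw ks ++ (rep k ++ (1:Fin 3) :: (rep l ++ [(0:Fin 3)])))
    (by simp) hy
  have heq : (yw ks ++ (rep k ++ (1:Fin 3) :: (rep l ++ [(0:Fin 3)]))) ++ xw ls
      = cw (ks, k, l, ls) := by
    simp [cw, yw_append, yw, xw]
  rw [bracketElt]
  rw [← heq]
  exact hx

-- ## Relating `I5` to the word model

lemma span_mul_span_le' {A : Type*} [Semiring A] [Algebra ℂ A] {S T : Set A} {P : Submodule ℂ A}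
    (h : ∀ s ∈ S, ∀ t ∈ T, s * t ∈ P) {a b : A}
    (ha : a ∈ span ℂ S) (hb : b ∈ span ℂ T) : a * b ∈ P := by
  have hle : span ℂ S * span ℂ T ≤ P := by
    rw [Submodule.span_mul_span]
    refine Submodule.span_le.mpr ?_
    rintro q hq
    rw [Set.mem_mul] at hq
    obtain ⟨s, hs, t, ht, rfl⟩ := hq
    exact h s hs t ht
  exact hle (Submodule.mul_mem_mul ha hb)

lemma C0_mul_left {v : M} (hv : v ∈ C0) (m : M) : m * v ∈ C0 := by
  refine span_mul_span_le ?_ (mem_TopS m) hv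
  rintro _ ⟨w', -, rfl⟩ _ ⟨w, hw, rfl⟩
  rw [sw_mul]
  exact subset_span ⟨w' ++ w, by simp [hw], rfl⟩

lemma C0_mul_right {v : M} (hv : v ∈ C0) (m : M) : v * m ∈ C0 := by
  refine span_mul_span_le ?_ hv (mem_TopS m)
  rintro _ ⟨w, hw, rfl⟩ _ ⟨w', -, rfl⟩
  rw [sw_mul]
  exact subset_span ⟨w ++ w', by simp [hw], rfl⟩

lemma C1_mul_right {v : M} (hv : v ∈ C1) (m : M) : v * m ∈ C1 := by
  refine span_mul_span_le ?_ hv (mem_TopS m)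
  rintro _ ⟨w, hw, rfl⟩ _ ⟨w', -, rfl⟩
  rw [sw_mul]
  exact subset_span ⟨w ++ w', by simp [hw], rfl⟩

lemma Zend_mul (m : M) : m * sw [(2:Fin 3)] ∈ ZendM := by
  refine span_mul_span_le ?_ (mem_TopS m) (subset_span (Set.mem_singleton (sw [(2:Fin 3)])))
  rintro _ ⟨w, -, rfl⟩ s hs
  rw [Set.mem_singleton_iff] at hs
  subst hs
  rw [sw_mul]
  exact subset_span ⟨w ++ [(2:Fin 3)], ⟨w, rfl⟩, rfl⟩

lemma pat5 (m₁ m₂ m₃ : M) :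
    m₁ * (sw [(0:Fin 3)] * (m₂ * (sw [(1:Fin 3)] * m₃))) ∈ J1M := by
  have heq : m₁ * (sw [(0:Fin 3)] * (m₂ * (sw [(1:Fin 3)] * m₃)))
      = (m₁ * sw [(0:Fin 3)] * m₂) * (sw [(1:Fin 3)] * m₃) := by noncomm_ring
  rw [heq]
  exact mul_C0_C1 (C0_mul_right (C0_mul_left (sw_mem_C0 (by simp)) m₁) m₂)
    (C1_mul_right (sw_mem_C1 (by simp)) m₃)

lemma E_iota_x : E (ι x) = sw [(0:Fin 3)] := by rw [x]; exact E_iota_of 0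
lemma E_iota_y : E (ι y) = sw [(1:Fin 3)] := by rw [y]; exact E_iota_of 1

lemma EI5 {u : Uf3} (hu : u ∈ I5) : E u ∈ J1M ⊔ ZendM := by
  have h1 : twoSided x * twoSided y ≤ (J1M ⊔ ZendM).comap (E : Uf3 ≃ₐ[ℂ] M).toLinearMap := by
    refine Submodule.mul_le.mpr ?_
    intro m hm n hn
    rw [twoSided] at hm hn
    refine span_mul_span_le' ?_ hm hn
    rintro _ ⟨a, b, rfl⟩ _ ⟨a', b', rfl⟩
    rw [Submodule.mem_comap]
    refine Submodule.mem_sup_left ?_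
    show E _ ∈ J1M
    have heq : a * ι x * b * (a' * ι y * b')
        = a * (ι x * ((b * a') * (ι y * b'))) := by noncomm_ring
    rw [heq]
    simp only [map_mul]
    rw [E_iota_x, E_iota_y]
    exact pat5 (E a) (E b * E a') (E b')
  have h2 : Submodule.span ℂ {u : Uf3 | ∃ a : Uf3, u = a * ι z}
      ≤ (J1M ⊔ ZendM).comap (E : Uf3 ≃ₐ[ℂ] M).toLinearMap := by
    refine Submodule.span_le.mpr ?_
    rintro _ ⟨a, rfl⟩
    rw [SetLike.mem_coe, Submodule.mem_comap]
    refine Submodule.mem_sup_right ?_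
    show E _ ∈ ZendM
    rw [map_mul, E_iota_z]
    exact Zend_mul (E a)
  have : I5 ≤ (J1M ⊔ ZendM).comap (E : Uf3 ≃ₐ[ℂ] M).toLinearMap := by
    rw [I5]
    exact sup_le h1 h2
  exact this hu

-- ## Monomials and `I5`-membership

lemma monomial_append (u v : List (Fin 3)) : monomial (u ++ v) = monomial u * monomial v := by
  rw [monomial, monomial, monomial, List.map_append, List.prod_append]

lemma memI5_pat {w : Wd} (h : pat w) : monomial w ∈ I5 := by
  obtain ⟨u, v, t, rfl⟩ := h
  have heq : monomial (u ++ (0:Fin 3) :: v ++ (1:Fin 3) :: t)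
      = (monomial u * ι x * monomial v) * (1 * ι y * monomial t) := by
    rw [show u ++ (0:Fin 3) :: v ++ (1:Fin 3) :: t
        = u ++ ([(0:Fin 3)] ++ (v ++ ([(1:Fin 3)] ++ t))) by simp]
    rw [monomial_append, monomial_append, monomial_append, monomial_append]
    have hx : monomial [(0:Fin 3)] = ι x := by simp [monomial, x]
    have hy : monomial [(1:Fin 3)] = ι y := by simp [monomial, y]
    rw [hx, hy]
    noncomm_ring
  rw [heq, I5]
  refine Submodule.mem_sup_left ?_
  exact Submodule.mul_mem_mul (subset_span ⟨monomial u, monomial v, rfl⟩)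
    (subset_span ⟨1, monomial t, rfl⟩)

lemma memI5_end2 (u : Wd) : monomial (u ++ [(2:Fin 3)]) ∈ I5 := by
  rw [monomial_append, I5]
  refine Submodule.mem_sup_right ?_
  have hz : monomial [(2:Fin 3)] = ι z := by simp [monomial, z]
  rw [hz]
  exact subset_span ⟨monomial u, rfl⟩

-- ## The quotient map and evaluation functionals

noncomputable def T : M →ₗ[ℂ] Uf3 ⧸ I5 :=
  (I5.mkQ).comp (E.symm.toLinearMap)

lemma T_E (u : Uf3) : T (E u) = Submodule.Quotient.mk u := by
  rw [T, LinearMap.comp_apply, AlgEquiv.toLinearMap_apply, AlgEquiv.symm_apply_apply,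
    Submodule.mkQ_apply]

lemma T_sw (w : Wd) : T (sw w) = Submodule.Quotient.mk (monomial w) := by
  rw [← E_monomial w, T_E]

lemma T_J1M {m : M} (hm : m ∈ J1M) : T m = 0 := by
  have : J1M ≤ LinearMap.ker T := by
    refine Submodule.span_le.mpr ?_
    rintro _ ⟨w, hw, rfl⟩
    rw [SetLike.mem_coe, LinearMap.mem_ker, T_sw]
    exact (Submodule.Quotient.mk_eq_zero I5).mpr (memI5_pat hw)
  exact this hm

noncomputable def ev (w₀ : Wd) : M →ₗ[ℂ] ℂ :=
  (Finsupp.lapply (FreeMonoid.ofList w₀)).comp (MonoidAlgebra.coeffLinearEquiv ℂ).toLinearMap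

lemma ev_sw (w₀ w : Wd) : ev w₀ (sw w) = if w = w₀ then 1 else 0 := by
  have h : ev w₀ (sw w)
      = (Finsupp.single (FreeMonoid.ofList w) (1:ℂ)) (FreeMonoid.ofList w₀) := rfl
  classical
  rw [h, Finsupp.single_apply]
  by_cases hw : w = w₀
  · subst hw; simp
  · rw [if_neg (fun hh => hw (FreeMonoid.ofList.injective hh)), if_neg hw]

lemma ev_ker (p₀ : Idx) :
    J1M ⊔ ZendM ≤ LinearMap.ker (ev (cw p₀)) := by
  refine sup_le ?_ ?_ <;> refine Submodule.span_le.mpr ?_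
  · rintro _ ⟨w, hw, rfl⟩
    rw [SetLike.mem_coe, LinearMap.mem_ker, ev_sw, if_neg]
    intro h
    exact cw_no_pat p₀ (h ▸ hw)
  · rintro _ ⟨w, hw, rfl⟩
    rw [SetLike.mem_coe, LinearMap.mem_ker, ev_sw, if_neg]
    intro h
    exact cw_not_end2 p₀ (h ▸ hw)

lemma ev_ker_I5 (p₀ : Idx) :
    I5 ≤ LinearMap.ker ((ev (cw p₀)).comp (E : Uf3 ≃ₐ[ℂ] M).toLinearMap) := by
  intro u hu
  rw [LinearMap.mem_ker, LinearMap.comp_apply]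
  exact ev_ker p₀ (EI5 hu)

noncomputable def φ (p₀ : Idx) : (Uf3 ⧸ I5) →ₗ[ℂ] ℂ :=
  I5.liftQ ((ev (cw p₀)).comp (E : Uf3 ≃ₐ[ℂ] M).toLinearMap) (ev_ker_I5 p₀)

lemma φ_mk (p₀ : Idx) (u : Uf3) :
    φ p₀ (Submodule.Quotient.mk u) = ev (cw p₀) (E u) := by
  rw [φ]
  exact Submodule.liftQ_apply _ _ _

lemma ev_Dsp (p₀ : Idx) {a b n : ℕ} {m : ℕ} (hm : m ≤ mu (cw p₀)) {d : M}
    (hd : d ∈ Dsp a b n m) : ev (cw p₀) d = 0 := by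
  have : Dsp a b n m ≤ LinearMap.ker (ev (cw p₀)) := by
    refine Submodule.span_le.mpr ?_
    rintro _ ⟨w, ⟨-, -, -, hwmu⟩, rfl⟩
    rw [SetLike.mem_coe, LinearMap.mem_ker, ev_sw, if_neg]
    intro h
    subst h
    omega
  exact this hd

-- ## Final assembly

lemma key_decomp (p : Idx) :
    ∃ d ∈ Dsp ((cw p).count 0) ((cw p).count 1) ((cw p).count 2) (mu (cw p)),
      ∃ j ∈ J1M, E (ι (bracketElt p)) = sw (cw p) + (d + j) := by
  obtain ⟨d, hd, j, hj, hdj⟩ := Submodule.mem_sup.mp (keyMain p)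
  exact ⟨d, hd, j, hj, by rw [hdj]; abel⟩

lemma φ_v (p₀ p : Idx) (hle : mu (cw p) ≤ mu (cw p₀)) :
    φ p₀ (Submodule.Quotient.mk (ι (bracketElt p))) = if p = p₀ then 1 else 0 := by
  obtain ⟨d, hd, j, hj, hE⟩ := key_decomp p
  rw [φ_mk, hE, map_add, map_add, ev_sw]
  have hd0 : ev (cw p₀) d = 0 := ev_Dsp p₀ hle hd
  have hj0 : ev (cw p₀) j = 0 := by
    have := ev_ker p₀ (Submodule.mem_sup_left hj)
    rwa [LinearMap.mem_ker] at this
  rw [hd0, hj0, add_zero, add_zero]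
  by_cases h : p = p₀
  · subst h; rw [if_pos rfl, if_pos rfl]
  · rw [if_neg (fun hh => h (cw_inj hh)), if_neg h]

lemma indep : LinearIndependent ℂ
    (fun p : Idx => (Submodule.Quotient.mk (ι (bracketElt p)) : Uf3 ⧸ I5)) := by
  rw [linearIndependent_iff']
  intro s
  induction s using Finset.strongInduction with
  | _ s ih =>
    intro g hsum i hi
    have hne : s.Nonempty := ⟨i, hi⟩
    obtain ⟨p₀, hp₀s, hp₀max⟩ := Finset.exists_max_image s (fun p => mu (cw p)) hne
    have hg0 : g p₀ = 0 := by
      have happ := congrArg (φ p₀) hsum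
      rw [map_sum, map_zero] at happ
      have hterm : ∀ q ∈ s, φ p₀ (g q • (Submodule.Quotient.mk (ι (bracketElt q)) : Uf3 ⧸ I5))
          = if q = p₀ then g q else 0 := by
        intro q hq
        rw [map_smul, φ_v p₀ q (hp₀max q hq)]
        by_cases h : q = p₀ <;> simp [h]
      rw [Finset.sum_congr rfl hterm, Finset.sum_ite_eq' s p₀ g, if_pos hp₀s] at happ
      exact happ
    by_cases hip : i = p₀
    · rw [hip]; exact hg0
    · refine ih (s.erase p₀) (Finset.erase_ssubset hp₀s) g ?_ i
        (Finset.mem_erase.mpr ⟨hip, hi⟩)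
      rw [Finset.sum_erase_eq_sub hp₀s, hsum, hg0, zero_smul, sub_zero]

lemma range_le_M11 :
    Submodule.span ℂ (Set.range fun p : Idx =>
      (Submodule.Quotient.mk (ι (bracketElt p)) : Uf3 ⧸ I5)) ≤ M11 := by
  refine Submodule.span_le.mpr ?_
  rintro _ ⟨p, rfl⟩
  obtain ⟨d, hd, j, hj, hE⟩ := key_decomp p
  have hTE := T_E (ι (bracketElt p))
  show (Submodule.Quotient.mk (ι (bracketElt p)) : Uf3 ⧸ I5) ∈ M11
  rw [← hTE, hE, map_add, map_add, T_sw, T_J1M hj, add_zero]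
  refine add_mem (subset_span ⟨cw p, mem0_cw p, mem1_cw p, rfl⟩) ?_
  have hDle : Dsp ((cw p).count 0) ((cw p).count 1) ((cw p).count 2) (mu (cw p))
      ≤ M11.comap T := by
    refine Submodule.span_le.mpr ?_
    rintro _ ⟨w, ⟨hw0, hw1, -, -⟩, rfl⟩
    rw [SetLike.mem_coe, Submodule.mem_comap, T_sw]
    refine subset_span ⟨w, ?_, ?_, rfl⟩
    · exact List.count_pos_iff.mp (by rw [hw0]; exact List.count_pos_iff.mpr (mem0_cw p))
    · exact List.count_pos_iff.mp (by rw [hw1]; exact List.count_pos_iff.mpr (mem1_cw p))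
  exact hDle hd

lemma mk_mem_span_aux : ∀ n : ℕ, ∀ l : Wd, mu l < n → (0:Fin 3) ∈ l → (1:Fin 3) ∈ l →
    (Submodule.Quotient.mk (monomial l) : Uf3 ⧸ I5)
      ∈ Submodule.span ℂ (Set.range fun p : Idx =>
          (Submodule.Quotient.mk (ι (bracketElt p)) : Uf3 ⧸ I5)) := by
  intro n
  induction n with
  | zero => intro l h; omega
  | succ n ih =>
    intro l hmu h0 h1
    by_cases hp : pat l
    · rw [(Submodule.Quotient.mk_eq_zero I5).mpr (memI5_pat hp)]
      exact zero_mem _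
    by_cases hz : ∃ u, l = u ++ [(2:Fin 3)]
    · obtain ⟨u, rfl⟩ := hz
      rw [(Submodule.Quotient.mk_eq_zero I5).mpr (memI5_end2 u)]
      exact zero_mem _
    obtain ⟨p, rfl⟩ := good_eq_cw h0 h1 hz hp
    obtain ⟨d, hd, j, hj, hE⟩ := key_decomp p
    have hTE := T_E (ι (bracketElt p))
    have heq : (Submodule.Quotient.mk (monomial (cw p)) : Uf3 ⧸ I5)
        = (Submodule.Quotient.mk (ι (bracketElt p)) : Uf3 ⧸ I5) - T d := by
      rw [← hTE, hE, map_add, map_add, T_sw, T_J1M hj, add_zero]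
      abel
    rw [heq]
    refine sub_mem (subset_span ⟨p, rfl⟩) ?_
    have hDle : Dsp ((cw p).count 0) ((cw p).count 1) ((cw p).count 2) (mu (cw p))
        ≤ (Submodule.span ℂ (Set.range fun p : Idx =>
            (Submodule.Quotient.mk (ι (bracketElt p)) : Uf3 ⧸ I5))).comap T := by
      refine Submodule.span_le.mpr ?_
      rintro _ ⟨w, ⟨hw0, hw1, -, hwmu⟩, rfl⟩
      rw [SetLike.mem_coe, Submodule.mem_comap, T_sw]
      refine ih w (by omega) ?_ ?_
      · exact List.count_pos_iff.mp (by rw [hw0]; exact List.count_pos_iff.mpr (mem0_cw p))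
      · exact List.count_pos_iff.mp (by rw [hw1]; exact List.count_pos_iff.mpr (mem1_cw p))
    exact hDle hd

lemma M11_le_span : M11 ≤ Submodule.span ℂ (Set.range fun p : Idx =>
    (Submodule.Quotient.mk (ι (bracketElt p)) : Uf3 ⧸ I5)) := by
  rw [M11]
  refine Submodule.span_le.mpr ?_
  rintro _ ⟨l, h0, h1, rfl⟩
  exact mk_mem_span_aux (mu l + 1) l (by omega) h0 h1

theorem basis_of_brackets :
    LinearIndependent ℂ
      (fun p : Idx => (Submodule.Quotient.mk (ι (bracketElt p)) : Uf3 ⧸ I5)) ∧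
    Submodule.span ℂ
      (Set.range fun p : Idx =>
        (Submodule.Quotient.mk (ι (bracketElt p)) : Uf3 ⧸ I5)) = M11 := by
  exact ⟨indep, le_antisymm range_le_M11 M11_le_span⟩
end

section
/- With the notation below, for all integers p, q ≥ 1 and r ≥ 0, the multihomogeneous component of U f₃ / I₅ of degree p in x, q in y and r in z has dimension Σ_{r₁ + r₂ = r} C(q−1+r₁, r₁) · C(p−1+r₂, r₂), where C(·,·) denotes the binomial coefficient. Equivalently, the Poincaré series of the bidegree-≥(1,1) part of U f₃ / I₅ is s₁s₂ / ((1−s₁−t)(1−s₂−t)), where s₁, s₂, t track the degrees in x, y, z. -/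
attribute [local instance 100] LieRing.ofAssociativeRing

/-- The multihomogeneous component of `U f₃` of degree `p` in `x`, `q` in `y`, `r` in `z`:
the span of the monomials with exactly `p` occurrences of `x`, `q` of `y` and `r` of `z`. -/
noncomputable def H (p q r : ℕ) : Submodule ℂ Uf3 :=
  Submodule.span ℂ
    {u : Uf3 | ∃ l : List (Fin 3),
      l.count 0 = p ∧ l.count 1 = q ∧ l.count 2 = r ∧ u = monomial l}


namespace Proof5

set_option linter.unusedSectionVars false

section Comb


/-- Finset of Bool lists with `a` falses and `b` trues. -/
def bl : ℕ → ℕ → Finset (List Bool)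
  | 0, 0 => {[]}
  | a+1, 0 => (bl a 0).image (List.cons false)
  | 0, b+1 => (bl 0 b).image (List.cons true)
  | a+1, b+1 => (bl a (b+1)).image (List.cons false) ∪ (bl (a+1) b).image (List.cons true)

theorem mem_bl : ∀ (a b : ℕ) (l : List Bool),
    l ∈ bl a b ↔ l.count false = a ∧ l.count true = b := by
  intro a b
  induction a, b using bl.induct with
  | case1 =>
    intro l
    simp only [bl, Finset.mem_singleton]
    constructor
    · rintro rfl; simp
    · rintro ⟨h1, h2⟩
      cases l with
      | nil => rfl
      | cons h t => cases h <;> simp_all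
  | case2 a ih =>
    intro l
    simp only [bl, Finset.mem_image]
    constructor
    · rintro ⟨m, hm, rfl⟩
      obtain ⟨h1, h2⟩ := (ih m).1 hm
      simp [h1, h2]
    · rintro ⟨h1, h2⟩
      cases l with
      | nil => simp at h1
      | cons h t =>
        cases h
        · exact ⟨t, (ih t).2 (by constructor <;> simp_all), rfl⟩
        · simp_all
  | case3 b ih =>
    intro l
    simp only [bl, Finset.mem_image]
    constructor
    · rintro ⟨m, hm, rfl⟩
      obtain ⟨h1, h2⟩ := (ih m).1 hm
      simp [h1, h2]
    · rintro ⟨h1, h2⟩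
      cases l with
      | nil => simp at h2
      | cons h t =>
        cases h
        · simp_all
        · exact ⟨t, (ih t).2 (by constructor <;> simp_all), rfl⟩
  | case4 a b ih1 ih2 =>
    intro l
    simp only [bl, Finset.mem_union, Finset.mem_image]
    constructor
    · rintro (⟨m, hm, rfl⟩ | ⟨m, hm, rfl⟩)
      · obtain ⟨h1, h2⟩ := (ih1 m).1 hm; simp [h1, h2]
      · obtain ⟨h1, h2⟩ := (ih2 m).1 hm; simp [h1, h2]
    · rintro ⟨h1, h2⟩
      cases l with
      | nil => simp at h1
      | cons h t =>
        cases h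
        · exact Or.inl ⟨t, (ih1 t).2 (by constructor <;> simp_all), rfl⟩
        · exact Or.inr ⟨t, (ih2 t).2 (by constructor <;> simp_all), rfl⟩

theorem card_bl : ∀ a b : ℕ, (bl a b).card = (a + b).choose b := by
  intro a b
  induction a, b using bl.induct with
  | case1 => simp [bl]
  | case2 a ih =>
    rw [bl, Finset.card_image_of_injective _ (fun x y h => by simpa using h), ih]
    simp
  | case3 b ih =>
    rw [bl, Finset.card_image_of_injective _ (fun x y h => by simpa using h), ih]
    simp
  | case4 a b ih1 ih2 =>
    rw [bl, Finset.card_union_of_disjoint, Finset.card_image_of_injective _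
      (fun x y h => by simpa using h), Finset.card_image_of_injective _
      (fun x y h => by simpa using h), ih1, ih2]
    · rw [show a + (b+1) = a+1+b by ring, add_comm,
        show a+1+(b+1) = (a+1+b)+1 by ring, Nat.choose_succ_succ]
    · rw [Finset.disjoint_left]
      rintro x hx hy
      obtain ⟨m, _, rfl⟩ := Finset.mem_image.1 hx
      obtain ⟨m', _, h⟩ := Finset.mem_image.1 hy
      simp at h


section Lists
variable {α : Type*} [DecidableEq α]

/-- First-occurrence split. -/
theorem first_split {x : α} : ∀ {l : List α}, x ∈ l → ∃ s t, l = s ++ x :: t ∧ x ∉ s := by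
  intro l hl
  induction l with
  | nil => simp at hl
  | cons h t ih =>
    by_cases hx : h = x
    · exact ⟨[], t, by simp [hx], by simp⟩
    · have : x ∈ t := by
        rcases List.mem_cons.1 hl with h1 | h1
        · exact absurd h1.symm hx
        · exact h1
      obtain ⟨s, t', rfl, hs⟩ := ih this
      refine ⟨h :: s, t', by simp, fun hm => ?_⟩
      rcases List.mem_cons.1 hm with rfl | hh
      exacts [hx rfl, hs hh]

/-- Uniqueness of the first-occurrence split. -/
theorem split_unique {x : α} : ∀ {c c' d d' : List α}, x ∉ c → x ∉ c' →
    c ++ x :: d = c' ++ x :: d' → c = c' ∧ d = d' := by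
  intro c
  induction c with
  | nil =>
    intro c' d d' _ hc' h
    cases c' with
    | nil => simpa using h
    | cons a t =>
      simp only [List.nil_append, List.cons_append, List.cons.injEq] at h
      exact absurd (by rw [h.1]; exact List.mem_cons_self) hc'
  | cons a s ih =>
    intro c' d d' hc hc' h
    cases c' with
    | nil =>
      simp only [List.nil_append, List.cons_append, List.cons.injEq] at h
      exact absurd (by rw [← h.1]; exact List.mem_cons_self) hc
    | cons a' s' =>
      simp only [List.cons_append, List.cons.injEq] at h
      obtain ⟨rfl, h2⟩ := h
      have := ih (fun hh => hc (List.mem_cons.2 (Or.inr hh)))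
        (fun hh => hc' (List.mem_cons.2 (Or.inr hh))) h2
      exact ⟨by rw [this.1], this.2⟩

/-- Uniqueness of the last-occurrence split. -/
theorem last_split_unique {x : α} {a a' b b' : List α} (hb : x ∉ b) (hb' : x ∉ b')
    (h : a ++ x :: b = a' ++ x :: b') : a = a' ∧ b = b' := by
  have h' : b.reverse ++ x :: a.reverse = b'.reverse ++ x :: a'.reverse := by
    have := congrArg List.reverse h
    simpa using this
  have := split_unique (by simpa using hb) (by simpa using hb') h'
  constructor
  · have := this.2; exact List.reverse_injective (by simpa using this)
  · exact List.reverse_injective (by simpa using this.1)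

/-- If `U ++ V = a ++ x :: d` and `x ∉ U`, then the `x` lies in `V`. -/
theorem prefix_split {x : α} : ∀ {U : List α} {V a d : List α}, x ∉ U →
    U ++ V = a ++ x :: d → ∃ a₂, a = U ++ a₂ ∧ V = a₂ ++ x :: d := by
  intro U
  induction U with
  | nil => intro V a d _ h; exact ⟨a, by simp, by simpa using h⟩
  | cons u U' ih =>
    intro V a d hU h
    cases a with
    | nil =>
      simp only [List.cons_append, List.nil_append, List.cons.injEq] at h
      exact absurd (by rw [← h.1]; exact List.mem_cons_self) hU
    | cons a₀ a' =>
      simp only [List.cons_append, List.cons.injEq] at h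
      obtain ⟨rfl, h2⟩ := h
      obtain ⟨a₂, rfl, hV⟩ := ih (fun hh => hU (List.mem_cons.2 (Or.inr hh))) h2
      exact ⟨a₂, by simp, hV⟩

end Lists
def e1 : Bool → Fin 3 := fun t => cond t 2 1
def e2 : Bool → Fin 3 := fun t => cond t 2 0

def glue (u v : List Bool) : List (Fin 3) := u.map e1 ++ 1 :: (v.map e2 ++ [0])

theorem count_map_eq {α β : Type} [DecidableEq β] (b : β) (f : α → β) (l : List α) :
    (l.map f).count b = l.countP (fun a => f a == b) := by
  rw [List.count_eq_countP, List.countP_map]; rfl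

theorem fin3_cases (x : Fin 3) : x = 0 ∨ x = 1 ∨ x = 2 := by revert x; decide

@[simp] theorem cme1_0 (u : List Bool) : (u.map e1).count 0 = 0 := by
  rw [count_map_eq]
  refine List.countP_eq_zero.2 fun a _ => ?_
  cases a <;> decide
@[simp] theorem cme1_1 (u : List Bool) : (u.map e1).count 1 = u.count false := by
  rw [count_map_eq, List.count_eq_countP]
  exact List.countP_congr fun a _ => by cases a <;> decide
@[simp] theorem cme1_2 (u : List Bool) : (u.map e1).count 2 = u.count true := by
  rw [count_map_eq, List.count_eq_countP]
  exact List.countP_congr fun a _ => by cases a <;> decide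
@[simp] theorem cme2_0 (u : List Bool) : (u.map e2).count 0 = u.count false := by
  rw [count_map_eq, List.count_eq_countP]
  exact List.countP_congr fun a _ => by cases a <;> decide
@[simp] theorem cme2_1 (u : List Bool) : (u.map e2).count 1 = 0 := by
  rw [count_map_eq]
  refine List.countP_eq_zero.2 fun a _ => ?_
  cases a <;> decide
@[simp] theorem cme2_2 (u : List Bool) : (u.map e2).count 2 = u.count true := by
  rw [count_map_eq, List.count_eq_countP]
  exact List.countP_congr fun a _ => by cases a <;> decide

theorem not_mem_map_e1 (u : List Bool) : (0 : Fin 3) ∉ u.map e1 := by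
  intro h
  obtain ⟨b, _, hb⟩ := List.mem_map.1 h
  cases b <;> simp [e1] at hb
theorem not_mem_map_e2 (u : List Bool) : (1 : Fin 3) ∉ u.map e2 := by
  intro h
  obtain ⟨b, _, hb⟩ := List.mem_map.1 h
  cases b <;> simp [e2] at hb

theorem e1_injective : Function.Injective e1 := by
  intro a b h; cases a <;> cases b <;> simp_all [e1]
theorem e2_injective : Function.Injective e2 := by
  intro a b h; cases a <;> cases b <;> simp_all [e2]

theorem not_one_mem_tail (v : List Bool) : (1 : Fin 3) ∉ v.map e2 ++ [(0 : Fin 3)] := by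
  intro h
  rcases List.mem_append.1 h with h | h
  · exact not_mem_map_e2 v h
  · simp at h

theorem glue_inj {u v u' v' : List Bool} (h : glue u v = glue u' v') : u = u' ∧ v = v' := by
  unfold glue at h
  obtain ⟨h1, h2⟩ := last_split_unique (not_one_mem_tail v) (not_one_mem_tail v') h
  constructor
  · exact List.map_injective_iff.2 e1_injective h1
  · exact List.map_injective_iff.2 e2_injective (by simpa using h2)

noncomputable def GF (p q r : ℕ) : Finset (List (Fin 3)) :=
  (Finset.HasAntidiagonal.antidiagonal r).biUnion fun ab =>
    ((bl (q-1) ab.1) ×ˢ (bl (p-1) ab.2)).image fun uv => glue uv.1 uv.2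

theorem card_GF (p q r : ℕ) :
    (GF p q r).card = ∑ ab ∈ Finset.HasAntidiagonal.antidiagonal r,
      Nat.choose (q - 1 + ab.1) ab.1 * Nat.choose (p - 1 + ab.2) ab.2 := by
  rw [GF, Finset.card_biUnion]
  · refine Finset.sum_congr rfl fun ab _ => ?_
    rw [Finset.card_image_of_injOn (fun x _ y _ h => ?_), Finset.card_product, card_bl, card_bl]
    obtain ⟨h1, h2⟩ := glue_inj h
    exact Prod.ext h1 h2
  · intro ab _ ab' _ hne
    rw [Function.onFun, Finset.disjoint_left]
    rintro w hw hw'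
    obtain ⟨⟨u, v⟩, huv, rfl⟩ := Finset.mem_image.1 hw
    obtain ⟨⟨u', v'⟩, huv', hglue⟩ := Finset.mem_image.1 hw'
    obtain ⟨rfl, rfl⟩ := glue_inj hglue.symm
    obtain ⟨hu, hv⟩ := Finset.mem_product.1 huv
    obtain ⟨hu', hv'⟩ := Finset.mem_product.1 huv'
    apply hne
    have h1 : ab.1 = ab'.1 := by
      rw [← ((mem_bl _ _ u).1 hu).2, ← ((mem_bl _ _ u).1 hu').2]
    have h2 : ab.2 = ab'.2 := by
      rw [← ((mem_bl _ _ v).1 hv).2, ← ((mem_bl _ _ v).1 hv').2]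
    exact Prod.ext h1 h2

theorem mem_GF' (p q r : ℕ) (w : List (Fin 3)) : w ∈ GF p q r ↔
    ∃ ab ∈ Finset.HasAntidiagonal.antidiagonal r, ∃ uv ∈ (bl (q-1) ab.1) ×ˢ (bl (p-1) ab.2),
      glue uv.1 uv.2 = w := by
  simp [GF]

def Wset (p q r : ℕ) : Set (List (Fin 3)) :=
  {l | l.count 0 = p ∧ l.count 1 = q ∧ l.count 2 = r}

def BadSet : Set (List (Fin 3)) :=
  {l | (∃ a b c, l = a ++ 0 :: (b ++ 1 :: c)) ∨ ∃ a, l = a ++ [2]}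

/-- decode letter -/
def d3 : Fin 3 → Bool := fun i => i == 2

theorem good_eq (p q r : ℕ) (hp : 1 ≤ p) (hq : 1 ≤ q) :
    Wset p q r \ BadSet = ↑(GF p q r) := by
  ext w
  simp only [Set.mem_diff, Finset.coe_sort_coe, Finset.mem_coe, mem_GF']
  constructor
  · rintro ⟨⟨h0, h1, h2⟩, hbad⟩
    simp only [BadSet, Set.mem_setOf_eq, not_or, not_exists] at hbad
    obtain ⟨hbad1, hbad2⟩ := hbad
    -- w is nonempty
    have hne : w ≠ [] := by rintro rfl; simp at h0; omega
    have hw : w = w.dropLast ++ [w.getLast hne] := (List.dropLast_append_getLast hne).symm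
    set L := w.getLast hne with hL
    -- last letter is 0
    have hL0 : L = 0 := by
      rcases fin3_cases L with h | h | h
      · exact h
      · -- last letter 1 : find a 0 before it
        exfalso
        have h0w : (0 : Fin 3) ∈ w.dropLast := by
          have : (0 : Fin 3) ∈ w := List.count_pos_iff.1 (by omega)
          rw [hw] at this
          rcases List.mem_append.1 this with h' | h'
          · exact h'
          · simp [h] at h'
        obtain ⟨s, t, hst, -⟩ := first_split h0w
        exact hbad1 s t [] (by rw [hw, hst, h]; simp)
      · exact absurd (h ▸ hw) (hbad2 w.dropLast)
    set m := w.dropLast with hm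
    rw [hL0] at hw
    -- find last occurrence of 1 in m
    have h1m : (1 : Fin 3) ∈ m := by
      have : (1 : Fin 3) ∈ w := List.count_pos_iff.1 (by omega)
      rw [hw] at this
      rcases List.mem_append.1 this with h' | h'
      · exact h'
      · simp at h'
    obtain ⟨s, t, hst, hs⟩ := first_split (List.mem_reverse.2 h1m)
    have hmut : m = t.reverse ++ 1 :: s.reverse := by
      have := congrArg List.reverse hst
      simpa using this
    set u := t.reverse with hu
    set v := s.reverse with hvdef
    have hv : (1 : Fin 3) ∉ v := by simpa [hvdef] using hs
    have hwu : w = u ++ 1 :: (v ++ [(0:Fin 3)]) := by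
      rw [hw, hmut]; simp
    -- no 0 in u
    have hu0 : (0 : Fin 3) ∉ u := by
      intro h0u
      obtain ⟨s1, t1, hst1, -⟩ := first_split h0u
      exact hbad1 s1 t1 (v ++ [0]) (by rw [hwu, hst1]; simp)
    -- counts in u and v
    have hcu1 : u.count 1 = q - 1 := by
      have := h1
      rw [hwu] at this
      simp [List.count_append, List.count_cons, List.count_eq_zero_of_not_mem hv] at this
      omega
    have hcv0 : v.count 0 = p - 1 := by
      have := h0
      rw [hwu] at this
      simp [List.count_append, List.count_cons, List.count_eq_zero_of_not_mem hu0] at this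
      omega
    have hc2 : u.count 2 + v.count 2 = r := by
      have := h2
      rw [hwu] at this
      simp [List.count_append, List.count_cons] at this
      omega
    -- encode
    refine ⟨(u.count 2, v.count 2), by simpa using hc2, ⟨u.map d3, v.map d3⟩, ?_, ?_⟩
    · rw [Finset.mem_product]
      constructor
      · rw [mem_bl]
        constructor
        · rw [count_map_eq, ← hcu1, List.count_eq_countP]
          refine List.countP_congr fun x hx => ?_
          rcases fin3_cases x with rfl | rfl | rfl
          · exact absurd hx hu0
          · decide
          · decide
        · rw [count_map_eq, List.count_eq_countP]
          refine List.countP_congr fun x hx => ?_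
          rcases fin3_cases x with rfl | rfl | rfl
          · exact absurd hx hu0
          · decide
          · decide
      · rw [mem_bl]
        constructor
        · rw [count_map_eq, ← hcv0, List.count_eq_countP]
          refine List.countP_congr fun x hx => ?_
          rcases fin3_cases x with rfl | rfl | rfl
          · decide
          · exact absurd hx hv
          · decide
        · rw [count_map_eq, List.count_eq_countP]
          refine List.countP_congr fun x hx => ?_
          rcases fin3_cases x with rfl | rfl | rfl
          · decide
          · exact absurd hx hv
          · decide
    · -- glue of encodings is w
      have hgu : (u.map d3).map e1 = u := by
        rw [List.map_map]
        conv_rhs => rw [← List.map_id u]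
        refine List.map_congr_left fun x hx => ?_
        rcases fin3_cases x with rfl | rfl | rfl
        · exact absurd hx hu0
        · decide
        · decide
      have hgv : (v.map d3).map e2 = v := by
        rw [List.map_map]
        conv_rhs => rw [← List.map_id v]
        refine List.map_congr_left fun x hx => ?_
        rcases fin3_cases x with rfl | rfl | rfl
        · decide
        · exact absurd hx hv
        · decide
      rw [glue, hgu, hgv, hwu]
  · rintro ⟨⟨r1, r2⟩, hab, ⟨u, v⟩, huv, rfl⟩
    obtain ⟨hu, hv⟩ := Finset.mem_product.1 huv
    obtain ⟨hcu_f, hcu_t⟩ := (mem_bl _ _ u).1 hu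
    obtain ⟨hcv_f, hcv_t⟩ := (mem_bl _ _ v).1 hv
    have hr : r1 + r2 = r := by simpa using hab
    constructor
    · refine ⟨?_, ?_, ?_⟩
      · simp [glue, List.count_append, List.count_cons, hcv_f]
        omega
      · simp [glue, List.count_append, List.count_cons, hcu_f]
        omega
      · simp [glue, List.count_append, List.count_cons, hcu_t, hcv_t]
        omega
    · rintro (⟨a, b, c, habc⟩ | ⟨a, ha⟩)
      · have hsplit : (u.map e1 ++ [(1:Fin 3)]) ++ (v.map e2 ++ [(0:Fin 3)])
            = a ++ 0 :: (b ++ 1 :: c) := by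
          rw [← habc]; simp [glue]
        have h0U : (0 : Fin 3) ∉ u.map e1 ++ [(1:Fin 3)] := by
          intro h
          rcases List.mem_append.1 h with h | h
          · exact not_mem_map_e1 u h
          · simp at h
        obtain ⟨a₂, -, hV⟩ := prefix_split h0U hsplit
        have : (1 : Fin 3) ∈ v.map e2 ++ [(0:Fin 3)] := by
          rw [hV]
          simp
        exact not_one_mem_tail v this
      · have : (some (0:Fin 3)) = some 2 := by
          calc some (0:Fin 3) = (glue u v).getLast? := by
                rw [glue, show u.map e1 ++ 1 :: (v.map e2 ++ [(0:Fin 3)])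
                    = (u.map e1 ++ 1 :: v.map e2) ++ [(0:Fin 3)] by simp,
                  List.getLast?_concat]
            _ = some 2 := by rw [ha, List.getLast?_concat]
        simp at this
end Comb

open Finsupp Module
theorem finrank_map_of_disjoint {V W : Type*} [AddCommGroup V] [Module ℂ V] [AddCommGroup W]
    [Module ℂ W] (f : V →ₗ[ℂ] W) (p : Submodule ℂ V) (h : Disjoint (LinearMap.ker f) p) :
    finrank ℂ (p.map f) = finrank ℂ p := by
  have hinj : Function.Injective (f.submoduleMap p) := by
    intro a b hab
    have h1 : f a.1 = f b.1 := by
      have := congrArg Subtype.val hab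
      rwa [LinearMap.submoduleMap_coe_apply, LinearMap.submoduleMap_coe_apply] at this
    have h2 : (a.1 - b.1) ∈ LinearMap.ker f := by
      rw [LinearMap.mem_ker, map_sub, sub_eq_zero]; exact h1
    have h3 : a.1 - b.1 = 0 := Submodule.disjoint_def.1 h _ h2 (sub_mem a.2 b.2)
    exact Subtype.ext (sub_eq_zero.1 h3)
  exact (LinearEquiv.ofBijective (f.submoduleMap p)
    ⟨hinj, f.submoduleMap_surjective p⟩).symm.finrank_eq

theorem finrank_supported_coe {α : Type*} (G : Finset α) :
    finrank ℂ (Finsupp.supported ℂ ℂ (↑G : Set α)) = G.card := by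
  classical
  have e1 := Finsupp.supportedEquivFinsupp (R := ℂ) (M := ℂ) (↑G : Set α)
  have e2 := Finsupp.linearEquivFunOnFinite ℂ ℂ (↑G : Set α)
  rw [e1.finrank_eq, e2.finrank_eq, Module.finrank_pi]
  simp

theorem finrank_supported_map_mkQ {α : Type*} (s t : Set α) (G : Finset α) (h : s \ t = ↑G) :
    finrank ℂ ((Finsupp.supported ℂ ℂ s).map (Finsupp.supported ℂ ℂ t :
      Submodule ℂ (α →₀ ℂ)).mkQ) = G.card := by
  classical
  have hs : s = (s ∩ t) ∪ (s \ t) := (Set.inter_union_diff s t).symm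
  rw [hs, Finsupp.supported_union, Submodule.map_sup]
  have h1 : (Finsupp.supported ℂ ℂ (s ∩ t)).map (Finsupp.supported ℂ ℂ t :
      Submodule ℂ (α →₀ ℂ)).mkQ = ⊥ := by
    rw [eq_bot_iff, ← Submodule.mkQ_map_self (Finsupp.supported ℂ ℂ t)]
    exact Submodule.map_mono (Finsupp.supported_mono Set.inter_subset_right)
  rw [h1, bot_sup_eq]
  have hdisj : Disjoint (LinearMap.ker (Finsupp.supported ℂ ℂ t :
      Submodule ℂ (α →₀ ℂ)).mkQ) (Finsupp.supported ℂ ℂ (s \ t)) := by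
    rw [Submodule.ker_mkQ]
    exact Finsupp.disjoint_supported_supported Set.disjoint_sdiff_right
  rw [finrank_map_of_disjoint _ _ hdisj, h, finrank_supported_coe]

theorem finrank_quot_transport {V W : Type*} [AddCommGroup V] [Module ℂ V] [AddCommGroup W]
    [Module ℂ W] (e : V ≃ₗ[ℂ] W) (N I : Submodule ℂ V) :
    finrank ℂ (N.map I.mkQ) =
      finrank ℂ ((N.map e.toLinearMap).map (I.map e.toLinearMap).mkQ) := by
  let q : (V ⧸ I) ≃ₗ[ℂ] W ⧸ (I.map e.toLinearMap) :=
    Submodule.Quotient.equiv I (I.map e.toLinearMap) e rfl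
  have hcomm : (I.map e.toLinearMap).mkQ.comp e.toLinearMap = q.toLinearMap.comp I.mkQ := by
    ext v; rfl
  rw [← LinearEquiv.finrank_map_eq q (N.map I.mkQ), ← Submodule.map_comp, ← hcomm,
    Submodule.map_comp]


noncomputable section Alg
abbrev MA := MonoidAlgebra ℂ (FreeMonoid (Fin 3))

def sing (l : List (Fin 3)) : MA := MonoidAlgebra.single (FreeMonoid.ofList l) 1

theorem sing_def (l : List (Fin 3)) : sing l = MonoidAlgebra.single (FreeMonoid.ofList l) 1 := rfl

theorem sing_mul (a b : List (Fin 3)) : sing a * sing b = sing (a ++ b) := by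
  rw [sing, sing, sing, MonoidAlgebra.single_mul_single, one_mul, ← FreeMonoid.ofList_append]

theorem support_sing (l : List (Fin 3)) : (sing l).coeff.support = {FreeMonoid.ofList l} := by
  rw [sing]
  exact Finsupp.support_single_ne_zero _ one_ne_zero

/-- Lists as a set of free monoid elements. -/
def SetF (S : Set (List (Fin 3))) : Set (FreeMonoid (Fin 3)) := FreeMonoid.toList ⁻¹' S

theorem mem_SetF {S : Set (List (Fin 3))} {w : FreeMonoid (Fin 3)} :
    w ∈ SetF S ↔ FreeMonoid.toList w ∈ S := Iff.rfl

/-- `Finsupp.supported` as a submodule of the monoid algebra. -/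
def suppM (S : Set (List (Fin 3))) : Submodule ℂ MA := MonoidAlgebra.supported ℂ ℂ (SetF S)

theorem mem_suppM {S : Set (List (Fin 3))} {x : MA} :
    x ∈ suppM S ↔ ↑x.coeff.support ⊆ SetF S := MonoidAlgebra.mem_supported

theorem suppM_eq_span (S : Set (List (Fin 3))) :
    suppM S = Submodule.span ℂ ((fun i => MonoidAlgebra.single i (1:ℂ)) '' (SetF S)) :=
  MonoidAlgebra.supported_eq_span_single ℂ (SetF S)

theorem finrank_suppM_map_mkQ (s t : Set (FreeMonoid (Fin 3))) (G : Finset (FreeMonoid (Fin 3)))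
    (h : s \ t = ↑G) :
    finrank ℂ ((MonoidAlgebra.supported ℂ ℂ s).map
      (MonoidAlgebra.supported ℂ ℂ t : Submodule ℂ MA).mkQ) = G.card := by
  rw [MonoidAlgebra.supported_eq_map, MonoidAlgebra.supported_eq_map, ← finrank_quot_transport,
    finrank_supported_map_mkQ _ _ _ h]

/-- generic: span of two-sided multiples of a single letter -/
theorem span_twoSided (i : Fin 3) :
    Submodule.span ℂ {m : MA | ∃ a b : MA, m = a * sing [i] * b} =
      suppM ({l : List (Fin 3) | ∃ s t, l = s ++ i :: t}) := by
  classical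
  apply le_antisymm
  · rw [Submodule.span_le]
    rintro m ⟨a, b, rfl⟩
    rw [SetLike.mem_coe, mem_suppM]
    intro w hw
    have h1 := MonoidAlgebra.support_coeff_mul_subset (a * sing [i]) b hw
    rw [Finset.mem_mul] at h1
    obtain ⟨u, hu, v, hv, rfl⟩ := h1
    have h2 := MonoidAlgebra.support_coeff_mul_subset a (sing [i]) hu
    rw [Finset.mem_mul] at h2
    obtain ⟨s, hs, x, hx, rfl⟩ := h2
    rw [support_sing, Finset.mem_singleton] at hx
    subst hx
    refine ⟨FreeMonoid.toList s, FreeMonoid.toList v, ?_⟩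
    rw [FreeMonoid.toList_mul, FreeMonoid.toList_mul, FreeMonoid.toList_ofList]
    simp
  · refine le_trans (le_of_eq (MonoidAlgebra.supported_eq_span_single ℂ _)) (Submodule.span_le.2 ?_)
    rintro m ⟨l, hl, rfl⟩
    obtain ⟨s, t, hst⟩ := hl
    apply Submodule.subset_span
    refine ⟨sing s, sing t, ?_⟩
    rw [sing_mul, sing_mul, sing_def]
    congr 1
    rw [← FreeMonoid.ofList_toList l, hst]
    simp

theorem span_leftZ :
    Submodule.span ℂ {m : MA | ∃ a : MA, m = a * sing [2]} =
      suppM ({l : List (Fin 3) | ∃ s, l = s ++ [2]}) := by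
  classical
  apply le_antisymm
  · rw [Submodule.span_le]
    rintro m ⟨a, rfl⟩
    rw [SetLike.mem_coe, mem_suppM]
    intro w hw
    have h1 := MonoidAlgebra.support_coeff_mul_subset a (sing [2]) hw
    rw [Finset.mem_mul] at h1
    obtain ⟨u, hu, v, hv, rfl⟩ := h1
    rw [support_sing, Finset.mem_singleton] at hv
    subst hv
    refine ⟨FreeMonoid.toList u, ?_⟩
    rw [FreeMonoid.toList_mul, FreeMonoid.toList_ofList]
  · refine le_trans (le_of_eq (MonoidAlgebra.supported_eq_span_single ℂ _)) (Submodule.span_le.2 ?_)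
    rintro m ⟨l, hl, rfl⟩
    obtain ⟨s, hs⟩ := hl
    apply Submodule.subset_span
    refine ⟨sing s, ?_⟩
    rw [sing_mul, sing_def, ← FreeMonoid.ofList_toList l, hs]

theorem supported_mul :
    (suppM ({l : List (Fin 3) | ∃ s t, l = s ++ 0 :: t}) :
        Submodule ℂ MA) *
      suppM ({l : List (Fin 3) | ∃ s t, l = s ++ 1 :: t}) =
      MonoidAlgebra.supported ℂ ℂ
        (SetF {l : List (Fin 3) | ∃ a b c, l = a ++ 0 :: (b ++ 1 :: c)}) := by
  classical
  apply le_antisymm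
  · rw [Submodule.mul_le]
    intro f hf g hg
    rw [mem_suppM] at hf hg
    rw [MonoidAlgebra.mem_supported]
    intro w hw
    have h1 := MonoidAlgebra.support_coeff_mul_subset f g hw
    rw [Finset.mem_mul] at h1
    obtain ⟨u, hu, v, hv, rfl⟩ := h1
    obtain ⟨s, t, hst⟩ := hf hu
    obtain ⟨s', t', hst'⟩ := hg hv
    refine ⟨s, t ++ s', t', ?_⟩
    rw [FreeMonoid.toList_mul, hst, hst']
    simp
  · refine le_trans (le_of_eq (MonoidAlgebra.supported_eq_span_single ℂ _)) (Submodule.span_le.2 ?_)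
    rintro m ⟨l, hl, rfl⟩
    obtain ⟨a, b, c, habc⟩ := hl
    have hl' : l = FreeMonoid.ofList (a ++ 0 :: (b ++ 1 :: c)) := by
      rw [← FreeMonoid.ofList_toList l, habc]
    have : (MonoidAlgebra.single l (1:ℂ) : MA)
        = sing (a ++ [0]) * sing (b ++ 1 :: c) := by
      rw [sing_mul, sing_def, hl']
      congr 1
      simp
    have m1 : sing (a ++ [0]) ∈ suppM {l : List (Fin 3) | ∃ s t, l = s ++ 0 :: t} := by
      rw [sing_def]
      refine MonoidAlgebra.mem_supported.2 ((Finsupp.mem_supported ℂ _).1 (Finsupp.single_mem_supported ℂ _ ?_))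
      rw [mem_SetF, FreeMonoid.toList_ofList]
      exact ⟨a, [], by simp⟩
    have m2 : sing (b ++ 1 :: c) ∈ suppM {l : List (Fin 3) | ∃ s t, l = s ++ 1 :: t} := by
      rw [sing_def]
      refine MonoidAlgebra.mem_supported.2 ((Finsupp.mem_supported ℂ _).1 (Finsupp.single_mem_supported ℂ _ ?_))
      rw [mem_SetF, FreeMonoid.toList_ofList]
      exact ⟨b, c, rfl⟩
    have goal : (MonoidAlgebra.single l (1:ℂ) : MA) ∈
        suppM {l : List (Fin 3) | ∃ s t, l = s ++ 0 :: t} *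
          suppM {l : List (Fin 3) | ∃ s t, l = s ++ 1 :: t} := by
      rw [this]
      exact Submodule.mul_mem_mul m1 m2
    exact goal

def φ : Uf3 ≃ₐ[ℂ] MA :=
  (FreeLieAlgebra.universalEnvelopingEquivFreeAlgebra ℂ (Fin 3)).trans
    FreeAlgebra.equivMonoidAlgebraFreeMonoid

theorem φ_ι (i : Fin 3) : φ (ι (FreeLieAlgebra.of ℂ i)) = sing [i] := by
  rw [φ, AlgEquiv.trans_apply]
  rw [show ι (FreeLieAlgebra.of ℂ i) =
    UniversalEnvelopingAlgebra.ι ℂ (FreeLieAlgebra.of ℂ i) from rfl]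
  rw [FreeLieAlgebra.universalEnvelopingEquivFreeAlgebra_apply,
    UniversalEnvelopingAlgebra.lift_ι_apply, FreeLieAlgebra.lift_of_apply]
  rw [show FreeAlgebra.equivMonoidAlgebraFreeMonoid (FreeAlgebra.ι ℂ i)
    = (FreeAlgebra.lift ℂ fun j => (MonoidAlgebra.of ℂ (FreeMonoid (Fin 3))) (FreeMonoid.of j))
      (FreeAlgebra.ι ℂ i) from rfl, FreeAlgebra.lift_ι_apply]
  rfl

theorem φ_monomial (l : List (Fin 3)) : φ (monomial l) = sing l := by
  induction l with
  | nil =>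
    rw [monomial]
    simp only [List.map_nil, List.prod_nil, map_one]
    rfl
  | cons i t ih =>
    have : monomial (i :: t) = ι (FreeLieAlgebra.of ℂ i) * monomial t := by
      rw [monomial, monomial, List.map_cons, List.prod_cons]
    rw [this, map_mul, φ_ι, ih, sing_mul, List.singleton_append]

theorem Hmap (p q r : ℕ) :
    (H p q r).map (φ.toLinearMap) = suppM (Wset p q r) := by
  rw [H, Submodule.map_span, suppM_eq_span]
  congr 1
  ext m
  constructor
  · rintro ⟨u, ⟨l, h0, h1, h2, rfl⟩, rfl⟩
    refine ⟨FreeMonoid.ofList l, ?_, ?_⟩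
    · show FreeMonoid.toList (FreeMonoid.ofList l) ∈ Wset p q r
      rw [FreeMonoid.toList_ofList]
      exact ⟨h0, h1, h2⟩
    · show (MonoidAlgebra.single (FreeMonoid.ofList l) 1 : MA) = φ.toLinearMap (monomial l)
      rw [show φ.toLinearMap (monomial l) = φ (monomial l) from rfl, φ_monomial, sing_def]
  · rintro ⟨w, hw, rfl⟩
    obtain ⟨h0, h1, h2⟩ := hw
    refine ⟨monomial (FreeMonoid.toList w), ⟨FreeMonoid.toList w, h0, h1, h2, rfl⟩, ?_⟩
    show φ (monomial (FreeMonoid.toList w)) = _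
    rw [φ_monomial, sing_def, FreeMonoid.ofList_toList]

theorem twoSided_map (i : Fin 3) :
    (twoSided (FreeLieAlgebra.of ℂ i)).map (φ.toLinearMap) =
      suppM ({l : List (Fin 3) | ∃ s t, l = s ++ i :: t}) := by
  rw [twoSided, Submodule.map_span, ← span_twoSided i]
  congr 1
  ext m
  constructor
  · rintro ⟨u, ⟨a, b, rfl⟩, rfl⟩
    refine ⟨φ a, φ b, ?_⟩
    show φ (a * ι (FreeLieAlgebra.of ℂ i) * b) = _
    rw [map_mul, map_mul, φ_ι]
  · rintro ⟨a, b, rfl⟩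
    refine ⟨φ.symm a * ι (FreeLieAlgebra.of ℂ i) * φ.symm b, ⟨φ.symm a, φ.symm b, rfl⟩, ?_⟩
    show φ _ = _
    rw [map_mul, map_mul, φ_ι, AlgEquiv.apply_symm_apply, AlgEquiv.apply_symm_apply]

theorem I5map : I5.map (φ.toLinearMap) = suppM BadSet := by
  have hz : (Submodule.span ℂ {u : Uf3 | ∃ a : Uf3, u = a * ι z}).map (φ.toLinearMap) =
      suppM ({l : List (Fin 3) | ∃ s, l = s ++ [2]}) := by
    rw [Submodule.map_span, ← span_leftZ]
    congr 1
    ext m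
    constructor
    · rintro ⟨u, ⟨a, rfl⟩, rfl⟩
      refine ⟨φ a, ?_⟩
      show φ (a * ι z) = _
      rw [map_mul, z, φ_ι]
    · rintro ⟨a, rfl⟩
      refine ⟨φ.symm a * ι z, ⟨φ.symm a, rfl⟩, ?_⟩
      show φ _ = _
      rw [map_mul, z, φ_ι, AlgEquiv.apply_symm_apply]
  have hmul : (twoSided x * twoSided y).map (φ.toLinearMap) =
      suppM {l : List (Fin 3) | ∃ a b c, l = a ++ 0 :: (b ++ 1 :: c)} := by
    have := Submodule.map_mul (twoSided x) (twoSided y) (φ.toAlgHom)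
    rw [show φ.toAlgHom.toLinearMap = φ.toLinearMap from rfl] at this
    rw [this, x, y, twoSided_map 0, twoSided_map 1, supported_mul]
    rfl
  rw [I5, Submodule.add_eq_sup, Submodule.map_sup, hz, hmul]
  rw [suppM, suppM, suppM, MonoidAlgebra.supported_eq_map, MonoidAlgebra.supported_eq_map,
    MonoidAlgebra.supported_eq_map, ← Submodule.map_sup, ← Finsupp.supported_union]
  rfl

theorem setF_final (p q r : ℕ) (hp : 1 ≤ p) (hq : 1 ≤ q) :
    SetF (Wset p q r) \ SetF BadSet =
      ↑((GF p q r).map FreeMonoid.ofList.toEmbedding) := by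
  have h1 : SetF (Wset p q r) \ SetF BadSet = SetF (Wset p q r \ BadSet) := rfl
  rw [h1, good_eq p q r hp hq]
  ext w
  constructor
  · intro hw
    rw [Finset.coe_map]
    exact ⟨FreeMonoid.toList w, hw, FreeMonoid.ofList_toList w⟩
  · intro hw
    rw [Finset.coe_map] at hw
    obtain ⟨l, hl, rfl⟩ := hw
    show FreeMonoid.toList (FreeMonoid.ofList l) ∈ _
    rwa [FreeMonoid.toList_ofList]

end Alg

end Proof5

open Proof5 in
theorem dimension_of_components (p q r : ℕ) (hp : 1 ≤ p) (hq : 1 ≤ q) :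
    Module.finrank ℂ ((H p q r).map I5.mkQ) =
      ∑ ab ∈ Finset.HasAntidiagonal.antidiagonal r,
        Nat.choose (q - 1 + ab.1) ab.1 * Nat.choose (p - 1 + ab.2) ab.2 := by
  rw [finrank_quot_transport φ.toLinearEquiv (H p q r) I5,
    show φ.toLinearEquiv.toLinearMap = φ.toLinearMap from rfl, Hmap, I5map, suppM, suppM,
    finrank_suppM_map_mkQ _ _ _ (setF_final p q r hp hq), Finset.card_map, card_GF]
end
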